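/- arXiv:math/0407394 — 4 statements merged into one kernel-verified Lean document; each statement's English description precedes it below -/
import Mathlib

section
/- Let L be a thick generalized m-gon with m ∈ {3, 4, 5}. Then for every apartment A of L and each of the two types (bipartition classes), there exists a vertex of L that is opposite to every vertex of A of that type. -/
open SimpleGraph

variable {V : Type*}

/-- A generalized `m`-gon: a connected bipartite simple graph of diameter `m`
and girth `2 * m`. -/
def IsGenPolygon (G : SimpleGraph V) (m : ℕ) : Prop :=
  G.Connected ∧
    (∃ c : V → Bool, ∀ ⦃v w : V⦄, G.Adj v w → c v ≠ c w) ∧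
    (∀ u v : V, G.dist u v ≤ m) ∧ (∃ u v : V, G.dist u v = m) ∧
    G.egirth = (2 * m : ℕ∞)

/-- A graph is thick if every vertex has at least three neighbours. -/
def Thick (G : SimpleGraph V) : Prop :=
  ∀ v : V, ∃ a b c : V, G.Adj v a ∧ G.Adj v b ∧ G.Adj v c ∧ a ≠ b ∧ a ≠ c ∧ b ≠ c

/-- An apartment of a generalized `m`-gon: a subgraph which is a cycle of
length `2 * m`. -/
def IsApartment (G : SimpleGraph V) (m : ℕ) (A : G.Subgraph) : Prop :=
  ∃ (v : V) (w : G.Walk v v), w.IsCycle ∧ w.length = 2 * m ∧ w.toSubgraph = A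

/-- A subgraph which is a path with exactly `k` edges. -/
def IsPathSubgraph (G : SimpleGraph V) (k : ℕ) (P : G.Subgraph) : Prop :=
  ∃ (u v : V) (p : G.Walk u v), p.IsPath ∧ p.length = k ∧ p.toSubgraph = P

section FriendshipInline
open scoped Classical

namespace Theorems100

noncomputable section

open Finset SimpleGraph Matrix

universe u v

variable {V : Type u} {R : Type v} [Semiring R]

section FriendshipDef

variable (G : SimpleGraph V)

/-- This property of a graph is the hypothesis of the friendship theorem:
every pair of nonadjacent vertices has exactly one common friend,
a vertex to which both are adjacent.
-/
def Friendship [Fintype V] : Prop :=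
  ∀ ⦃v w : V⦄, v ≠ w → Fintype.card (G.commonNeighbors v w) = 1

/-- A politician is a vertex that is adjacent to all other vertices.
-/
def ExistsPolitician : Prop :=
  ∃ v : V, ∀ w : V, v ≠ w → G.Adj v w

end FriendshipDef

variable [Fintype V] {G : SimpleGraph V} {d : ℕ} (hG : Friendship G)

namespace Friendship

variable (R)

include hG in
/-- One characterization of a friendship graph is that there is exactly one walk of length 2
  between distinct vertices. These walks are counted in off-diagonal entries of the square of
  the adjacency matrix, so for a friendship graph, those entries are all 1. -/
theorem adjMatrix_sq_of_ne {v w : V} (hvw : v ≠ w) :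
    (G.adjMatrix R ^ 2 : Matrix V V R) v w = 1 := by
  rw [sq, ← Nat.cast_one, ← hG hvw]
  simp only [mul_adjMatrix_apply, neighborFinset_eq_filter, adjMatrix_apply,
    sum_boole, filter_filter, and_comm, commonNeighbors,
    Fintype.card_ofFinset (s := filter (fun x ↦ x ∈ G.neighborSet v ∩ G.neighborSet w) univ),
    Set.mem_inter_iff, mem_neighborSet]
  congr 1; rw [← Fintype.card_coe]
  convert Fintype.card_congr (Equiv.subtypeEquivRight
    (p := fun x => x ∈ ({x | G.Adj v x ∧ G.Adj w x} : Finset V))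
    (q := fun x => x ∈ G.neighborSet v ∩ G.neighborSet w) (fun x => by simp [Set.mem_inter_iff]))
  exact Fintype.card_eq_nat_card.trans Fintype.card_eq_nat_card.symm

include hG in
/-- This calculation amounts to counting the number of length 3 walks between nonadjacent vertices.
  We use it to show that nonadjacent vertices have equal degrees. -/
theorem adjMatrix_pow_three_of_not_adj {v w : V} (non_adj : ¬G.Adj v w) :
    (G.adjMatrix R ^ 3 : Matrix V V R) v w = degree G v := by
  rw [pow_succ', adjMatrix_mul_apply, degree, card_eq_sum_ones, Nat.cast_sum]
  apply sum_congr rfl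
  intro x hx
  rw [adjMatrix_sq_of_ne _ hG, Nat.cast_one]
  rintro ⟨rfl⟩
  rw [mem_neighborFinset] at hx
  exact non_adj hx

variable {R}

include hG in
/-- As `v` and `w` not being adjacent implies
  `degree G v = ((G.adjMatrix R) ^ 3) v w` and `degree G w = ((G.adjMatrix R) ^ 3) v w`,
  the degrees are equal if `((G.adjMatrix R) ^ 3) v w = ((G.adjMatrix R) ^ 3) w v`

  This is true as the adjacency matrix is symmetric. -/
theorem degree_eq_of_not_adj {v w : V} (hvw : ¬G.Adj v w) : degree G v = degree G w := by
  rw [← Nat.cast_id (G.degree v), ← Nat.cast_id (G.degree w),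
    ← adjMatrix_pow_three_of_not_adj ℕ hG hvw,
    ← adjMatrix_pow_three_of_not_adj ℕ hG fun h => hvw h.symm]
  conv_lhs => rw [← transpose_adjMatrix]
  simp only [pow_succ _ 2, sq, ← transpose_mul, transpose_apply]
  simp only [mul_assoc]

include hG in
/-- Let `A` be the adjacency matrix of a graph `G`.
  If `G` is a friendship graph, then all of the off-diagonal entries of `A^2` are 1.
  If `G` is `d`-regular, then all of the diagonal entries of `A^2` are `d`.
  Putting these together determines `A^2` exactly for a `d`-regular friendship graph. -/
theorem adjMatrix_sq_of_regular (hd : G.IsRegularOfDegree d) :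
    G.adjMatrix R ^ 2 = of fun v w => if v = w then (d : R) else (1 : R) := by
  ext (v w); by_cases h : v = w
  · rw [h, sq, adjMatrix_mul_self_apply_self, hd]; simp
  · rw [adjMatrix_sq_of_ne R hG h, of_apply, if_neg h]

include hG in
theorem adjMatrix_sq_mod_p_of_regular {p : ℕ} (dmod : (d : ZMod p) = 1)
    (hd : G.IsRegularOfDegree d) : G.adjMatrix (ZMod p) ^ 2 = of fun _ _ => 1 := by
  simp [adjMatrix_sq_of_regular hG hd, dmod]

section Nonempty

variable [Nonempty V]

include hG in
/-- If `G` is a friendship graph without a politician (a vertex adjacent to all others), then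
  it is regular. We have shown that nonadjacent vertices of a friendship graph have the same degree,
  and if there isn't a politician, we can show this for adjacent vertices by finding a vertex
  neither is adjacent to, and then using transitivity. -/
theorem isRegularOf_not_existsPolitician (hG' : ¬ExistsPolitician G) :
    ∃ d : ℕ, G.IsRegularOfDegree d := by
  have v := Classical.arbitrary V
  use G.degree v
  intro x
  by_cases hvx : G.Adj v x; swap; · exact (degree_eq_of_not_adj hG hvx).symm
  dsimp only [Theorems100.ExistsPolitician] at hG'
  push_neg at hG'
  rcases hG' v with ⟨w, hvw', hvw⟩
  rcases hG' x with ⟨y, hxy', hxy⟩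
  by_cases hxw : G.Adj x w
  swap; · rw [degree_eq_of_not_adj hG hvw]; exact degree_eq_of_not_adj hG hxw
  rw [degree_eq_of_not_adj hG hxy]
  by_cases hvy : G.Adj v y
  swap; · exact (degree_eq_of_not_adj hG hvy).symm
  rw [degree_eq_of_not_adj hG hvw]
  apply degree_eq_of_not_adj hG
  intro hcontra
  rcases Finset.card_eq_one.mp (hG hvw') with ⟨⟨a, ha⟩, h⟩
  have key : ∀ {x}, x ∈ G.commonNeighbors v w → x = a := by
    intro x hx
    have h' : ⟨x, hx⟩ ∈ (univ : Finset (G.commonNeighbors v w)) := mem_univ (Subtype.mk x hx)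
    rw [h, mem_singleton] at h'
    injection h'
  apply hxy'
  rw [key ((mem_commonNeighbors G).mpr ⟨hvx, hxw.symm⟩),
    key ((mem_commonNeighbors G).mpr ⟨hvy, hcontra.symm⟩)]

include hG in
/-- Let `A` be the adjacency matrix of a `d`-regular friendship graph, and let `v` be a vector
  all of whose components are `1`. Then `v` is an eigenvector of `A ^ 2`, and we can compute
  the eigenvalue to be `d * d`, or as `d + (Fintype.card V - 1)`, so those quantities must be equal.

  This essentially means that the graph has `d ^ 2 - d + 1` vertices. -/
theorem card_of_regular (hd : G.IsRegularOfDegree d) : d + (Fintype.card V - 1) = d * d := by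
  have v := Classical.arbitrary V
  trans ((G.adjMatrix ℕ ^ 2) *ᵥ (fun _ => 1)) v
  · rw [adjMatrix_sq_of_regular hG hd, mulVec, dotProduct, ← insert_erase (mem_univ v)]
    simp only [sum_insert, mul_one, if_true, Nat.cast_id, eq_self_iff_true, mem_erase, not_true,
      Ne, not_false_iff, add_right_inj, false_and, of_apply]
    rw [Finset.sum_const_nat, card_erase_of_mem (mem_univ v), mul_one]; · rfl
    intro x hx; simp [(ne_of_mem_erase hx).symm]
  · rw [sq, ← mulVec_mulVec]
    simp only [adjMatrix_mulVec_const_apply_of_regular hd, neighborFinset,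
      card_neighborSet_eq_degree, hd v, Function.const_def, adjMatrix_mulVec_apply _ _ (mulVec _ _),
      mul_one, sum_const, Set.toFinset_card, smul_eq_mul, Nat.cast_id]
    rw [show (Function.const V d) = fun _ => d from rfl, Finset.sum_const, Set.toFinset_card,
      card_neighborSet_eq_degree, hd v, smul_eq_mul]

include hG in
/-- The size of a `d`-regular friendship graph is `1 mod (d-1)`, and thus `1 mod p` for a
  factor `p ∣ d-1`. -/
theorem card_mod_p_of_regular {p : ℕ} (dmod : (d : ZMod p) = 1) (hd : G.IsRegularOfDegree d) :
    (Fintype.card V : ZMod p) = 1 := by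
  have hpos : 0 < Fintype.card V := Fintype.card_pos_iff.mpr inferInstance
  rw [← Nat.succ_pred_eq_of_pos hpos, Nat.succ_eq_add_one, Nat.pred_eq_sub_one]
  simp only [add_eq_right, Nat.cast_add, Nat.cast_one]
  have h := congr_arg (fun n : ℕ => (n : ZMod p)) (card_of_regular hG hd)
  revert h; simp [dmod]

end Nonempty

theorem adjMatrix_sq_mul_const_one_of_regular (hd : G.IsRegularOfDegree d) :
    G.adjMatrix R * of (fun _ _ => 1) = of (fun _ _ => (d : R)) := by
  ext x
  simp only [← hd x, degree, adjMatrix_mul_apply, sum_const, Nat.smul_one_eq_cast,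
    of_apply]

theorem adjMatrix_mul_const_one_mod_p_of_regular {p : ℕ} (dmod : (d : ZMod p) = 1)
    (hd : G.IsRegularOfDegree d) :
    G.adjMatrix (ZMod p) * of (fun _ _ => 1) = of (fun _ _ => 1) := by
  rw [adjMatrix_sq_mul_const_one_of_regular hd, dmod]

include hG in
/-- Modulo a factor of `d-1`, the square and all higher powers of the adjacency matrix
  of a `d`-regular friendship graph reduce to the matrix whose entries are all 1. -/
theorem adjMatrix_pow_mod_p_of_regular {p : ℕ} (dmod : (d : ZMod p) = 1)
    (hd : G.IsRegularOfDegree d) {k : ℕ} (hk : 2 ≤ k) :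
    G.adjMatrix (ZMod p) ^ k = of (fun _ _ => 1) := by
  match k with
  | 0 | 1 => exfalso; linarith
  | k + 2 =>
    induction' k with k hind
    · exact adjMatrix_sq_mod_p_of_regular hG dmod hd
    rw [pow_succ', hind (Nat.le_add_left 2 k)]
    exact adjMatrix_mul_const_one_mod_p_of_regular dmod hd

variable [Nonempty V]

include hG in
/-- This is the main proof. Assuming that `3 ≤ d`, we take `p` to be a prime factor of `d-1`.
  Then the `p`th power of the adjacency matrix of a `d`-regular friendship graph must have trace 1
  mod `p`, but we can also show that the trace must be the `p`th power of the trace of the original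
  adjacency matrix, which is 0, a contradiction.
-/
theorem false_of_three_le_degree (hd : G.IsRegularOfDegree d) (h : 3 ≤ d) : False := by
  -- get a prime factor of d - 1
  let p : ℕ := (d - 1).minFac
  have p_dvd_d_pred := (ZMod.natCast_eq_zero_iff _ _).mpr (d - 1).minFac_dvd
  have dpos : 1 ≤ d := by omega
  have d_cast : ↑(d - 1) = (d : ℤ) - 1 := by norm_cast
  haveI : Fact p.Prime := ⟨Nat.minFac_prime (by omega)⟩
  have hp2 : 2 ≤ p := (Fact.out (p := p.Prime)).two_le
  have dmod : (d : ZMod p) = 1 := by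
    rw [← Nat.succ_pred_eq_of_pos dpos, Nat.succ_eq_add_one, Nat.pred_eq_sub_one]
    simp only [add_eq_right, Nat.cast_add, Nat.cast_one]
    exact p_dvd_d_pred
  have Vmod := card_mod_p_of_regular hG dmod hd
  -- now we reduce to a trace calculation
  have := ZMod.trace_pow_card (G.adjMatrix (ZMod p))
  contrapose! this; clear this
  -- the trace is 0 mod p when computed one way
  rw [trace_adjMatrix, zero_pow this.out.ne_zero]
  -- but the trace is 1 mod p when computed the other way
  rw [adjMatrix_pow_mod_p_of_regular hG dmod hd hp2]
  dsimp only [Fintype.card] at Vmod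
  simp only [Matrix.trace, Matrix.diag, mul_one, nsmul_eq_mul, LinearMap.coe_mk, sum_const,
    of_apply, Ne]
  rw [Vmod, ← Nat.cast_one (R := ZMod (Nat.minFac (d - 1))), ZMod.natCast_eq_zero_iff,
    Nat.dvd_one, Nat.minFac_eq_one_iff]
  omega

include hG in
/-- If `d ≤ 1`, a `d`-regular friendship graph has at most one vertex, which is
  trivially a politician. -/
theorem existsPolitician_of_degree_le_one (hd : G.IsRegularOfDegree d) (hd1 : d ≤ 1) :
    ExistsPolitician G := by
  have sq : d * d = d := by interval_cases d <;> norm_num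
  have h := card_of_regular hG hd
  rw [sq] at h
  have : Fintype.card V ≤ 1 := by
    cases hn : Fintype.card V with
    | zero => exact Nat.zero_le _
    | succ n => omega
  use Classical.arbitrary V
  intro w h; exfalso
  apply h
  apply Fintype.card_le_one_iff.mp this

include hG in
/-- If `d = 2`, a `d`-regular friendship graph has 3 vertices, so it must be complete graph,
  and all the vertices are politicians. -/
theorem neighborFinset_eq_of_degree_eq_two (hd : G.IsRegularOfDegree 2) (v : V) :
    G.neighborFinset v = Finset.univ.erase v := by
  apply Finset.eq_of_subset_of_card_le
  · rw [Finset.subset_iff]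
    intro x
    rw [mem_neighborFinset, Finset.mem_erase]
    exact fun h => ⟨(G.ne_of_adj h).symm, Finset.mem_univ _⟩
  convert_to 2 ≤ _
  · convert_to _ = Fintype.card V - 1
    · have hfr := card_of_regular hG hd
      omega
    · exact Finset.card_erase_of_mem (Finset.mem_univ _)
  · dsimp only [IsRegularOfDegree, degree] at hd
    rw [hd]

include hG in
theorem existsPolitician_of_degree_eq_two (hd : G.IsRegularOfDegree 2) : ExistsPolitician G := by
  have v := Classical.arbitrary V
  use v
  intro w hvw
  rw [← mem_neighborFinset, neighborFinset_eq_of_degree_eq_two hG hd v, Finset.mem_erase]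
  exact ⟨hvw.symm, Finset.mem_univ _⟩

include hG in
theorem existsPolitician_of_degree_le_two (hd : G.IsRegularOfDegree d) (h : d ≤ 2) :
    ExistsPolitician G := by
  interval_cases d
  iterate 2 apply existsPolitician_of_degree_le_one hG hd; norm_num
  exact existsPolitician_of_degree_eq_two hG hd

end Friendship

include hG in
/-- **Friendship theorem**: We wish to show that a friendship graph has a politician (a vertex
  adjacent to all others). We proceed by contradiction, and assume the graph has no politician.
  We have already proven that a friendship graph with no politician is `d`-regular for some `d`,
  and now we do casework on `d`.
  If the degree is at most 2, we observe by casework that it has a politician anyway.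
  If the degree is at least 3, the graph cannot exist. -/
theorem friendship_theorem [Nonempty V] : ExistsPolitician G := by
  by_contra npG
  rcases hG.isRegularOf_not_existsPolitician npG with ⟨d, dreg⟩
  cases' lt_or_ge d 3 with dle2 dge3
  · exact npG (hG.existsPolitician_of_degree_le_two dreg (Nat.lt_succ_iff.mp dle2))
  · exact hG.false_of_three_le_degree dreg dge3

end

end Theorems100

end FriendshipInline

namespace GenPolyAux

variable {G : SimpleGraph V} {m : ℕ} {c : V → Bool}

lemma bool_eq_of_ne_ne {x y z : Bool} (h1 : x ≠ z) (h2 : y ≠ z) : x = y := by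
  cases x <;> cases y <;> cases z <;> simp_all

/-- In a graph of girth `2*m`, two paths between the same pair of vertices whose
lengths sum to less than `2*m` coincide. -/
lemma unique_path (hg : G.egirth = (2 * m : ℕ∞)) :
    ∀ {u v : V} (p q : G.Walk u v), p.IsPath → q.IsPath →
      p.length + q.length < 2 * m → p = q := by
  suffices H : ∀ (n : ℕ) {u v : V} (p q : G.Walk u v), p.IsPath → q.IsPath →
      p.length + q.length ≤ n → p.length + q.length < 2 * m → p = q by
    intro u v p q hp hq h; exact H (p.length + q.length) p q hp hq le_rfl h
  classical
  intro n
  induction n with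
  | zero =>
    intro u v p q hp hq hle _
    have hp0 : p.length = 0 := by omega
    have hq0 : q.length = 0 := by omega
    have huv : u = v := Walk.eq_of_length_eq_zero hp0
    subst huv
    rw [(Walk.isPath_iff_eq_nil (p := p)).mp hp, (Walk.isPath_iff_eq_nil (p := q)).mp hq]
  | succ n ih =>
    intro u v p q hp hq hle hlt
    cases p with
    | nil => exact ((Walk.isPath_iff_eq_nil (p := q)).mp hq).symm
    | @cons _ a _ h p' =>
      cases q with
      | nil =>
        have := (Walk.isPath_iff_eq_nil).mp hp
        simp at this
      | @cons _ b _ h' q' =>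
        by_cases hab : a = b
        · subst hab
          have hp' := hp.of_cons
          have hq' := hq.of_cons
          have hlen : p'.length + q'.length ≤ n := by
            simp only [Walk.length_cons] at hle; omega
          have hlt' : p'.length + q'.length < 2 * m := by
            simp only [Walk.length_cons] at hlt; omega
          rw [ih p' q' hp' hq' hlen hlt']
        · exfalso
          have hup' : u ∉ p'.support := ((Walk.cons_isPath_iff h p').mp hp).2
          have huq' : u ∉ q'.support := ((Walk.cons_isPath_iff h' q').mp hq).2
          set W : G.Walk a b := p'.append q'.reverse with hW
          have hPpath : W.bypass.IsPath := Walk.bypass_isPath W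
          have hPsup : u ∉ W.bypass.support := by
            intro hx
            have hx' := Walk.support_bypass_subset W hx
            rw [hW, Walk.support_append] at hx'
            rcases List.mem_append.mp hx' with h1 | h1
            · exact hup' h1
            · have := List.mem_of_mem_tail h1
              rw [Walk.support_reverse] at this
              exact huq' (List.mem_reverse.mp this)
          set D : G.Walk a u := W.bypass.append (Walk.cons h'.symm Walk.nil) with hD
          have hDpath : D.IsPath := by
            rw [Walk.isPath_def, hD, Walk.support_append]
            simp only [Walk.support_cons, Walk.support_nil, List.tail_cons]
            rw [List.nodup_append]
            refine ⟨hPpath.support_nodup, List.nodup_singleton u, ?_⟩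
            intro x hx y hy
            simp only [List.mem_singleton] at hy
            subst hy
            exact fun e => hPsup (e ▸ hx)
          have hC : (Walk.cons h D).IsCycle := by
            rw [Walk.cons_isCycle_iff]
            refine ⟨hDpath, ?_⟩
            rw [hD, Walk.edges_append]
            simp only [Walk.edges_cons, Walk.edges_nil, List.mem_append,
              List.mem_singleton, List.mem_cons, List.not_mem_nil, or_false]
            rintro (hmem | hmem)
            · exact hPsup (Walk.fst_mem_support_of_mem_edges _ hmem)
            · rw [Sym2.eq_iff] at hmem
              rcases hmem with ⟨h1, h2⟩ | ⟨h1, h2⟩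
              · exact h'.ne h1
              · exact hab h2
          have h2m : 2 * m ≤ (Walk.cons h D).length := by
            have hle' := le_egirth.mp (le_refl G.egirth) u (Walk.cons h D) hC
            rw [hg] at hle'
            exact_mod_cast hle'
          have hlb : W.bypass.length ≤ p'.length + q'.length := by
            have := Walk.length_bypass_le W
            rw [hW, Walk.length_append, Walk.length_reverse] at this
            exact this
          have : (Walk.cons h D).length = W.bypass.length + 2 := by
            simp [hD, Walk.length_append]
          simp only [Walk.length_cons] at hlt
          omega

lemma walk_colors (hc : ∀ ⦃x y : V⦄, G.Adj x y → c x ≠ c y)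
    {u v : V} (w : G.Walk u v) : c u = c v ↔ Even w.length := by
  induction w with
  | nil => simp
  | @cons u x v h p ih =>
    have hne := hc h
    rw [Walk.length_cons, Nat.even_add_one, ← ih]
    cases hcu : c u <;> cases hcx : c x <;> cases hcv : c v <;> simp_all

lemma dist_even_iff (hconn : G.Connected) (hc : ∀ ⦃x y : V⦄, G.Adj x y → c x ≠ c y)
    (u v : V) : c u = c v ↔ Even (G.dist u v) := by
  by_cases h : G.dist u v = 0
  · have huv : u = v := (hconn.dist_eq_zero_iff).mp h
    subst huv; simp [h]
  · obtain ⟨p, hp⟩ := exists_walk_of_dist_ne_zero h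
    rw [← hp]; exact walk_colors hc p

lemma isPath2 {u a v : V} (h1 : G.Adj u a) (h2 : G.Adj a v) (huv : u ≠ v) :
    (Walk.cons h1 (Walk.cons h2 Walk.nil)).IsPath := by
  rw [Walk.isPath_def]
  simp [h1.ne, h2.ne, huv]

lemma isPath3 {u a b v : V} (h1 : G.Adj u a) (h2 : G.Adj a b) (h3 : G.Adj b v)
    (hub : u ≠ b) (huv : u ≠ v) (hav : a ≠ v) :
    (Walk.cons h1 (Walk.cons h2 (Walk.cons h3 Walk.nil))).IsPath := by
  rw [Walk.isPath_def]
  simp [h1.ne, h2.ne, h3.ne, hub, huv, hav]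

lemma isPath4 {u a b d v : V} (h1 : G.Adj u a) (h2 : G.Adj a b) (h3 : G.Adj b d)
    (h4 : G.Adj d v) (hub : u ≠ b) (hud : u ≠ d) (huv : u ≠ v) (had : a ≠ d)
    (hav : a ≠ v) (hbv : b ≠ v) :
    (Walk.cons h1 (Walk.cons h2 (Walk.cons h3 (Walk.cons h4 Walk.nil)))).IsPath := by
  rw [Walk.isPath_def]
  simp [h1.ne, h2.ne, h3.ne, h4.ne, hub, hud, huv, had, hav, hbv]

lemma no_two_paths (hg : G.egirth = (2 * m : ℕ∞)) {u v : V} {p q : G.Walk u v}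
    (hp : p.IsPath) (hq : q.IsPath) (hsum : p.length + q.length < 2 * m)
    (hne : p.length ≠ q.length) : False :=
  hne (by rw [unique_path hg p q hp hq hsum])

/-- Two vertices have at most one common neighbour (girth at least 6). -/
lemma CN (hg : G.egirth = (2 * m : ℕ∞)) (hm : 3 ≤ m) {u v x y : V}
    (hux : G.Adj u x) (hxv : G.Adj x v) (huy : G.Adj u y) (hyv : G.Adj y v)
    (huv : u ≠ v) : x = y := by
  have := unique_path hg (Walk.cons hux (Walk.cons hxv Walk.nil))
    (Walk.cons huy (Walk.cons hyv Walk.nil))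
    (isPath2 hux hxv huv) (isPath2 huy hyv huv) (by simp; omega)
  have := congrArg (fun w => w.getVert 1) this
  simpa using this

/-- No edge plus a path of length 3 between its endpoints. -/
lemma no13 (hg : G.egirth = (2 * m : ℕ∞)) (hm : 3 ≤ m) {u a b v : V}
    (huv : G.Adj u v) (h1 : G.Adj u a) (h2 : G.Adj a b) (h3 : G.Adj b v)
    (hub : u ≠ b) (hav : a ≠ v) : False := by
  refine no_two_paths hg (p := Walk.cons huv Walk.nil)
    (q := Walk.cons h1 (Walk.cons h2 (Walk.cons h3 Walk.nil)))
    (by rw [Walk.isPath_def]; simp [huv.ne]) (isPath3 h1 h2 h3 hub huv.ne hav)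
    (by simp; omega) (by simp)

/-- No path of length 2 plus a path of length 4 between the same endpoints. -/
lemma no24 (hg : G.egirth = (2 * m : ℕ∞)) (hm : 4 ≤ m) {u K v a b d : V}
    (hK1 : G.Adj u K) (hK2 : G.Adj K v)
    (h1 : G.Adj u a) (h2 : G.Adj a b) (h3 : G.Adj b d) (h4 : G.Adj d v)
    (hub : u ≠ b) (hud : u ≠ d) (huv : u ≠ v) (had : a ≠ d) (hav : a ≠ v)
    (hbv : b ≠ v) : False := by
  refine no_two_paths hg (p := Walk.cons hK1 (Walk.cons hK2 Walk.nil))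
    (q := Walk.cons h1 (Walk.cons h2 (Walk.cons h3 (Walk.cons h4 Walk.nil))))
    (isPath2 hK1 hK2 huv) (isPath4 h1 h2 h3 h4 hub hud huv had hav hbv)
    (by simp; omega) (by simp)

lemma pick (ht : Thick G) (u x y : V) : ∃ z, G.Adj u z ∧ z ≠ x ∧ z ≠ y := by
  obtain ⟨a, b, d, ha, hb, hd, hab, had, hbd⟩ := ht u
  by_cases h1 : a ≠ x ∧ a ≠ y
  · exact ⟨a, ha, h1.1, h1.2⟩
  by_cases h2 : b ≠ x ∧ b ≠ y
  · exact ⟨b, hb, h2.1, h2.2⟩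
  by_cases h3 : d ≠ x ∧ d ≠ y
  · exact ⟨d, hd, h3.1, h3.2⟩
  exfalso
  rw [not_and_or, not_not, not_not] at h1 h2 h3
  rcases h1 with rfl | rfl <;> rcases h2 with rfl | rfl <;> rcases h3 with rfl | rfl <;>
    simp_all

lemma mid_of_dist2 {u v : V} (h : G.dist u v = 2) :
    ∃ x, G.Adj u x ∧ G.Adj x v := by
  have hne : G.dist u v ≠ 0 := by rw [h]; norm_num
  obtain ⟨p, hp⟩ := exists_walk_of_dist_ne_zero hne
  rw [h] at hp
  cases p with
  | nil => simp at hp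
  | @cons _ x _ h1 p =>
    cases p with
    | nil => simp at hp
    | @cons _ y _ h2 p =>
      have h0 : p.length = 0 := by
        simp only [Walk.length_cons] at hp; omega
      have hyv := Walk.eq_of_length_eq_zero h0
      exact ⟨x, h1, hyv ▸ h2⟩

lemma chain_of_dist3 {u v : V} (h : G.dist u v = 3) :
    ∃ x y, G.Adj u x ∧ G.Adj x y ∧ G.Adj y v := by
  have hne : G.dist u v ≠ 0 := by rw [h]; norm_num
  obtain ⟨p, hp⟩ := exists_walk_of_dist_ne_zero hne
  rw [h] at hp
  cases p with
  | nil => simp at hp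
  | @cons _ x _ h1 p =>
    cases p with
    | nil => simp at hp
    | @cons _ y _ h2 p =>
      cases p with
      | nil => simp at hp
      | @cons _ z _ h3 p =>
        have h0 : p.length = 0 := by
          simp only [Walk.length_cons] at hp; omega
        have hzv := Walk.eq_of_length_eq_zero h0
        exact ⟨x, y, h1, h2, hzv ▸ h3⟩

lemma ne_of_col {x y : V} (h : c x ≠ c y) : x ≠ y := fun e => h (by rw [e])

lemma isPath5 (hc : ∀ ⦃x y : V⦄, G.Adj x y → c x ≠ c y) {x0 x1 x2 x3 x4 x5 : V}
    (h1 : G.Adj x0 x1) (h2 : G.Adj x1 x2) (h3 : G.Adj x2 x3) (h4 : G.Adj x3 x4)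
    (h5 : G.Adj x4 x5)
    (n02 : x0 ≠ x2) (n04 : x0 ≠ x4) (n13 : x1 ≠ x3) (n15 : x1 ≠ x5)
    (n24 : x2 ≠ x4) (n35 : x3 ≠ x5) :
    (Walk.cons h1 (Walk.cons h2 (Walk.cons h3 (Walk.cons h4
      (Walk.cons h5 Walk.nil))))).IsPath := by
  have c20 : c x2 = c x0 := bool_eq_of_ne_ne (Ne.symm (hc h2)) (hc h1)
  have c31 : c x3 = c x1 := bool_eq_of_ne_ne (Ne.symm (hc h3)) (hc h2)
  have c42 : c x4 = c x2 := bool_eq_of_ne_ne (Ne.symm (hc h4)) (hc h3)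
  have c53 : c x5 = c x3 := bool_eq_of_ne_ne (Ne.symm (hc h5)) (hc h4)
  have n03 : x0 ≠ x3 := fun e => hc h1 (by rw [e, c31])
  have n05 : x0 ≠ x5 := fun e => hc h1 (by rw [e, c53, c31])
  have n14 : x1 ≠ x4 := fun e => hc h2 (by rw [e, c42, c20])
  have n25 : x2 ≠ x5 := fun e => hc h3 (by rw [e, c53])
  rw [Walk.isPath_def]
  simp [h1.ne, h2.ne, h3.ne, h4.ne, h5.ne, n02, n03, n04, n05, n13, n14, n15, n24, n25, n35]

lemma isPath6 (hc : ∀ ⦃x y : V⦄, G.Adj x y → c x ≠ c y) {x0 x1 x2 x3 x4 x5 x6 : V}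
    (h1 : G.Adj x0 x1) (h2 : G.Adj x1 x2) (h3 : G.Adj x2 x3) (h4 : G.Adj x3 x4)
    (h5 : G.Adj x4 x5) (h6 : G.Adj x5 x6)
    (n02 : x0 ≠ x2) (n04 : x0 ≠ x4) (n06 : x0 ≠ x6) (n13 : x1 ≠ x3) (n15 : x1 ≠ x5)
    (n24 : x2 ≠ x4) (n26 : x2 ≠ x6) (n35 : x3 ≠ x5) (n46 : x4 ≠ x6) :
    (Walk.cons h1 (Walk.cons h2 (Walk.cons h3 (Walk.cons h4
      (Walk.cons h5 (Walk.cons h6 Walk.nil)))))).IsPath := by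
  have c20 : c x2 = c x0 := bool_eq_of_ne_ne (Ne.symm (hc h2)) (hc h1)
  have c31 : c x3 = c x1 := bool_eq_of_ne_ne (Ne.symm (hc h3)) (hc h2)
  have c42 : c x4 = c x2 := bool_eq_of_ne_ne (Ne.symm (hc h4)) (hc h3)
  have c53 : c x5 = c x3 := bool_eq_of_ne_ne (Ne.symm (hc h5)) (hc h4)
  have c64 : c x6 = c x4 := bool_eq_of_ne_ne (Ne.symm (hc h6)) (hc h5)
  have n03 : x0 ≠ x3 := fun e => hc h1 (by rw [e, c31])
  have n05 : x0 ≠ x5 := fun e => hc h1 (by rw [e, c53, c31])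
  have n14 : x1 ≠ x4 := fun e => hc h2 (by rw [e, c42, c20])
  have n16 : x1 ≠ x6 := fun e => hc h2 (by rw [e, c64, c42, c20])
  have n25 : x2 ≠ x5 := fun e => hc h3 (by rw [e, c53])
  have n36 : x3 ≠ x6 := fun e => hc h4 (by rw [e, c64])
  rw [Walk.isPath_def]
  simp [h1.ne, h2.ne, h3.ne, h4.ne, h5.ne, h6.ne, n02, n03, n04, n05, n06, n13, n14,
    n15, n16, n24, n25, n26, n35, n36, n46]

lemma no15 (hg : G.egirth = (2 * m : ℕ∞)) (hm : 5 ≤ m)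
    (hc : ∀ ⦃x y : V⦄, G.Adj x y → c x ≠ c y) {u a b d e v : V}
    (huv : G.Adj u v)
    (h1 : G.Adj u a) (h2 : G.Adj a b) (h3 : G.Adj b d) (h4 : G.Adj d e) (h5 : G.Adj e v)
    (n02 : u ≠ b) (n04 : u ≠ e) (n13 : a ≠ d) (n15 : a ≠ v) (n24 : b ≠ e)
    (n35 : d ≠ v) : False := by
  refine no_two_paths hg (p := Walk.cons huv Walk.nil)
    (q := Walk.cons h1 (Walk.cons h2 (Walk.cons h3 (Walk.cons h4 (Walk.cons h5 Walk.nil)))))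
    (by rw [Walk.isPath_def]; simp [huv.ne])
    (isPath5 hc h1 h2 h3 h4 h5 n02 n04 n13 n15 n24 n35) (by simp; omega) (by simp)

lemma no26 (hg : G.egirth = (2 * m : ℕ∞)) (hm : 5 ≤ m)
    (hc : ∀ ⦃x y : V⦄, G.Adj x y → c x ≠ c y) {u K v a b d e f : V}
    (hK1 : G.Adj u K) (hK2 : G.Adj K v)
    (h1 : G.Adj u a) (h2 : G.Adj a b) (h3 : G.Adj b d) (h4 : G.Adj d e) (h5 : G.Adj e f)
    (h6 : G.Adj f v)
    (n02 : u ≠ b) (n04 : u ≠ e) (n06 : u ≠ v) (n13 : a ≠ d) (n15 : a ≠ f)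
    (n24 : b ≠ e) (n26 : b ≠ v) (n35 : d ≠ f) (n46 : e ≠ v) : False := by
  refine no_two_paths hg (p := Walk.cons hK1 (Walk.cons hK2 Walk.nil))
    (q := Walk.cons h1 (Walk.cons h2 (Walk.cons h3 (Walk.cons h4 (Walk.cons h5
      (Walk.cons h6 Walk.nil))))))
    (isPath2 hK1 hK2 n06)
    (isPath6 hc h1 h2 h3 h4 h5 h6 n02 n04 n06 n13 n15 n24 n26 n35 n46)
    (by simp; omega) (by simp)

lemma no35 (hg : G.egirth = (2 * m : ℕ∞)) (hm : 5 ≤ m)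
    (hc : ∀ ⦃x y : V⦄, G.Adj x y → c x ≠ c y) {u x y v a b d e : V}
    (hx : G.Adj u x) (hy : G.Adj x y) (hv : G.Adj y v)
    (h1 : G.Adj u a) (h2 : G.Adj a b) (h3 : G.Adj b d) (h4 : G.Adj d e) (h5 : G.Adj e v)
    (nx1 : u ≠ y) (nx2 : x ≠ v) (nuv : u ≠ v)
    (n02 : u ≠ b) (n04 : u ≠ e) (n13 : a ≠ d) (n15 : a ≠ v) (n24 : b ≠ e)
    (n35 : d ≠ v) : False := by
  have := unique_path hg
    (Walk.cons hx (Walk.cons hy (Walk.cons hv Walk.nil)))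
    (Walk.cons h1 (Walk.cons h2 (Walk.cons h3 (Walk.cons h4 (Walk.cons h5 Walk.nil)))))
    (isPath3 hx hy hv nx1 nuv nx2)
    (isPath5 hc h1 h2 h3 h4 h5 n02 n04 n13 n15 n24 n35) (by simp; omega)
  have := congrArg Walk.length this
  simp at this

lemma chain_of_dist4 {u v : V} (h : G.dist u v = 4) :
    ∃ x y z, G.Adj u x ∧ G.Adj x y ∧ G.Adj y z ∧ G.Adj z v := by
  have hne : G.dist u v ≠ 0 := by rw [h]; norm_num
  obtain ⟨p, hp⟩ := exists_walk_of_dist_ne_zero hne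
  rw [h] at hp
  cases p with
  | nil => simp at hp
  | @cons _ x _ h1 p =>
    cases p with
    | nil => simp at hp
    | @cons _ y _ h2 p =>
      cases p with
      | nil => simp at hp
      | @cons _ z _ h3 p =>
        cases p with
        | nil => simp at hp
        | @cons _ w _ h4 p =>
          have h0 : p.length = 0 := by
            simp only [Walk.length_cons] at hp; omega
          have hwv := Walk.eq_of_length_eq_zero h0
          exact ⟨x, y, z, h1, h2, h3, hwv ▸ h4⟩

/-- Uniqueness of paths of length 4 (girth at least 10): componentwise equality. -/
lemma eq4 (hg : G.egirth = (2 * m : ℕ∞)) (hm : 5 ≤ m) {u a b d v a' b' d' : V}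
    (h1 : G.Adj u a) (h2 : G.Adj a b) (h3 : G.Adj b d) (h4 : G.Adj d v)
    (h1' : G.Adj u a') (h2' : G.Adj a' b') (h3' : G.Adj b' d') (h4' : G.Adj d' v)
    (hp : (Walk.cons h1 (Walk.cons h2 (Walk.cons h3 (Walk.cons h4 Walk.nil)))).IsPath)
    (hp' : (Walk.cons h1' (Walk.cons h2' (Walk.cons h3' (Walk.cons h4' Walk.nil)))).IsPath) :
    a = a' ∧ b = b' ∧ d = d' := by
  have heq := unique_path hg _ _ hp hp' (by simp; omega)
  refine ⟨?_, ?_, ?_⟩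
  · have := congrArg (fun w => w.getVert 1) heq; simpa using this
  · have := congrArg (fun w => w.getVert 2) heq; simpa using this
  · have := congrArg (fun w => w.getVert 3) heq; simpa using this

/-- A vertex with at most three neighbours. -/
def Bnd (G : SimpleGraph V) (v : V) : Prop :=
  ∃ w1 w2 w3 : V, ∀ y, G.Adj v y → y = w1 ∨ y = w2 ∨ y = w3

lemma four_in_three {α : Sort*} {w1 w2 w3 s1 s2 s3 s4 : α}
    (h1 : s1 = w1 ∨ s1 = w2 ∨ s1 = w3) (h2 : s2 = w1 ∨ s2 = w2 ∨ s2 = w3)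
    (h3 : s3 = w1 ∨ s3 = w2 ∨ s3 = w3) (h4 : s4 = w1 ∨ s4 = w2 ∨ s4 = w3)
    (n12 : s1 ≠ s2) (n13 : s1 ≠ s3) (n14 : s1 ≠ s4) (n23 : s2 ≠ s3)
    (n24 : s2 ≠ s4) (n34 : s3 ≠ s4) : False := by
  rcases h1 with rfl | rfl | rfl <;> rcases h2 with rfl | rfl | rfl <;>
    rcases h3 with rfl | rfl | rfl <;> rcases h4 with rfl | rfl | rfl <;> simp_all

lemma bnd_of_thick (ht : Thick G) {v : V}
    (h4 : ∀ y1 y2 y3 y4 : V, G.Adj v y1 → G.Adj v y2 → G.Adj v y3 → G.Adj v y4 →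
      y1 ≠ y2 → y1 ≠ y3 → y1 ≠ y4 → y2 ≠ y3 → y2 ≠ y4 → y3 ≠ y4 → False) :
    Bnd G v := by
  obtain ⟨a, b, d, ha, hb, hd, hab, had, hbd⟩ := ht v
  refine ⟨a, b, d, fun y hy => ?_⟩
  by_contra hne
  push_neg at hne
  exact h4 a b d y ha hb hd hy hab had (fun e => hne.1 e.symm) hbd
    (fun e => hne.2.1 e.symm) (fun e => hne.2.2 e.symm)

/-- If `u` has at most three neighbours and `L` is opposite `u` (distance 5),
then `L` has at most three neighbours. -/
lemma bnd_of_opp (hconn : G.Connected) (ht : Thick G)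
    (hc : ∀ ⦃x y : V⦄, G.Adj x y → c x ≠ c y)
    (hg : G.egirth = (2 * m : ℕ∞)) (hm : 5 ≤ m)
    (hdiam : ∀ a b : V, G.dist a b ≤ 5)
    {u L : V} (hu : Bnd G u) (hd : G.dist u L = 5) : Bnd G L := by
  obtain ⟨w1, w2, w3, hw⟩ := hu
  have hcol : c u ≠ c L := by
    intro he
    have hev := (dist_even_iff hconn hc u L).mp he
    rw [hd] at hev
    exact (by decide : ¬ Even 5) hev
  have key : ∀ t, G.Adj L t → G.dist u t = 4 := by
    intro t ht'
    have hct : c t = c u := bool_eq_of_ne_ne (Ne.symm (hc ht')) hcol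
    have hEv : Even (G.dist u t) := (dist_even_iff hconn hc u t).mp hct.symm
    have hne0 : G.dist u t ≠ 0 := by
      intro h0
      have h0' := hconn.dist_eq_zero_iff.mp h0
      subst h0'
      have h1 := dist_eq_one_iff_adj.mpr ht'.symm
      rw [hd] at h1
      omega
    have hne2 : G.dist u t ≠ 2 := by
      intro h2
      obtain ⟨K, h1, h2'⟩ := mid_of_dist2 h2
      have hle : G.dist u L ≤ 3 := by
        simpa using SimpleGraph.dist_le
          (Walk.cons h1 (Walk.cons h2' (Walk.cons ht'.symm Walk.nil)))
      omega
    have := hdiam u t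
    rcases hEv with ⟨k, hk⟩
    omega
  have uniq : ∀ t t' S w J w' J' : V, G.Adj L t → G.Adj L t' →
      G.Adj u S → G.Adj S w → G.Adj w J → G.Adj J t →
      G.Adj S w' → G.Adj w' J' → G.Adj J' t' → t ≠ t' → False := by
    intro t t' S w J w' J' ht1 ht2 hS hSw hwJ hJt hSw' hw'J' hJ't' htt'
    have ct : c t = c u := bool_eq_of_ne_ne (Ne.symm (hc ht1)) hcol
    have ct' : c t' = c u := bool_eq_of_ne_ne (Ne.symm (hc ht2)) hcol
    have dw : G.dist u w ≤ 2 := by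
      simpa using SimpleGraph.dist_le (Walk.cons hS (Walk.cons hSw Walk.nil))
    have dw' : G.dist u w' ≤ 2 := by
      simpa using SimpleGraph.dist_le (Walk.cons hS (Walk.cons hSw' Walk.nil))
    have hwt : w ≠ t := fun e => by have := key t ht1; rw [← e] at this; omega
    have hwt' : w ≠ t' := fun e => by have := key t' ht2; rw [← e] at this; omega
    have hw't : w' ≠ t := fun e => by have := key t ht1; rw [← e] at this; omega
    have hw't' : w' ≠ t' := fun e => by have := key t' ht2; rw [← e] at this; omega
    have hJL : J ≠ L := by
      intro e
      have hle : G.dist u L ≤ 3 := by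
        exact SimpleGraph.dist_le
          (Walk.cons hS (Walk.cons hSw (Walk.cons (e ▸ hwJ) Walk.nil)))
      omega
    have hJ'L : J' ≠ L := by
      intro e
      have hle : G.dist u L ≤ 3 := by
        exact SimpleGraph.dist_le
          (Walk.cons hS (Walk.cons hSw' (Walk.cons (e ▸ hw'J') Walk.nil)))
      omega
    have hJS : J ≠ S := by
      intro e
      have hle : G.dist u t ≤ 2 := by
        exact SimpleGraph.dist_le (Walk.cons hS (Walk.cons (e ▸ hJt) Walk.nil))
      have := key t ht1; omega
    have hJ'S : J' ≠ S := by
      intro e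
      have hle : G.dist u t' ≤ 2 := by
        exact SimpleGraph.dist_le (Walk.cons hS (Walk.cons (e ▸ hJ't') Walk.nil))
      have := key t' ht2; omega
    have hJJ' : J ≠ J' := by
      intro e
      exact hJL (CN hg (by omega) hJt.symm (e ▸ hJ't') ht1.symm ht2 htt')
    have cS : c S = c L := bool_eq_of_ne_ne (Ne.symm (hc hS)) (Ne.symm hcol)
    have cw : c w = c u := by
      have h1' : c w ≠ c L := by rw [← cS]; exact Ne.symm (hc hSw)
      exact bool_eq_of_ne_ne h1' hcol
    have cw' : c w' = c u := by
      have h1' : c w' ≠ c L := by rw [← cS]; exact Ne.symm (hc hSw')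
      exact bool_eq_of_ne_ne h1' hcol
    have cJ : c J = c L := by
      have h1' : c J ≠ c u := by rw [← cw]; exact Ne.symm (hc hwJ)
      exact bool_eq_of_ne_ne h1' (Ne.symm hcol)
    have cJ' : c J' = c L := by
      have h1' : c J' ≠ c u := by rw [← cw']; exact Ne.symm (hc hw'J')
      exact bool_eq_of_ne_ne h1' (Ne.symm hcol)
    have ntJ' : t ≠ J' := fun e => hcol (ct.symm.trans (e.symm ▸ cJ'))
    have nJt' : J ≠ t' := fun e => hcol (ct'.symm.trans (e ▸ cJ))
    by_cases hww' : w = w'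
    · exact no24 hg (by omega) ht1.symm ht2 hJt.symm hwJ.symm
        (hww' ▸ hw'J') hJ't' (Ne.symm hwt) ntJ' htt' hJJ' nJt' hwt'
    · exact no26 hg (by omega) hc ht1.symm ht2 hJt.symm hwJ.symm hSw.symm hSw'
        hw'J' hJ't' (Ne.symm hwt) (Ne.symm hw't) htt' hJS hJJ' hww' hwt'
        (Ne.symm hJ'S) hw't'
  obtain ⟨t1, t2, t3, ht1, ht2, ht3, n12, n13, n23⟩ := ht L
  refine ⟨t1, t2, t3, fun t htL => ?_⟩
  by_contra hne
  push_neg at hne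
  obtain ⟨ne1, ne2, ne3⟩ := hne
  obtain ⟨S1, w1', J1, hS1, hSw1, hwJ1, hJt1⟩ := chain_of_dist4 (key t1 ht1)
  obtain ⟨S2, w2', J2, hS2, hSw2, hwJ2, hJt2⟩ := chain_of_dist4 (key t2 ht2)
  obtain ⟨S3, w3', J3, hS3, hSw3, hwJ3, hJt3⟩ := chain_of_dist4 (key t3 ht3)
  obtain ⟨S4, w4', J4, hS4, hSw4, hwJ4, hJt4⟩ := chain_of_dist4 (key t htL)
  refine four_in_three (hw S1 hS1) (hw S2 hS2) (hw S3 hS3) (hw S4 hS4)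
    ?_ ?_ ?_ ?_ ?_ ?_
  · intro e; exact uniq t1 t2 S1 w1' J1 w2' J2 ht1 ht2 hS1 hSw1 hwJ1 hJt1
      (e ▸ hSw2) hwJ2 hJt2 n12
  · intro e; exact uniq t1 t3 S1 w1' J1 w3' J3 ht1 ht3 hS1 hSw1 hwJ1 hJt1
      (e ▸ hSw3) hwJ3 hJt3 n13
  · intro e; exact uniq t1 t S1 w1' J1 w4' J4 ht1 htL hS1 hSw1 hwJ1 hJt1
      (e ▸ hSw4) hwJ4 hJt4 (Ne.symm ne1)
  · intro e; exact uniq t2 t3 S2 w2' J2 w3' J3 ht2 ht3 hS2 hSw2 hwJ2 hJt2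
      (e ▸ hSw3) hwJ3 hJt3 n23
  · intro e; exact uniq t2 t S2 w2' J2 w4' J4 ht2 htL hS2 hSw2 hwJ2 hJt2
      (e ▸ hSw4) hwJ4 hJt4 (Ne.symm ne2)
  · intro e; exact uniq t3 t S3 w3' J3 w4' J4 ht3 htL hS3 hSw3 hwJ3 hJt3
      (e ▸ hSw4) hwJ4 hJt4 (Ne.symm ne3)

/-- Coverage: any vertex of the "point" colour class is opposite one of the five
"line"-class vertices of the apartment. -/
lemma coverage (hconn : G.Connected)
    (hc : ∀ ⦃x y : V⦄, G.Adj x y → c x ≠ c y)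
    (hg : G.egirth = (2 * m : ℕ∞)) (hm : 5 ≤ m)
    (hdiam : ∀ a b : V, G.dist a b ≤ 5)
    {a0 a1 a2 a3 a4 a5 a6 a7 a8 a9 : V}
    (h01 : G.Adj a0 a1) (h12 : G.Adj a1 a2) (h23 : G.Adj a2 a3) (h34 : G.Adj a3 a4)
    (h45 : G.Adj a4 a5) (h56 : G.Adj a5 a6) (h67 : G.Adj a6 a7) (h78 : G.Adj a7 a8)
    (h89 : G.Adj a8 a9) (h90 : G.Adj a9 a0)
    (n02 : a0 ≠ a2) (n04 : a0 ≠ a4) (n06 : a0 ≠ a6) (n08 : a0 ≠ a8)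
    (n24 : a2 ≠ a4) (n26 : a2 ≠ a6) (n28 : a2 ≠ a8) (n46 : a4 ≠ a6)
    (n48 : a4 ≠ a8) (n68 : a6 ≠ a8)
    (n13 : a1 ≠ a3) (n19 : a1 ≠ a9) (n35 : a3 ≠ a5) (n57 : a5 ≠ a7) (n79 : a7 ≠ a9)
    (ce2 : c a2 = c a0) (ce4 : c a4 = c a0) (ce6 : c a6 = c a0) (ce8 : c a8 = c a0)
    (co3 : c a3 = c a1) (co5 : c a5 = c a1) (co7 : c a7 = c a1) (co9 : c a9 = c a1)
    {u : V} (hu : c u = c a0) :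
    G.dist u a1 = 5 ∨ G.dist u a3 = 5 ∨ G.dist u a5 = 5 ∨ G.dist u a7 = 5 ∨
      G.dist u a9 = 5 := by
  by_contra hcon
  push_neg at hcon
  obtain ⟨m1, m3, m5, m7, m9⟩ := hcon
  have c10 : c a1 ≠ c a0 := Ne.symm (hc h01)
  have c30 : c a3 ≠ c a0 := by rw [co3]; exact c10
  have c50 : c a5 ≠ c a0 := by rw [co5]; exact c10
  have c70 : c a7 ≠ c a0 := by rw [co7]; exact c10
  have c90 : c a9 ≠ c a0 := by rw [co9]; exact c10
  have odd13 : ∀ X : V, c X ≠ c a0 → G.dist u X ≠ 5 →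
      G.dist u X = 1 ∨ G.dist u X = 3 := by
    intro X hX h5
    have hodd : ¬ Even (G.dist u X) := fun he =>
      hX (((dist_even_iff hconn hc u X).mpr he).symm.trans hu)
    have := hdiam u X
    rcases Nat.even_or_odd (G.dist u X) with he | ⟨k, hk⟩
    · exact absurd he hodd
    · omega
  have even_le2 : ∀ X Y P : V, G.Adj X P → G.Adj P Y → X ≠ Y →
      G.dist u X = 1 ∨ G.dist u X = 3 → G.dist u Y = 1 ∨ G.dist u Y = 3 →
      c P = c a0 → c X ≠ c a0 → c Y ≠ c a0 → G.dist u P ≤ 2 := by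
    intro X Y P hXP hPY hXY hdX hdY hcP hcX hcY
    by_cases huP : u = P
    · rw [huP, SimpleGraph.dist_self]; omega
    have hEv : Even (G.dist u P) := (dist_even_iff hconn hc u P).mp (hu.trans hcP.symm)
    have hne4 : G.dist u P ≠ 4 := by
      intro h4
      rcases hdX with h1 | h3
      · have hle : G.dist u P ≤ 2 := by
          simpa using SimpleGraph.dist_le
            (Walk.cons (dist_eq_one_iff_adj.mp h1) (Walk.cons hXP Walk.nil))
        omega
      rcases hdY with h1' | h3'
      · have hle : G.dist u P ≤ 2 := by
          simpa using SimpleGraph.dist_le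
            (Walk.cons (dist_eq_one_iff_adj.mp h1') (Walk.cons hPY.symm Walk.nil))
        omega
      obtain ⟨SX, wX, hu1, hu2, hu3⟩ := chain_of_dist3 h3
      obtain ⟨SY, wY, hv1, hv2, hv3⟩ := chain_of_dist3 h3'
      have hwXP : wX ≠ P := by
        intro e
        have hle : G.dist u P ≤ 2 := by
          exact SimpleGraph.dist_le (Walk.cons hu1 (Walk.cons (e ▸ hu2) Walk.nil))
        omega
      have hwYP : wY ≠ P := by
        intro e
        have hle : G.dist u P ≤ 2 := by
          exact SimpleGraph.dist_le (Walk.cons hv1 (Walk.cons (e ▸ hv2) Walk.nil))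
        omega
      have huwX : u ≠ wX := by
        intro e
        have : G.dist u X = 1 := dist_eq_one_iff_adj.mpr (e ▸ hu3)
        omega
      have huwY : u ≠ wY := by
        intro e
        have : G.dist u Y = 1 := dist_eq_one_iff_adj.mpr (e ▸ hv3)
        omega
      have hSXX : SX ≠ X := by
        intro e
        have : G.dist u X = 1 := dist_eq_one_iff_adj.mpr (e ▸ hu1)
        omega
      have hSYY : SY ≠ Y := by
        intro e
        have : G.dist u Y = 1 := dist_eq_one_iff_adj.mpr (e ▸ hv1)
        omega
      have hSXP : SX ≠ P := fun e => hc hu1 (by rw [e, hcP]; exact hu)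
      have hSYP : SY ≠ P := fun e => hc hv1 (by rw [e, hcP]; exact hu)
      have huX : u ≠ X := fun e => hcX (e ▸ hu)
      have huY : u ≠ Y := fun e => hcY (e ▸ hu)
      obtain ⟨-, -, e3⟩ := eq4 hg hm hu1 hu2 hu3 hXP hv1 hv2 hv3 hPY.symm
        (isPath4 hu1 hu2 hu3 hXP huwX huX huP hSXX hSXP hwXP)
        (isPath4 hv1 hv2 hv3 hPY.symm huwY huY huP hSYY hSYP hwYP)
      exact hXY e3
    have := hdiam u P
    rcases hEv with ⟨k, hk⟩
    omega
  have far24 : ∀ X A B D Y : V, G.Adj X A → G.Adj A B → G.Adj B D → G.Adj D Y →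
      c X = c Y → X ≠ Y → X ≠ B → X ≠ D → A ≠ D → A ≠ Y → B ≠ Y →
      ¬ G.dist X Y ≤ 2 := by
    intro X A B D Y k1 k2 k3 k4 hcXY hXY hXB hXD hAD hAY hBY hle
    have hEv : Even (G.dist X Y) := (dist_even_iff hconn hc X Y).mp hcXY
    have hne0 : G.dist X Y ≠ 0 := fun h0 => hXY (hconn.dist_eq_zero_iff.mp h0)
    have h2 : G.dist X Y = 2 := by rcases hEv with ⟨k, hk⟩; omega
    obtain ⟨K, hK1, hK2⟩ := mid_of_dist2 h2
    exact no24 hg (by omega) hK1 hK2 k1 k2 k3 k4 hXB hXD hXY hAD hAY hBY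
  -- distances between "antipodal" even vertices are more than 2
  have f04 : ¬ G.dist a0 a4 ≤ 2 := far24 a0 a1 a2 a3 a4 h01 h12 h23 h34
    ce4.symm n04 n02 (fun e => c30 (by rw [← e])) n13
    (fun e => c10 (by rw [e, ce4])) n24
  have f26 : ¬ G.dist a2 a6 ≤ 2 := far24 a2 a3 a4 a5 a6 h23 h34 h45 h56
    (ce2.trans ce6.symm) n26 n24 (fun e => c50 (by rw [← e, ce2])) n35
    (fun e => c30 (by rw [e, ce6])) n46
  have f48 : ¬ G.dist a4 a8 ≤ 2 := far24 a4 a5 a6 a7 a8 h45 h56 h67 h78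
    (ce4.trans ce8.symm) n48 n46 (fun e => c70 (by rw [← e, ce4])) n57
    (fun e => c50 (by rw [e, ce8])) n68
  have f60 : ¬ G.dist a6 a0 ≤ 2 := far24 a6 a7 a8 a9 a0 h67 h78 h89 h90
    ce6 (Ne.symm n06) n68 (fun e => c90 (by rw [← e, ce6])) n79
    (fun e => c70 (by rw [e])) (Ne.symm n08)
  have f82 : ¬ G.dist a8 a2 ≤ 2 := far24 a8 a9 a0 a1 a2 h89 h90 h01 h12
    (ce8.trans ce2.symm) (Ne.symm n28) (Ne.symm n08) (fun e => c10 (by rw [← e, ce8]))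
    (Ne.symm n19) (fun e => c90 (by rw [e, ce2])) n02
  -- u is not one of the even vertices
  have p0 : G.dist u a0 ≤ 2 := even_le2 a9 a1 a0 h90 h01 (Ne.symm n19)
    (odd13 a9 c90 m9) (odd13 a1 c10 m1) rfl c90 c10
  have p2 : G.dist u a2 ≤ 2 := even_le2 a1 a3 a2 h12 h23 n13
    (odd13 a1 c10 m1) (odd13 a3 c30 m3) ce2 c10 c30
  have p4 : G.dist u a4 ≤ 2 := even_le2 a3 a5 a4 h34 h45 n35
    (odd13 a3 c30 m3) (odd13 a5 c50 m5) ce4 c30 c50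
  have hu0 : u ≠ a0 := fun e => f04 (by rw [← e]; exact p4)
  have hu2 : u ≠ a2 := fun e => f26 (by rw [← e]; exact (even_le2 a5 a7 a6 h56 h67
    n57 (odd13 a5 c50 m5) (odd13 a7 c70 m7) ce6 c50 c70))
  have hu4 : u ≠ a4 := fun e => f48 (by rw [← e]; exact (even_le2 a7 a9 a8 h78 h89
    n79 (odd13 a7 c70 m7) (odd13 a9 c90 m9) ce8 c70 c90))
  have d0 : G.dist u a0 = 2 := by
    have hEv : Even (G.dist u a0) := (dist_even_iff hconn hc u a0).mp hu
    have hne0 : G.dist u a0 ≠ 0 := fun h0 => hu0 (hconn.dist_eq_zero_iff.mp h0)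
    rcases hEv with ⟨k, hk⟩; omega
  have d2 : G.dist u a2 = 2 := by
    have hEv : Even (G.dist u a2) := (dist_even_iff hconn hc u a2).mp (hu.trans ce2.symm)
    have hne0 : G.dist u a2 ≠ 0 := fun h0 => hu2 (hconn.dist_eq_zero_iff.mp h0)
    rcases hEv with ⟨k, hk⟩; omega
  have d4 : G.dist u a4 = 2 := by
    have hEv : Even (G.dist u a4) := (dist_even_iff hconn hc u a4).mp (hu.trans ce4.symm)
    have hne0 : G.dist u a4 ≠ 0 := fun h0 => hu4 (hconn.dist_eq_zero_iff.mp h0)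
    rcases hEv with ⟨k, hk⟩; omega
  obtain ⟨K0, hK01, hK02⟩ := mid_of_dist2 d0
  obtain ⟨K2, hK21, hK22⟩ := mid_of_dist2 d2
  obtain ⟨K4, hK41, hK42⟩ := mid_of_dist2 d4
  -- u is adjacent to a1 and to a3
  have hKK : K0 = K2 := by
    by_contra hne
    exact no24 hg (by omega) h01 h12 hK02.symm hK01.symm hK21 hK22
      (Ne.symm hu0) (fun e => hc hK21 (by rw [hu, e])) n02 hne
      (fun e => hc hK01 (by rw [hu, ← ce2, ← e])) hu2
  have hua1 : G.Adj u a1 := by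
    have : K0 = a1 := CN hg (by omega) hK02.symm (hKK ▸ hK22) h01 h12 n02
    exact this ▸ hK01
  have hKK' : K2 = K4 := by
    by_contra hne
    exact no24 hg (by omega) h23 h34 hK22.symm hK21.symm hK41 hK42
      (Ne.symm hu2) (fun e => hc hK41 (by rw [hu, ← ce2, e])) n24 hne
      (fun e => hc hK21 (by rw [hu, ← ce4, ← e])) hu4
  have hua3 : G.Adj u a3 := by
    have : K2 = a3 := CN hg (by omega) hK22.symm (hKK' ▸ hK42) h23 h34 n24
    exact this ▸ hK21
  exact hu2 (CN hg (by omega) hua1.symm hua3 h12 h23 n13)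

lemma dist_getVert_le (hconn : G.Connected) {u v : V} (p : G.Walk u v) :
    ∀ i, G.dist u (p.getVert i) ≤ i := by
  intro i
  induction i with
  | zero => simp [Walk.getVert_zero]
  | succ n ih =>
    by_cases hn : n < p.length
    · have hadj := p.adj_getVert_succ hn
      calc G.dist u (p.getVert (n+1)) ≤
          G.dist u (p.getVert n) + G.dist (p.getVert n) (p.getVert (n+1)) :=
            hconn.dist_triangle
        _ ≤ n + 1 := by
            have h1 : G.dist (p.getVert n) (p.getVert (n+1)) ≤ 1 := by
              simpa using SimpleGraph.dist_le hadj.toWalk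
            omega
    · have : p.getVert (n+1) = p.getVert n := by
        rw [p.getVert_of_length_le (by omega), p.getVert_of_length_le (by omega)]
      rw [this]
      omega

lemma exists_adj_of_dist_succ (hconn : G.Connected) {u v : V} {k : ℕ}
    (h : G.dist u v = k + 1) : ∃ w, G.dist u w ≤ k ∧ G.Adj w v := by
  have hne : G.dist u v ≠ 0 := by omega
  obtain ⟨p, hp⟩ := exists_walk_of_dist_ne_zero hne
  rw [h] at hp
  refine ⟨p.getVert k, dist_getVert_le hconn p k, ?_⟩
  have := p.adj_getVert_succ (i := k) (by omega)
  rwa [show k + 1 = p.length by omega, Walk.getVert_length] at this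

lemma finite_of_bnd (hconn : G.Connected) (hdiam : ∀ a b : V, G.dist a b ≤ 5)
    (hB : ∀ v : V, Bnd G v) (v0 : V) : Finite V := by
  have hball : ∀ k : ℕ, {v : V | G.dist v0 v ≤ k}.Finite := by
    intro k
    induction k with
    | zero =>
      refine Set.Finite.subset (Set.finite_singleton v0) ?_
      intro v hv
      simp only [Set.mem_setOf_eq, Nat.le_zero] at hv
      simp [(hconn.dist_eq_zero_iff.mp hv).symm]
    | succ k ih =>
      have hsub : {v : V | G.dist v0 v ≤ k + 1} ⊆
          {v | G.dist v0 v ≤ k} ∪ ⋃ w ∈ {v : V | G.dist v0 v ≤ k}, {y | G.Adj w y} := by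
        intro v hv
        simp only [Set.mem_setOf_eq] at hv
        rcases Nat.lt_or_ge (G.dist v0 v) (k+1) with hlt | hge
        · exact Or.inl (by simpa using Nat.lt_succ_iff.mp hlt)
        · have heq : G.dist v0 v = k + 1 := le_antisymm hv hge
          obtain ⟨w, hw1, hw2⟩ := exists_adj_of_dist_succ hconn heq
          exact Or.inr (Set.mem_biUnion hw1 (by simp only [Set.mem_setOf_eq]; exact hw2))
      refine Set.Finite.subset (Set.Finite.union ih
        (Set.Finite.biUnion ih (fun w _ => ?_))) hsub
      obtain ⟨w1, w2, w3, hw⟩ := hB w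
      refine Set.Finite.subset (Set.Finite.insert w1 (Set.Finite.insert w2
        (Set.finite_singleton w3))) ?_
      intro y hy
      have := hw y hy
      simp only [Set.mem_insert_iff, Set.mem_singleton_iff]
      tauto
  have huniv : (Set.univ : Set V).Finite :=
    Set.Finite.subset (hball 5) (fun v _ => hdiam v0 v)
  exact Set.finite_univ_iff.mp huniv

lemma mem_of_three {α : Sort*} {w1 w2 w3 x y z t : α}
    (hx : x = w1 ∨ x = w2 ∨ x = w3) (hy : y = w1 ∨ y = w2 ∨ y = w3)
    (hz : z = w1 ∨ z = w2 ∨ z = w3) (ht : t = w1 ∨ t = w2 ∨ t = w3)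
    (nxy : x ≠ y) (nxz : x ≠ z) (nyz : y ≠ z) : t = x ∨ t = y ∨ t = z := by
  rcases hx with rfl | rfl | rfl <;> rcases hy with rfl | rfl | rfl <;>
    rcases hz with rfl | rfl | rfl <;> rcases ht with rfl | rfl | rfl <;> simp_all

set_option maxHeartbeats 1000000 in
/-- Core of the `m = 5` case: if no vertex is opposite all five "point" vertices
of the decagon, we derive a contradiction. -/
lemma core5 (hconn : G.Connected) (ht : Thick G)
    (hc : ∀ ⦃x y : V⦄, G.Adj x y → c x ≠ c y)
    (hg : G.egirth = (2 * m : ℕ∞)) (hm : 5 ≤ m)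
    (hdiam : ∀ a b : V, G.dist a b ≤ 5)
    {a0 a1 a2 a3 a4 a5 a6 a7 a8 a9 : V}
    (h01 : G.Adj a0 a1) (h12 : G.Adj a1 a2) (h23 : G.Adj a2 a3) (h34 : G.Adj a3 a4)
    (h45 : G.Adj a4 a5) (h56 : G.Adj a5 a6) (h67 : G.Adj a6 a7) (h78 : G.Adj a7 a8)
    (h89 : G.Adj a8 a9) (h90 : G.Adj a9 a0)
    (n02 : a0 ≠ a2) (n04 : a0 ≠ a4) (n06 : a0 ≠ a6) (n08 : a0 ≠ a8)
    (n24 : a2 ≠ a4) (n26 : a2 ≠ a6) (n28 : a2 ≠ a8) (n46 : a4 ≠ a6)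
    (n48 : a4 ≠ a8) (n68 : a6 ≠ a8)
    (n13 : a1 ≠ a3) (n15 : a1 ≠ a5) (n17 : a1 ≠ a7) (n19 : a1 ≠ a9)
    (n35 : a3 ≠ a5) (n37 : a3 ≠ a7) (n39 : a3 ≠ a9) (n57 : a5 ≠ a7)
    (n59 : a5 ≠ a9) (n79 : a7 ≠ a9)
    (ce2 : c a2 = c a0) (ce4 : c a4 = c a0) (ce6 : c a6 = c a0) (ce8 : c a8 = c a0)
    (co3 : c a3 = c a1) (co5 : c a5 = c a1) (co7 : c a7 = c a1) (co9 : c a9 = c a1)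
    (hstuck : ∀ M : V, ¬ (G.dist M a0 = 5 ∧ G.dist M a2 = 5 ∧ G.dist M a4 = 5 ∧
      G.dist M a6 = 5 ∧ G.dist M a8 = 5)) : False := by
  classical
  have c10 : c a1 ≠ c a0 := Ne.symm (hc h01)
  have c30 : c a3 ≠ c a0 := by rw [co3]; exact c10
  have c50 : c a5 ≠ c a0 := by rw [co5]; exact c10
  have c70 : c a7 ≠ c a0 := by rw [co7]; exact c10
  have c90 : c a9 ≠ c a0 := by rw [co9]; exact c10
  have nePL : ∀ {x y : V}, c x = c a0 → c y ≠ c a0 → x ≠ y :=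
    fun hx hy e => hy (e ▸ hx)
  have mk4 : ∀ u t : V, c u = c a0 → c t = c a0 → u ≠ t →
      (∀ K, G.Adj u K → G.Adj K t → False) → G.dist u t = 4 := by
    intro u t hcu hct hne hK
    have hEv : Even (G.dist u t) := (dist_even_iff hconn hc u t).mp (hcu.trans hct.symm)
    have h0 : G.dist u t ≠ 0 := fun h => hne (hconn.dist_eq_zero_iff.mp h)
    have h2 : G.dist u t ≠ 2 := by
      intro h
      obtain ⟨K, k1, k2⟩ := mid_of_dist2 h
      exact hK K k1 k2
    have := hdiam u t
    rcases hEv with ⟨k, hk⟩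
    omega
  obtain ⟨q, hq, hq0, hq2⟩ := pick ht a1 a0 a2
  have hcq : c q = c a0 := bool_eq_of_ne_ne (Ne.symm (hc hq)) (hc h01)
  have hq4ne : q ≠ a4 := by
    rintro rfl
    exact no13 hg (by omega) hq h12 h23 h34 n13 n24
  have NoK4 : ∀ K, G.Adj q K → G.Adj K a4 → False := fun K k1 k2 =>
    no24 hg (by omega) k2.symm k1.symm h34.symm h23.symm h12.symm hq
      (Ne.symm n24) (nePL ce4 c10) (Ne.symm hq4ne) (Ne.symm n13)
      (Ne.symm (nePL hcq c30)) (Ne.symm hq2)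
  have dq4 : G.dist q a4 = 4 := mk4 q a4 hcq ce4 hq4ne NoK4
  have hq8ne : q ≠ a8 := by
    rintro rfl
    exact no13 hg (by omega) hq.symm h89 h90 h01 (Ne.symm n08) (Ne.symm n19)
  have NoK8 : ∀ K, G.Adj q K → G.Adj K a8 → False := fun K k1 k2 =>
    no24 hg (by omega) k2.symm k1.symm h89 h90 h01 hq
      (Ne.symm n08) (nePL ce8 c10) (Ne.symm hq8ne) (Ne.symm n19)
      (Ne.symm (nePL hcq c90)) (Ne.symm hq0)
  have dq8 : G.dist q a8 = 4 := mk4 q a8 hcq ce8 hq8ne NoK8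
  have hq6ne : q ≠ a6 := by
    rintro rfl
    exact no15 hg (by omega) hc hq h12 h23 h34 h45 h56 n13 n15 n24 n26 n35 n46
  have NoK6 : ∀ K, G.Adj q K → G.Adj K a6 → False := fun K k1 k2 =>
    no26 hg (by omega) hc k2.symm k1.symm h56.symm h45.symm h34.symm h23.symm
      h12.symm hq (Ne.symm n46) (Ne.symm n26) (Ne.symm hq6ne) (Ne.symm n35)
      (Ne.symm n15) (Ne.symm n24) (Ne.symm hq4ne) (Ne.symm n13) (Ne.symm hq2)
  have dq6 : G.dist q a6 = 4 := mk4 q a6 hcq ce6 hq6ne NoK6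
  obtain ⟨N, x, B, hqN, hNx, hxB, hBa6⟩ := chain_of_dist4 dq6
  have cN : c N ≠ c a0 := fun e => hc hqN (hcq.trans e.symm)
  have cx : c x = c a0 := bool_eq_of_ne_ne (Ne.symm (hc hNx)) (Ne.symm cN)
  have cB : c B ≠ c a0 := fun e => hc hxB (cx.trans e.symm)
  have hxa6 : x ≠ a6 := by
    intro e
    have hle : G.dist q a6 ≤ 2 := by
      exact SimpleGraph.dist_le (Walk.cons hqN (Walk.cons (e ▸ hNx) Walk.nil))
    omega
  have hxq : x ≠ q := by
    intro e
    have hle : G.dist q a6 ≤ 2 := by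
      exact SimpleGraph.dist_le (Walk.cons (e ▸ hxB) (Walk.cons hBa6 Walk.nil))
    omega
  have hNa1 : N ≠ a1 := by
    intro e
    by_cases hB1 : B = a1
    · exact no15 hg (by omega) hc (hB1 ▸ hBa6) h12 h23 h34 h45 h56 n13 n15 n24 n26
        n35 n46
    · exact no35 hg (by omega) hc (e ▸ hNx) hxB hBa6 h12 h23 h34 h45 h56
        (fun e2 => hB1 e2.symm) hxa6 (Ne.symm (nePL ce6 c10))
        n13 n15 n24 n26 n35 n46
  have hNB : N ≠ B := by
    intro e
    have hle : G.dist q a6 ≤ 2 := by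
      exact SimpleGraph.dist_le (Walk.cons hqN (Walk.cons (e.symm ▸ hBa6) Walk.nil))
    omega
  -- the distinguished vertex z
  obtain ⟨z, hNz, hzq, hzx⟩ := pick ht N q x
  have cz : c z = c a0 := bool_eq_of_ne_ne (Ne.symm (hc hNz)) (Ne.symm cN)
  have hz0ne : z ≠ a0 := by
    rintro rfl
    exact hNa1 (CN hg (by omega) hNz.symm hqN.symm h01 hq (Ne.symm hq0))
  have NoKz0 : ∀ K, G.Adj z K → G.Adj K a0 → False := fun K k1 k2 =>
    no24 hg (by omega) k2.symm k1.symm h01 hq hqN hNz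
      (Ne.symm hq0) (nePL rfl cN) (Ne.symm hz0ne) (Ne.symm hNa1)
      (Ne.symm (nePL cz c10)) (Ne.symm hzq)
  have dz0 : G.dist z a0 = 4 := mk4 z a0 cz rfl hz0ne NoKz0
  have hz2ne : z ≠ a2 := by
    rintro rfl
    exact hNa1 (CN hg (by omega) hNz.symm hqN.symm h12.symm hq (Ne.symm hq2))
  have NoKz2 : ∀ K, G.Adj z K → G.Adj K a2 → False := fun K k1 k2 =>
    no24 hg (by omega) k2.symm k1.symm h12.symm hq hqN hNz
      (Ne.symm hq2) (nePL ce2 cN) (Ne.symm hz2ne) (Ne.symm hNa1)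
      (Ne.symm (nePL cz c10)) (Ne.symm hzq)
  have dz2 : G.dist z a2 = 4 := mk4 z a2 cz ce2 hz2ne NoKz2
  have hz6ne : z ≠ a6 := by
    intro e
    have hle : G.dist q a6 ≤ 2 := by
      exact SimpleGraph.dist_le (Walk.cons hqN (Walk.cons (e ▸ hNz) Walk.nil))
    omega
  -- the geodesic from q to a4 along the decagon
  have pathQ4 : (Walk.cons hq.symm (Walk.cons h12 (Walk.cons h23
      (Walk.cons h34 Walk.nil)))).IsPath :=
    isPath4 hq.symm h12 h23 h34 hq2 (nePL hcq c30) hq4ne n13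
      (Ne.symm (nePL ce4 c10)) n24
  have pathQ8 : (Walk.cons hq.symm (Walk.cons h01.symm (Walk.cons h90.symm
      (Walk.cons h89.symm Walk.nil)))).IsPath :=
    isPath4 hq.symm h01.symm h90.symm h89.symm hq0 (nePL hcq c90)
      hq8ne n19 (Ne.symm (nePL ce8 c10)) n08
  have NoKz6 : ∀ K, G.Adj z K → G.Adj K a6 → False := by
    intro K k1 k2
    have hNK : N ≠ K := by
      intro e
      have hle : G.dist q a6 ≤ 2 := by
        exact SimpleGraph.dist_le (Walk.cons hqN (Walk.cons (e.symm ▸ k2) Walk.nil))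
      omega
    have cK : c K ≠ c a0 := fun e => hc k1 (cz.trans e.symm)
    have p1 : (Walk.cons hqN (Walk.cons hNz (Walk.cons k1
        (Walk.cons k2 Walk.nil)))).IsPath :=
      isPath4 hqN hNz k1 k2 (Ne.symm hzq) (nePL hcq cK) hq6ne hNK
        ((nePL ce6 cN).symm) hz6ne
    have p2 : (Walk.cons hqN (Walk.cons hNx (Walk.cons hxB
        (Walk.cons hBa6 Walk.nil)))).IsPath :=
      isPath4 hqN hNx hxB hBa6 (Ne.symm hxq) (nePL hcq cB) hq6ne hNB
        ((nePL ce6 cN).symm) hxa6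
    obtain ⟨-, e2, -⟩ := eq4 hg hm hqN hNz k1 k2 hqN hNx hxB hBa6 p1 p2
    exact hzx e2
  have dz6 : G.dist z a6 = 4 := mk4 z a6 cz ce6 hz6ne NoKz6
  have hz4ne : z ≠ a4 := by
    intro e
    have hle : G.dist q a4 ≤ 2 := by
      exact SimpleGraph.dist_le (Walk.cons hqN (Walk.cons (e ▸ hNz) Walk.nil))
    omega
  have NoKz4 : ∀ K, G.Adj z K → G.Adj K a4 → False := by
    intro K k1 k2
    have cK : c K ≠ c a0 := fun e => hc k1 (cz.trans e.symm)
    have hNK : N ≠ K := by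
      intro e
      have hle : G.dist q a4 ≤ 2 := by
        exact SimpleGraph.dist_le (Walk.cons hqN (Walk.cons (e.symm ▸ k2) Walk.nil))
      omega
    have p1 : (Walk.cons hqN (Walk.cons hNz (Walk.cons k1
        (Walk.cons k2 Walk.nil)))).IsPath :=
      isPath4 hqN hNz k1 k2 (Ne.symm hzq) (nePL hcq cK) hq4ne hNK
        ((nePL ce4 cN).symm) hz4ne
    obtain ⟨e1, -, -⟩ := eq4 hg hm hqN hNz k1 k2 hq.symm h12 h23 h34 p1 pathQ4
    exact hNa1 e1
  have dz4 : G.dist z a4 = 4 := mk4 z a4 cz ce4 hz4ne NoKz4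
  have hz8ne : z ≠ a8 := by
    intro e
    have hle : G.dist q a8 ≤ 2 := by
      exact SimpleGraph.dist_le (Walk.cons hqN (Walk.cons (e ▸ hNz) Walk.nil))
    omega
  have NoKz8 : ∀ K, G.Adj z K → G.Adj K a8 → False := by
    intro K k1 k2
    have cK : c K ≠ c a0 := fun e => hc k1 (cz.trans e.symm)
    have hNK : N ≠ K := by
      intro e
      have hle : G.dist q a8 ≤ 2 := by
        exact SimpleGraph.dist_le (Walk.cons hqN (Walk.cons (e.symm ▸ k2) Walk.nil))
      omega
    have p1 : (Walk.cons hqN (Walk.cons hNz (Walk.cons k1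
        (Walk.cons k2 Walk.nil)))).IsPath :=
      isPath4 hqN hNz k1 k2 (Ne.symm hzq) (nePL hcq cK) hq8ne hNK
        ((nePL ce8 cN).symm) hz8ne
    obtain ⟨e1, -, -⟩ := eq4 hg hm hqN hNz k1 k2 hq.symm h01.symm h90.symm h89.symm
      p1 pathQ8
    exact hNa1 e1
  have dz8 : G.dist z a8 = 4 := mk4 z a8 cz ce8 hz8ne NoKz8
  obtain ⟨Y, e3, F, hzY, hYe, heF, hFa4⟩ := chain_of_dist4 dz4
  obtain ⟨Y', e5, D, hzY', hY'e, heD, hDa8⟩ := chain_of_dist4 dz8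
  have cY : c Y ≠ c a0 := fun e => hc hzY (cz.trans e.symm)
  have ce3 : c e3 = c a0 := bool_eq_of_ne_ne (Ne.symm (hc hYe)) (Ne.symm cY)
  have cF : c F ≠ c a0 := fun e => hc heF (ce3.trans e.symm)
  have cY' : c Y' ≠ c a0 := fun e => hc hzY' (cz.trans e.symm)
  have ce5 : c e5 = c a0 := bool_eq_of_ne_ne (Ne.symm (hc hY'e)) (Ne.symm cY')
  have cD : c D ≠ c a0 := fun e => hc heD (ce5.trans e.symm)
  have hze3 : z ≠ e3 := by
    intro e
    have hle : G.dist z a4 ≤ 2 := by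
      exact SimpleGraph.dist_le (Walk.cons (e ▸ heF) (Walk.cons hFa4 Walk.nil))
    omega
  have he3a4 : e3 ≠ a4 := by
    intro e
    have hle : G.dist z a4 ≤ 2 := by
      exact SimpleGraph.dist_le (Walk.cons hzY (Walk.cons (e ▸ hYe) Walk.nil))
    omega
  have hYF : Y ≠ F := by
    intro e
    have hle : G.dist z a4 ≤ 2 := by
      exact SimpleGraph.dist_le (Walk.cons hzY (Walk.cons (e.symm ▸ hFa4) Walk.nil))
    omega
  have hze5 : z ≠ e5 := by
    intro e
    have hle : G.dist z a8 ≤ 2 := by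
      exact SimpleGraph.dist_le (Walk.cons (e ▸ heD) (Walk.cons hDa8 Walk.nil))
    omega
  have he5a8 : e5 ≠ a8 := by
    intro e
    have hle : G.dist z a8 ≤ 2 := by
      exact SimpleGraph.dist_le (Walk.cons hzY' (Walk.cons (e ▸ hY'e) Walk.nil))
    omega
  have hY'D : Y' ≠ D := by
    intro e
    have hle : G.dist z a8 ≤ 2 := by
      exact SimpleGraph.dist_le (Walk.cons hzY' (Walk.cons (e.symm ▸ hDa8) Walk.nil))
    omega
  have pathZ0 : (Walk.cons hNz.symm (Walk.cons hqN.symm (Walk.cons hq.symm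
      (Walk.cons h01.symm Walk.nil)))).IsPath :=
    isPath4 hNz.symm hqN.symm hq.symm h01.symm hzq (nePL cz c10) hz0ne hNa1
      (Ne.symm (nePL rfl cN)) hq0
  have pathZ2 : (Walk.cons hNz.symm (Walk.cons hqN.symm (Walk.cons hq.symm
      (Walk.cons h12 Walk.nil)))).IsPath :=
    isPath4 hNz.symm hqN.symm hq.symm h12 hzq (nePL cz c10) hz2ne hNa1
      (Ne.symm (nePL ce2 cN)) hq2
  have pathZ6 : (Walk.cons hNz.symm (Walk.cons hNx (Walk.cons hxB
      (Walk.cons hBa6 Walk.nil)))).IsPath :=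
    isPath4 hNz.symm hNx hxB hBa6 hzx (nePL cz cB) hz6ne hNB
      (Ne.symm (nePL ce6 cN)) hxa6
  have pathZ4 : (Walk.cons hzY (Walk.cons hYe (Walk.cons heF
      (Walk.cons hFa4 Walk.nil)))).IsPath :=
    isPath4 hzY hYe heF hFa4 hze3 (nePL cz cF) hz4ne hYF
      (Ne.symm (nePL ce4 cY)) he3a4
  have pathZ8 : (Walk.cons hzY' (Walk.cons hY'e (Walk.cons heD
      (Walk.cons hDa8 Walk.nil)))).IsPath :=
    isPath4 hzY' hY'e heD hDa8 hze5 (nePL cz cD) hz8ne hY'D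
      (Ne.symm (nePL ce8 cY')) he5a8
  have hYN : Y ≠ N := by
    intro e
    have hqe3 : q ≠ e3 := by
      intro e2
      have hle : G.dist q a4 ≤ 2 := by
        exact SimpleGraph.dist_le (Walk.cons (e2 ▸ heF) (Walk.cons hFa4 Walk.nil))
      omega
    have hNF : N ≠ F := by
      intro e2
      have hle : G.dist q a4 ≤ 2 := by
        exact SimpleGraph.dist_le (Walk.cons hqN (Walk.cons (e2.symm ▸ hFa4) Walk.nil))
      omega
    have p1 : (Walk.cons hqN (Walk.cons (e ▸ hYe) (Walk.cons heF
        (Walk.cons hFa4 Walk.nil)))).IsPath :=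
      isPath4 hqN (e ▸ hYe) heF hFa4 hqe3 (nePL hcq cF) hq4ne hNF
        (Ne.symm (nePL ce4 cN)) he3a4
    obtain ⟨e1, -, -⟩ := eq4 hg hm hqN (e ▸ hYe) heF hFa4 hq.symm h12 h23 h34
      p1 pathQ4
    exact hNa1 e1
  have hY'N : Y' ≠ N := by
    intro e
    have hqe5 : q ≠ e5 := by
      intro e2
      have hle : G.dist q a8 ≤ 2 := by
        exact SimpleGraph.dist_le (Walk.cons (e2 ▸ heD) (Walk.cons hDa8 Walk.nil))
      omega
    have hND : N ≠ D := by
      intro e2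
      have hle : G.dist q a8 ≤ 2 := by
        exact SimpleGraph.dist_le (Walk.cons hqN (Walk.cons (e2.symm ▸ hDa8) Walk.nil))
      omega
    have p1 : (Walk.cons hqN (Walk.cons (e ▸ hY'e) (Walk.cons heD
        (Walk.cons hDa8 Walk.nil)))).IsPath :=
      isPath4 hqN (e ▸ hY'e) heD hDa8 hqe5 (nePL hcq cD) hq8ne hND
        (Ne.symm (nePL ce8 cN)) he5a8
    obtain ⟨e1, -, -⟩ := eq4 hg hm hqN (e ▸ hY'e) heD hDa8 hq.symm h01.symm h90.symm
      h89.symm p1 pathQ8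
    exact hNa1 e1
  -- every line through z is one of N, Y, Y'
  have dS : ∀ (S t w1 w2 w3 : V) (hS : G.Adj z S)
      (k1 : G.Adj z w1) (k2 : G.Adj w1 w2) (k3 : G.Adj w2 w3) (k4 : G.Adj w3 t),
      (Walk.cons k1 (Walk.cons k2 (Walk.cons k3 (Walk.cons k4 Walk.nil)))).IsPath →
      c t = c a0 → G.dist z t = 4 → S ≠ w1 → G.dist S t = 5 := by
    intro S t w1 w2 w3 hS k1 k2 k3 k4 hpath hct hdz hSne
    have cS : c S ≠ c a0 := fun e => hc hS (cz.trans e.symm)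
    have hodd : ¬ Even (G.dist S t) := fun he =>
      cS (((dist_even_iff hconn hc S t).mpr he).trans hct)
    have hd1 : G.dist S t ≠ 1 := by
      intro h1
      have hadj := dist_eq_one_iff_adj.mp h1
      have hle : G.dist z t ≤ 2 := by
        simpa using SimpleGraph.dist_le (Walk.cons hS (Walk.cons hadj Walk.nil))
      omega
    have hd3 : G.dist S t ≠ 3 := by
      intro h3
      obtain ⟨y, K, j1, j2, j3⟩ := chain_of_dist3 h3
      have cyy : c y = c a0 := bool_eq_of_ne_ne (Ne.symm (hc j1)) (Ne.symm cS)
      have cK : c K ≠ c a0 := fun e => hc j2 (cyy.trans e.symm)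
      have hzy : z ≠ y := by
        intro e
        have hle : G.dist z t ≤ 2 := by
          exact SimpleGraph.dist_le (Walk.cons (e ▸ j2) (Walk.cons j3 Walk.nil))
        omega
      have hSK : S ≠ K := by
        intro e
        have h1 : G.dist S t = 1 := dist_eq_one_iff_adj.mpr (by rw [e]; exact j3)
        omega
      have hzt : z ≠ t := by
        intro e
        rw [← e, SimpleGraph.dist_self] at hdz
        omega
      have hyt : y ≠ t := by
        intro e
        have h1 : G.dist S t = 1 := dist_eq_one_iff_adj.mpr (e ▸ j1)
        omega
      have p1 := isPath4 hS j1 j2 j3 hzy (nePL cz cK) hzt hSK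
        (Ne.symm (nePL hct cS)) hyt
      obtain ⟨e1, -, -⟩ := eq4 hg hm hS j1 j2 j3 k1 k2 k3 k4 p1 hpath
      exact hSne e1
    have := hdiam S t
    rcases Nat.even_or_odd (G.dist S t) with he | ⟨k, hk⟩
    · exact absurd he hodd
    · omega
  have lines_z : ∀ S, G.Adj z S → S = N ∨ S = Y ∨ S = Y' := by
    intro S hzS
    by_contra hScon
    push_neg at hScon
    obtain ⟨s1, s2, s3⟩ := hScon
    exact hstuck S
      ⟨dS S a0 N q a1 hzS hNz.symm hqN.symm hq.symm h01.symm pathZ0 rfl dz0 s1,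
       dS S a2 N q a1 hzS hNz.symm hqN.symm hq.symm h12 pathZ2 ce2 dz2 s1,
       dS S a4 Y e3 F hzS hzY hYe heF hFa4 pathZ4 ce4 dz4 s2,
       dS S a6 N x B hzS hNz.symm hNx hxB hBa6 pathZ6 ce6 dz6 s1,
       dS S a8 Y' e5 D hzS hzY' hY'e heD hDa8 pathZ8 ce8 dz8 s3⟩
  have BndZ : Bnd G z := ⟨N, Y, Y', lines_z⟩
  have dOdd : ∀ (L t w1 w2 w3 : V) (hLt : G.Adj L t)
      (k1 : G.Adj z w1) (k2 : G.Adj w1 w2) (k3 : G.Adj w2 w3) (k4 : G.Adj w3 t),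
      (Walk.cons k1 (Walk.cons k2 (Walk.cons k3 (Walk.cons k4 Walk.nil)))).IsPath →
      c t = c a0 → c L ≠ c a0 → G.dist z t = 4 → L ≠ w3 → G.dist z L = 5 := by
    intro L t w1 w2 w3 hLt k1 k2 k3 k4 hpath hct hcL hdz hLne
    have hodd : ¬ Even (G.dist z L) := fun he =>
      hcL (((dist_even_iff hconn hc z L).mpr he).symm.trans cz)
    have hd1 : G.dist z L ≠ 1 := by
      intro h1
      have hadj := dist_eq_one_iff_adj.mp h1
      have hle : G.dist z t ≤ 2 := by
        simpa using SimpleGraph.dist_le (Walk.cons hadj (Walk.cons hLt Walk.nil))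
      omega
    have hd3 : G.dist z L ≠ 3 := by
      intro h3
      obtain ⟨S, w, j1, j2, j3⟩ := chain_of_dist3 h3
      have cS : c S ≠ c a0 := fun e => hc j1 (cz.trans e.symm)
      have hwt : w ≠ t := by
        intro e
        have hle : G.dist z t ≤ 2 := by
          exact SimpleGraph.dist_le (Walk.cons j1 (Walk.cons (e ▸ j2) Walk.nil))
        omega
      have hzw : z ≠ w := by
        intro e
        have h1 : G.dist z L = 1 := dist_eq_one_iff_adj.mpr (by rw [e]; exact j3)
        omega
      have hSL : S ≠ L := by
        intro e
        have h1 : G.dist z L = 1 := dist_eq_one_iff_adj.mpr (by rw [← e]; exact j1)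
        omega
      have hzt : z ≠ t := by
        intro e
        rw [← e, SimpleGraph.dist_self] at hdz
        omega
      have p1 := isPath4 j1 j2 j3 hLt hzw (nePL cz hcL) hzt hSL
        (Ne.symm (nePL hct cS)) hwt
      obtain ⟨-, -, e3'⟩ := eq4 hg hm j1 j2 j3 hLt k1 k2 k3 k4 p1 hpath
      exact hLne e3'
    have := hdiam z L
    rcases Nat.even_or_odd (G.dist z L) with he | ⟨k, hk⟩
    · exact absurd he hodd
    · omega
  have hF5 : F ≠ a5 := by
    intro e
    have hYa5 : Y ≠ a5 := by
      intro e2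
      have hle : G.dist z a4 ≤ 2 := by
        exact SimpleGraph.dist_le (Walk.cons (e2 ▸ hzY) (Walk.cons h45.symm Walk.nil))
      omega
    have he3a6 : e3 ≠ a6 := by
      intro e2
      have hle : G.dist z a6 ≤ 2 := by
        exact SimpleGraph.dist_le (Walk.cons hzY (Walk.cons (e2 ▸ hYe) Walk.nil))
      omega
    have p1 := isPath4 hzY hYe (e ▸ heF) h56 hze3 (nePL cz c50) hz6ne hYa5
      (Ne.symm (nePL ce6 cY)) he3a6
    obtain ⟨e1, -, -⟩ := eq4 hg hm hzY hYe (e ▸ heF) h56 hNz.symm hNx hxB hBa6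
      p1 pathZ6
    exact hYN e1
  have hBa7 : B ≠ a7 := by
    intro e
    have hNa7 : N ≠ a7 := by
      intro e2
      have hle : G.dist z a6 ≤ 2 := by
        exact SimpleGraph.dist_le (Walk.cons (e2 ▸ hNz.symm) (Walk.cons h67.symm Walk.nil))
      omega
    have hxa8 : x ≠ a8 := by
      intro e2
      have hle : G.dist q a8 ≤ 2 := by
        exact SimpleGraph.dist_le (Walk.cons hqN (Walk.cons (e2 ▸ hNx) Walk.nil))
      omega
    have p1 := isPath4 hNz.symm hNx (e ▸ hxB) h78 hzx (nePL cz c70) hz8ne hNa7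
      (Ne.symm (nePL ce8 cN)) hxa8
    obtain ⟨e1, -, -⟩ := eq4 hg hm hNz.symm hNx (e ▸ hxB) h78 hzY' hY'e heD hDa8
      p1 pathZ8
    exact hY'N e1.symm
  have hDa9 : D ≠ a9 := by
    intro e
    have hY'a9 : Y' ≠ a9 := by
      intro e2
      have hle : G.dist z a0 ≤ 2 := by
        exact SimpleGraph.dist_le (Walk.cons (e2 ▸ hzY') (Walk.cons h90 Walk.nil))
      omega
    have he5a0 : e5 ≠ a0 := by
      intro e2
      have hle : G.dist z a0 ≤ 2 := by
        exact SimpleGraph.dist_le (Walk.cons hzY' (Walk.cons (e2 ▸ hY'e) Walk.nil))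
      omega
    have p1 := isPath4 hzY' hY'e (e ▸ heD) h90 hze5 (nePL cz c90) hz0ne hY'a9
      (Ne.symm (nePL rfl cY')) he5a0
    obtain ⟨e1, -, -⟩ := eq4 hg hm hzY' hY'e (e ▸ heD) h90 hNz.symm hqN.symm hq.symm
      h01.symm p1 pathZ0
    exact hY'N e1
  have d_a3 : G.dist z a3 = 5 := dOdd a3 a2 N q a1 h23.symm hNz.symm hqN.symm hq.symm
    h12 pathZ2 ce2 c30 dz2 (Ne.symm n13)
  have d_a5 : G.dist z a5 = 5 := dOdd a5 a4 Y e3 F h45.symm hzY hYe heF hFa4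
    pathZ4 ce4 c50 dz4 (fun e => hF5 e.symm)
  have d_a7 : G.dist z a7 = 5 := dOdd a7 a6 N x B h67.symm hNz.symm hNx hxB hBa6
    pathZ6 ce6 c70 dz6 (fun e => hBa7 e.symm)
  have d_a9 : G.dist z a9 = 5 := dOdd a9 a8 Y' e5 D h89.symm hzY' hY'e heD hDa8
    pathZ8 ce8 c90 dz8 (fun e => hDa9 e.symm)
  have Bnd3 : Bnd G a3 := bnd_of_opp hconn ht hc hg hm hdiam BndZ d_a3
  have Bnd5 : Bnd G a5 := bnd_of_opp hconn ht hc hg hm hdiam BndZ d_a5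
  have Bnd7 : Bnd G a7 := bnd_of_opp hconn ht hc hg hm hdiam BndZ d_a7
  have Bnd9 : Bnd G a9 := bnd_of_opp hconn ht hc hg hm hdiam BndZ d_a9
  -- a third point on the line a5 is opposite a1 and a9
  obtain ⟨r, hr, hr4, hr6⟩ := pick ht a5 a4 a6
  have hcr : c r = c a0 := bool_eq_of_ne_ne (Ne.symm (hc hr)) (Ne.symm c50)
  have hr2ne : r ≠ a2 := by
    rintro rfl
    exact no13 hg (by omega) hr.symm h23 h34 h45 n24 n35
  have NoKr2 : ∀ K, G.Adj r K → G.Adj K a2 → False := fun K k1 k2 =>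
    no24 hg (by omega) k2.symm k1.symm h23 h34 h45 hr
      n24 (nePL ce2 c50) (Ne.symm hr2ne) n35
      (Ne.symm (nePL hcr c30)) (Ne.symm hr4)
  have dr2 : G.dist r a2 = 4 := mk4 r a2 hcr ce2 hr2ne NoKr2
  have hr8ne : r ≠ a8 := by
    rintro rfl
    exact no13 hg (by omega) hr h56 h67 h78 n57 n68
  have NoKr8 : ∀ K, G.Adj r K → G.Adj K a8 → False := fun K k1 k2 =>
    no24 hg (by omega) k2.symm k1.symm h78.symm h67.symm h56.symm hr
      (Ne.symm n68) (nePL ce8 c50) (Ne.symm hr8ne) (Ne.symm n57)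
      (Ne.symm (nePL hcr c70)) (Ne.symm hr6)
  have dr8 : G.dist r a8 = 4 := mk4 r a8 hcr ce8 hr8ne NoKr8
  have pathR2 : (Walk.cons hr.symm (Walk.cons h45.symm (Walk.cons h34.symm
      (Walk.cons h23.symm Walk.nil)))).IsPath :=
    isPath4 hr.symm h45.symm h34.symm h23.symm hr4 (nePL hcr c30) hr2ne
      (Ne.symm n35) (Ne.symm (nePL ce2 c50)) (Ne.symm n24)
  have pathR8 : (Walk.cons hr.symm (Walk.cons h56 (Walk.cons h67
      (Walk.cons h78 Walk.nil)))).IsPath :=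
    isPath4 hr.symm h56 h67 h78 hr6 (nePL hcr c70) hr8ne n57
      (Ne.symm (nePL ce8 c50)) n68
  have dr1 : G.dist r a1 = 5 := by
    have hodd : ¬ Even (G.dist r a1) := fun he =>
      c10 (((dist_even_iff hconn hc r a1).mpr he).symm.trans hcr)
    have hd1 : G.dist r a1 ≠ 1 := by
      intro h1
      have hadj := dist_eq_one_iff_adj.mp h1
      exact no24 hg (by omega) hadj.symm hr.symm h12 h23 h34 h45 n13
        (Ne.symm (nePL ce4 c10)) n15 n24 (nePL ce2 c50) n35
    have hd3 : G.dist r a1 ≠ 3 := by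
      intro h3
      obtain ⟨S, w, j1, j2, j3⟩ := chain_of_dist3 h3
      have cS : c S ≠ c a0 := fun e => hc j1 (hcr.trans e.symm)
      have hwa2 : w ≠ a2 := by
        intro e
        have hle : G.dist r a2 ≤ 2 := by
          exact SimpleGraph.dist_le (Walk.cons j1 (Walk.cons (e ▸ j2) Walk.nil))
        omega
      have hrw : r ≠ w := by
        intro e
        have h1 : G.dist r a1 = 1 := dist_eq_one_iff_adj.mpr (by rw [e]; exact j3)
        omega
      have hSa1 : S ≠ a1 := by
        intro e
        have h1 : G.dist r a1 = 1 := dist_eq_one_iff_adj.mpr (by rw [← e]; exact j1)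
        omega
      have p1 := isPath4 j1 j2 j3 h12 hrw (nePL hcr c10) hr2ne hSa1
        (Ne.symm (nePL ce2 cS)) hwa2
      obtain ⟨-, -, e3'⟩ := eq4 hg hm j1 j2 j3 h12 hr.symm h45.symm h34.symm h23.symm
        p1 pathR2
      exact n13 e3'
    have := hdiam r a1
    rcases Nat.even_or_odd (G.dist r a1) with he | ⟨k, hk⟩
    · exact absurd he hodd
    · omega
  have dr9 : G.dist r a9 = 5 := by
    have hodd : ¬ Even (G.dist r a9) := fun he =>
      c90 (((dist_even_iff hconn hc r a9).mpr he).symm.trans hcr)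
    have hd1 : G.dist r a9 ≠ 1 := by
      intro h1
      have hadj := dist_eq_one_iff_adj.mp h1
      exact no24 hg (by omega) hadj.symm hr.symm h89.symm h78.symm h67.symm h56.symm
        (Ne.symm n79) (Ne.symm (nePL ce6 c90)) (Ne.symm n59) (Ne.symm n68)
        (nePL ce8 c50) (Ne.symm n57)
    have hd3 : G.dist r a9 ≠ 3 := by
      intro h3
      obtain ⟨S, w, j1, j2, j3⟩ := chain_of_dist3 h3
      have cS : c S ≠ c a0 := fun e => hc j1 (hcr.trans e.symm)
      have hwa8 : w ≠ a8 := by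
        intro e
        have hle : G.dist r a8 ≤ 2 := by
          exact SimpleGraph.dist_le (Walk.cons j1 (Walk.cons (e ▸ j2) Walk.nil))
        omega
      have hrw : r ≠ w := by
        intro e
        have h1 : G.dist r a9 = 1 := dist_eq_one_iff_adj.mpr (by rw [e]; exact j3)
        omega
      have hSa9 : S ≠ a9 := by
        intro e
        have h1 : G.dist r a9 = 1 := dist_eq_one_iff_adj.mpr (by rw [← e]; exact j1)
        omega
      have p1 := isPath4 j1 j2 j3 h89.symm hrw (nePL hcr c90) hr8ne hSa9
        (Ne.symm (nePL ce8 cS)) hwa8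
      obtain ⟨-, -, e3'⟩ := eq4 hg hm j1 j2 j3 h89.symm hr.symm h56 h67 h78
        p1 pathR8
      exact n79 e3'.symm
    have := hdiam r a9
    rcases Nat.even_or_odd (G.dist r a9) with he | ⟨k, hk⟩
    · exact absurd he hodd
    · omega
  have Bnd_r : Bnd G r := bnd_of_opp hconn ht hc hg hm hdiam Bnd9
    (by rw [SimpleGraph.dist_comm]; exact dr9)
  have Bnd1 : Bnd G a1 := bnd_of_opp hconn ht hc hg hm hdiam Bnd_r dr1
  have covP : ∀ u : V, c u = c a0 → Bnd G u := by
    intro u hu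
    rcases coverage hconn hc hg hm hdiam h01 h12 h23 h34 h45 h56 h67 h78 h89 h90
      n02 n04 n06 n08 n24 n26 n28 n46 n48 n68 n13 n19 n35 n57 n79
      ce2 ce4 ce6 ce8 co3 co5 co7 co9 hu with h | h | h | h | h
    · exact bnd_of_opp hconn ht hc hg hm hdiam Bnd1 (by rw [SimpleGraph.dist_comm]; exact h)
    · exact bnd_of_opp hconn ht hc hg hm hdiam Bnd3 (by rw [SimpleGraph.dist_comm]; exact h)
    · exact bnd_of_opp hconn ht hc hg hm hdiam Bnd5 (by rw [SimpleGraph.dist_comm]; exact h)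
    · exact bnd_of_opp hconn ht hc hg hm hdiam Bnd7 (by rw [SimpleGraph.dist_comm]; exact h)
    · exact bnd_of_opp hconn ht hc hg hm hdiam Bnd9 (by rw [SimpleGraph.dist_comm]; exact h)
  have covL : ∀ M : V, c M ≠ c a0 → Bnd G M := by
    intro M hM
    have hcM : c M = c a1 := bool_eq_of_ne_ne hM c10
    rcases coverage hconn hc hg hm hdiam h12 h23 h34 h45 h56 h67 h78 h89 h90 h01
      n13 n15 n17 n19 n35 n37 n39 n57 n59 n79
      n24 (Ne.symm n02) n46 n68 (Ne.symm n08)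
      co3 co5 co7 co9 (ce4.trans ce2.symm) (ce6.trans ce2.symm) (ce8.trans ce2.symm)
      ce2.symm hcM with h | h | h | h | h
    · exact bnd_of_opp hconn ht hc hg hm hdiam (covP a2 ce2)
        (by rw [SimpleGraph.dist_comm]; exact h)
    · exact bnd_of_opp hconn ht hc hg hm hdiam (covP a4 ce4)
        (by rw [SimpleGraph.dist_comm]; exact h)
    · exact bnd_of_opp hconn ht hc hg hm hdiam (covP a6 ce6)
        (by rw [SimpleGraph.dist_comm]; exact h)
    · exact bnd_of_opp hconn ht hc hg hm hdiam (covP a8 ce8)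
        (by rw [SimpleGraph.dist_comm]; exact h)
    · exact bnd_of_opp hconn ht hc hg hm hdiam (covP a0 rfl)
        (by rw [SimpleGraph.dist_comm]; exact h)
  have allB : ∀ v : V, Bnd G v := by
    intro v
    by_cases h : c v = c a0
    · exact covP v h
    · exact covL v h
  haveI hfin : Finite V := finite_of_bnd hconn hdiam allB a0
  -- existence and uniqueness of "middles" between two points
  have exuniq : ∀ u v : V, c u = c a0 → c v = c a0 → u ≠ v →
      ∃ w : V, c w = c a0 ∧ w ≠ u ∧ w ≠ v ∧ G.dist u w = 2 ∧ G.dist w v = 2 ∧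
        ∀ w' : V, w' ≠ u → w' ≠ v → G.dist u w' = 2 → G.dist w' v = 2 → w' = w := by
    intro u v hcu hcv huv
    have hEv : Even (G.dist u v) := (dist_even_iff hconn hc u v).mp (hcu.trans hcv.symm)
    have h0 : G.dist u v ≠ 0 := fun h => huv (hconn.dist_eq_zero_iff.mp h)
    have hle := hdiam u v
    have h24 : G.dist u v = 2 ∨ G.dist u v = 4 := by rcases hEv with ⟨k, hk⟩; omega
    rcases h24 with h2 | h4
    · obtain ⟨K, k1, k2⟩ := mid_of_dist2 h2
      have cK : c K ≠ c a0 := fun e => hc k1 (hcu.trans e.symm)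
      obtain ⟨t, htK, htu, htv⟩ := pick ht K u v
      have hct : c t = c a0 := bool_eq_of_ne_ne (Ne.symm (hc htK)) (Ne.symm cK)
      have dut : G.dist u t = 2 := by
        have hEv' : Even (G.dist u t) := (dist_even_iff hconn hc u t).mp
          (hcu.trans hct.symm)
        have h0' : G.dist u t ≠ 0 := fun h => htu (hconn.dist_eq_zero_iff.mp h).symm
        have hle' : G.dist u t ≤ 2 := by
          simpa using SimpleGraph.dist_le (Walk.cons k1 (Walk.cons htK Walk.nil))
        rcases hEv' with ⟨k, hk⟩; omega
      have dtv : G.dist t v = 2 := by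
        have hEv' : Even (G.dist t v) := (dist_even_iff hconn hc t v).mp
          (hct.trans hcv.symm)
        have h0' : G.dist t v ≠ 0 := fun h => htv (hconn.dist_eq_zero_iff.mp h)
        have hle' : G.dist t v ≤ 2 := by
          simpa using SimpleGraph.dist_le (Walk.cons htK.symm (Walk.cons k2 Walk.nil))
        rcases hEv' with ⟨k, hk⟩; omega
      refine ⟨t, hct, htu, htv, dut, dtv, ?_⟩
      intro w' hwu hwv d1 d2
      obtain ⟨K1, m1, m2⟩ := mid_of_dist2 d1
      obtain ⟨K2, m3, m4⟩ := mid_of_dist2 d2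
      have cw' : c w' = c a0 :=
        (((dist_even_iff hconn hc u w').mpr (by rw [d1]; exact ⟨1, rfl⟩)).symm).trans hcu
      have cK1 : c K1 ≠ c a0 := fun e => hc m1 (hcu.trans e.symm)
      have cK2 : c K2 ≠ c a0 := fun e => hc m3 (cw'.trans e.symm)
      have hK12 : K1 = K2 := by
        by_contra hne
        exact no24 hg (by omega) k1 k2 m1 m2 m3 m4 (Ne.symm hwu) (nePL hcu cK2)
          huv hne (Ne.symm (nePL hcv cK1)) hwv
      have hK1K : K1 = K := CN hg (by omega) m1 (hK12.symm ▸ m4) k1 k2 huv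
      have hw'K : G.Adj K w' := hK1K ▸ m2
      obtain ⟨b1, b2, b3, hb⟩ := covL K cK
      have hmem := mem_of_three (hb u k1.symm) (hb v k2) (hb t htK)
        (hb w' hw'K) huv (Ne.symm htu) (Ne.symm htv)
      rcases hmem with e | e | e
      · exact absurd e hwu
      · exact absurd e hwv
      · exact e
    · obtain ⟨K, w, K', k1, k2, k3, k4⟩ := chain_of_dist4 h4
      have cK : c K ≠ c a0 := fun e => hc k1 (hcu.trans e.symm)
      have cw : c w = c a0 := bool_eq_of_ne_ne (Ne.symm (hc k2)) (Ne.symm cK)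
      have cK' : c K' ≠ c a0 := fun e => hc k3 (cw.trans e.symm)
      have hwu : w ≠ u := by
        intro e
        have hle' : G.dist u v ≤ 2 := by
          exact SimpleGraph.dist_le (Walk.cons (e ▸ k3) (Walk.cons k4 Walk.nil))
        omega
      have hwv : w ≠ v := by
        intro e
        have hle' : G.dist u v ≤ 2 := by
          exact SimpleGraph.dist_le (Walk.cons k1 (Walk.cons (e ▸ k2) Walk.nil))
        omega
      have hKK' : K ≠ K' := by
        intro e
        have hle' : G.dist u v ≤ 2 := by
          exact SimpleGraph.dist_le
            (Walk.cons k1 (Walk.cons (e.symm ▸ k4) Walk.nil))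
        omega
      have duw : G.dist u w = 2 := by
        have hEv' : Even (G.dist u w) := (dist_even_iff hconn hc u w).mp
          (hcu.trans cw.symm)
        have h0' : G.dist u w ≠ 0 := fun h => hwu (hconn.dist_eq_zero_iff.mp h).symm
        have hle' : G.dist u w ≤ 2 := by
          simpa using SimpleGraph.dist_le (Walk.cons k1 (Walk.cons k2 Walk.nil))
        rcases hEv' with ⟨k, hk⟩; omega
      have dwv : G.dist w v = 2 := by
        have hEv' : Even (G.dist w v) := (dist_even_iff hconn hc w v).mp
          (cw.trans hcv.symm)
        have h0' : G.dist w v ≠ 0 := fun h => hwv (hconn.dist_eq_zero_iff.mp h)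
        have hle' : G.dist w v ≤ 2 := by
          simpa using SimpleGraph.dist_le (Walk.cons k3 (Walk.cons k4 Walk.nil))
        rcases hEv' with ⟨k, hk⟩; omega
      have pathU := isPath4 k1 k2 k3 k4 (Ne.symm hwu) (nePL hcu cK') huv hKK'
        (Ne.symm (nePL hcv cK)) hwv
      refine ⟨w, cw, hwu, hwv, duw, dwv, ?_⟩
      intro w' hw'u hw'v d1 d2
      obtain ⟨K1, m1, m2⟩ := mid_of_dist2 d1
      obtain ⟨K2, m3, m4⟩ := mid_of_dist2 d2
      have cw' : c w' = c a0 :=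
        (((dist_even_iff hconn hc u w').mpr (by rw [d1]; exact ⟨1, rfl⟩)).symm).trans hcu
      have cK1 : c K1 ≠ c a0 := fun e => hc m1 (hcu.trans e.symm)
      have cK2 : c K2 ≠ c a0 := fun e => hc m3 (cw'.trans e.symm)
      have hK12 : K1 ≠ K2 := by
        intro e
        have hle' : G.dist u v ≤ 2 := by
          exact SimpleGraph.dist_le
            (Walk.cons m1 (Walk.cons (by rw [e]; exact m4) Walk.nil))
        omega
      have pathW := isPath4 m1 m2 m3 m4 (Ne.symm hw'u) (nePL hcu cK2) huv hK12
        (Ne.symm (nePL hcv cK1)) hw'v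
      obtain ⟨-, e2, -⟩ := eq4 hg hm m1 m2 m3 m4 k1 k2 k3 k4 pathW pathU
      exact e2
  letI : Fintype V := Fintype.ofFinite V
  let P := {x : V // c x = c a0}
  let H : SimpleGraph P := SimpleGraph.fromRel (fun u v => G.dist u.1 v.1 = 2)
  have hAdjH : ∀ u v : P, H.Adj u v ↔ u ≠ v ∧ G.dist u.1 v.1 = 2 := by
    intro u v
    constructor
    · rintro ⟨hne, h | h⟩
      · exact ⟨hne, h⟩
      · exact ⟨hne, by rwa [SimpleGraph.dist_comm]⟩
    · rintro ⟨hne, h⟩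
      exact ⟨hne, Or.inl h⟩
  have hF : Theorems100.Friendship H := by
    intro u v huv
    have huv' : u.1 ≠ v.1 := fun e => huv (Subtype.ext e)
    obtain ⟨w, hcw, hwu, hwv, d1, d2, huniq⟩ := exuniq u.1 v.1 u.2 v.2 huv'
    have key : ∀ (inst : Fintype ↥(H.commonNeighbors u v)), @Fintype.card _ inst = 1 ↔
        ∃ x : ↥(H.commonNeighbors u v), ∀ y, y = x := fun inst => @Fintype.card_eq_one_iff _ inst
    rw [key]
    refine ⟨⟨⟨w, hcw⟩, ?_⟩, ?_⟩
    · rw [SimpleGraph.mem_commonNeighbors]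
      constructor
      · exact (hAdjH u ⟨w, hcw⟩).mpr ⟨fun e => hwu (congrArg Subtype.val e).symm, d1⟩
      · exact (hAdjH v ⟨w, hcw⟩).mpr ⟨fun e => hwv (congrArg Subtype.val e).symm,
          by rw [SimpleGraph.dist_comm]; exact d2⟩
    · rintro ⟨y, hy⟩
      rw [SimpleGraph.mem_commonNeighbors] at hy
      obtain ⟨hy1, hy2⟩ := hy
      rw [hAdjH] at hy1 hy2
      have heq : y.1 = w := huniq y.1 (fun e => hy1.1 (Subtype.ext e.symm))
        (fun e => hy2.1 (Subtype.ext e.symm)) hy1.2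
        (by rw [SimpleGraph.dist_comm]; exact hy2.2)
      exact Subtype.ext (Subtype.ext heq)
  haveI : Nonempty P := ⟨⟨a0, rfl⟩⟩
  obtain ⟨p, hp⟩ := Theorems100.friendship_theorem hF
  have final : ∀ L t : V, G.Adj t L → c t = c a0 → G.dist p.1 L = 5 → False := by
    intro L t htL hct h5
    have hd1 : G.dist t L = 1 := dist_eq_one_iff_adj.mpr htL
    have htri : G.dist p.1 L ≤ G.dist p.1 t + G.dist t L := hconn.dist_triangle
    have hge : 4 ≤ G.dist p.1 t := by omega
    have hne : p ≠ (⟨t, hct⟩ : P) := by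
      intro e
      have hpt : p.1 = t := congrArg Subtype.val e
      rw [hpt] at h5
      omega
    have hadj := (hAdjH p ⟨t, hct⟩).mp (hp _ hne)
    have h2' : G.dist p.1 t = 2 := hadj.2
    omega
  rcases coverage hconn hc hg hm hdiam h01 h12 h23 h34 h45 h56 h67 h78 h89 h90
    n02 n04 n06 n08 n24 n26 n28 n46 n48 n68 n13 n19 n35 n57 n79
    ce2 ce4 ce6 ce8 co3 co5 co7 co9 p.2 with h | h | h | h | h
  · exact final a1 a0 h01 rfl h
  · exact final a3 a2 h23 ce2 h
  · exact final a5 a4 h45 ce4 h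
  · exact final a7 a6 h67 ce6 h
  · exact final a9 a8 h89 ce8 h

/-- Core of the `m = 3` case, for an abstract hexagon `a0 a1 a2 a3 a4 a5`. -/
lemma core3 (hconn : G.Connected) (ht : Thick G)
    (hc : ∀ ⦃x y : V⦄, G.Adj x y → c x ≠ c y)
    (hCN : ∀ {u v x y : V}, G.Adj u x → G.Adj x v → G.Adj u y → G.Adj y v → u ≠ v → x = y)
    (hdiam : ∀ u v : V, G.dist u v ≤ 3)
    {a0 a1 a2 a3 a4 a5 : V}
    (h01 : G.Adj a0 a1) (h12 : G.Adj a1 a2) (h23 : G.Adj a2 a3)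
    (h34 : G.Adj a3 a4) (h45 : G.Adj a4 a5) (h50 : G.Adj a5 a0)
    (h15 : a1 ≠ a5)
    (hc20 : c a2 = c a0) (hc40 : c a4 = c a0) (hc15 : c a1 = c a5) :
    ∃ M : V, G.dist M a0 = 3 ∧ G.dist M a2 = 3 ∧ G.dist M a4 = 3 := by
  obtain ⟨q, hq, hq0, hq2⟩ := pick ht a1 a0 a2
  obtain ⟨r, hr, hr4, hr0⟩ := pick ht a5 a4 a0
  have hcq : c q = c a0 := bool_eq_of_ne_ne (hc hq).symm (hc h01)
  have hra1 : c r ≠ c a1 := by rw [hc15]; exact (hc hr).symm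
  have hcr : c r = c a0 := bool_eq_of_ne_ne hra1 (hc h01)
  have hqr : q ≠ r := by
    rintro rfl
    exact hq0 (hCN hq hr.symm h01.symm h50.symm h15)
  have hEq : Even (G.dist q r) := (dist_even_iff hconn hc q r).mp (hcq.trans hcr.symm)
  have hne0 : G.dist q r ≠ 0 := fun h0 => hqr (hconn.dist_eq_zero_iff.mp h0)
  have h2 : G.dist q r = 2 := by
    have := hdiam q r
    rcases hEq with ⟨k, hk⟩
    omega
  obtain ⟨M, hqM, hMr⟩ := mid_of_dist2 h2
  have hMa1 : M ≠ a1 := by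
    rintro rfl
    exact hr0 (hCN hMr hr.symm h01.symm h50.symm h15)
  have hMa5 : M ≠ a5 := by
    rintro rfl
    exact hq0 (hCN hq hqM h01.symm h50.symm h15)
  have hcM : c M ≠ c a0 := by
    rw [← hcq]; exact (hc hqM).symm
  have key : ∀ t : V, c t = c a0 → ¬ G.Adj M t → G.dist M t = 3 := by
    intro t hct hadj
    have hodd : ¬ Even (G.dist M t) := by
      intro he
      exact hcM (((dist_even_iff hconn hc M t).mpr he).trans hct)
    have hne1 : G.dist M t ≠ 1 := fun h1 => hadj (dist_eq_one_iff_adj.mp h1)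
    have := hdiam M t
    rcases Nat.even_or_odd (G.dist M t) with he | ⟨k, hk⟩
    · exact absurd he hodd
    · omega
  refine ⟨M, ?_, ?_, ?_⟩
  · refine key a0 rfl ?_
    intro hadj
    exact hMa1 (hCN hadj.symm hqM.symm h01 hq (fun e => hq0 e.symm))
  · refine key a2 hc20 ?_
    intro hadj
    exact hMa1 (hCN hadj.symm hqM.symm h12.symm hq (fun e => hq2 e.symm))
  · refine key a4 hc40 ?_
    intro hadj
    exact hMa5 (hCN hadj.symm hMr h45 hr (fun e => hr4 e.symm))

/-- Core of the `m = 4` case, for an abstract octagon `a0 ... a7`. -/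
lemma core4 (hconn : G.Connected) (ht : Thick G)
    (hc : ∀ ⦃x y : V⦄, G.Adj x y → c x ≠ c y)
    (hm4 : m = 4) (hg : G.egirth = (2 * m : ℕ∞))
    (hdiam : ∀ u v : V, G.dist u v ≤ 4)
    {a0 a1 a2 a3 a4 a5 a6 a7 : V}
    (h01 : G.Adj a0 a1) (h12 : G.Adj a1 a2) (h23 : G.Adj a2 a3)
    (h34 : G.Adj a3 a4) (h45 : G.Adj a4 a5) (h56 : G.Adj a5 a6)
    (h67 : G.Adj a6 a7) (h70 : G.Adj a7 a0)
    (n06 : a0 ≠ a6) (n24 : a2 ≠ a4)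
    (n13 : a1 ≠ a3) (n15 : a1 ≠ a5) (n17 : a1 ≠ a7) (n35 : a3 ≠ a5)
    (n57 : a5 ≠ a7)
    (hce2 : c a2 = c a0) (hce4 : c a4 = c a0) (hce6 : c a6 = c a0)
    (hco3 : c a3 = c a1) (hco5 : c a5 = c a1) (hco7 : c a7 = c a1) :
    ∃ M : V, G.dist M a0 = 4 ∧ G.dist M a2 = 4 ∧ G.dist M a4 = 4 ∧ G.dist M a6 = 4 := by
  subst hm4
  have hCN : ∀ {u v x y : V}, G.Adj u x → G.Adj x v → G.Adj u y → G.Adj y v →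
      u ≠ v → x = y := fun hux hxv huy hyv huv =>
    CN hg (by omega) hux hxv huy hyv huv
  have ncol : ∀ {x y : V}, c x = c a0 → c y = c a1 → x ≠ y :=
    fun hx hy e => hc h01 (by rw [← hx, e, hy])
  obtain ⟨q, hq, hq0, hq2⟩ := pick ht a1 a0 a2
  have hcq : c q = c a0 := bool_eq_of_ne_ne (Ne.symm (hc hq)) (hc h01)
  have hqa4 : q ≠ a4 := by
    rintro rfl
    exact no13 hg (by omega) hq h12 h23 h34 n13 n24
  have NoK4 : ∀ K : V, G.Adj q K → G.Adj K a4 → False := by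
    intro K h1 h2
    exact no24 hg (by omega) h2.symm h1.symm h34.symm h23.symm h12.symm hq
      (Ne.symm n24) (ncol hce4 rfl) (Ne.symm hqa4) (Ne.symm n13)
      (Ne.symm (ncol hcq hco3)) (Ne.symm hq2)
  have hqa6 : q ≠ a6 := by
    rintro rfl
    exact no13 hg (by omega) hq.symm h67 h70 h01 (Ne.symm n06) (Ne.symm n17)
  have NoK6 : ∀ K : V, G.Adj q K → G.Adj K a6 → False := by
    intro K h1 h2
    exact no24 hg (by omega) h2.symm h1.symm h67 h70 h01 hq
      (Ne.symm n06) (ncol hce6 rfl) (Ne.symm hqa6) (Ne.symm n17)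
      (Ne.symm (ncol hcq hco7)) (Ne.symm hq0)
  have hqnota5 : ¬ G.Adj q a5 := by
    intro hadj
    exact no24 hg (by omega) hadj.symm hq.symm h56 h67 h70 h01
      n57 (Ne.symm (ncol rfl hco5)) (Ne.symm n15) (Ne.symm n06)
      (ncol hce6 rfl) (Ne.symm n17)
  have hcqa5 : c q ≠ c a5 := by rw [hcq, hco5]; exact hc h01
  have hd3 : G.dist q a5 = 3 := by
    have hodd : ¬ Even (G.dist q a5) := fun he =>
      hcqa5 ((dist_even_iff hconn hc q a5).mpr he)
    have h1 : G.dist q a5 ≠ 1 := fun h => hqnota5 (dist_eq_one_iff_adj.mp h)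
    have := hdiam q a5
    rcases Nat.even_or_odd (G.dist q a5) with he | ⟨k, hk⟩
    · exact absurd he hodd
    · omega
  obtain ⟨N, s, hqN, hNs, hsa5⟩ := chain_of_dist3 hd3
  have hNa1 : N ≠ a1 := by
    rintro rfl
    exact no24 hg (by omega) hNs hsa5 h12 h23 h34 h45 n13
      (Ne.symm (ncol hce4 rfl)) n15 n24 (ncol hce2 hco5) n35
  have hNa5 : N ≠ a5 := fun e => hqnota5 (e ▸ hqN)
  have hsa4 : s ≠ a4 := fun e => NoK4 N hqN (e ▸ hNs)
  have hsa6 : s ≠ a6 := fun e => NoK6 N hqN (e ▸ hNs)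
  have hcN : c N = c a1 :=
    bool_eq_of_ne_ne (by rw [← hcq]; exact Ne.symm (hc hqN)) (Ne.symm (hc h01))
  obtain ⟨z, hNz, hzq, hzs⟩ := pick ht N q s
  have hcz : c z = c a0 :=
    bool_eq_of_ne_ne (by rw [← hcN]; exact Ne.symm (hc hNz)) (hc h01)
  have finish : ∀ t : V, c t = c a0 → z ≠ t →
      (∀ K, G.Adj z K → G.Adj K t → False) → G.dist z t = 4 := by
    intro t hct hzt hK
    have hEv : Even (G.dist z t) := (dist_even_iff hconn hc z t).mp (hcz.trans hct.symm)
    have h0 : G.dist z t ≠ 0 := fun h => hzt (hconn.dist_eq_zero_iff.mp h)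
    have h2 : G.dist z t ≠ 2 := by
      intro h2
      obtain ⟨K, hK1, hK2⟩ := mid_of_dist2 h2
      exact hK K hK1 hK2
    have := hdiam z t
    rcases hEv with ⟨k, hk⟩
    omega
  have hz0 : z ≠ a0 := by
    rintro rfl
    exact hNa1 (hCN hNz.symm hqN.symm h01 hq (Ne.symm hq0))
  have hz2 : z ≠ a2 := by
    rintro rfl
    exact hNa1 (hCN hNz.symm hqN.symm h12.symm hq (Ne.symm hq2))
  have hz4 : z ≠ a4 := fun e => NoK4 N hqN (e ▸ hNz)
  have hz6 : z ≠ a6 := by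
    rintro rfl
    exact hNa5 (hCN hNz.symm hNs h56.symm hsa5.symm (Ne.symm hsa6))
  refine ⟨z, ?_, ?_, ?_, ?_⟩
  · refine finish a0 rfl hz0 ?_
    intro K hK1 hK2
    exact no24 hg (by omega) hK2.symm hK1.symm h01 hq hqN hNz
      (Ne.symm hq0) (ncol rfl hcN) (Ne.symm hz0) (Ne.symm hNa1)
      (Ne.symm (ncol hcz rfl)) (Ne.symm hzq)
  · refine finish a2 hce2 hz2 ?_
    intro K hK1 hK2
    exact no24 hg (by omega) hK2.symm hK1.symm h12.symm hq hqN hNz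
      (Ne.symm hq2) (ncol hce2 hcN) (Ne.symm hz2) (Ne.symm hNa1)
      (Ne.symm (ncol hcz rfl)) (Ne.symm hzq)
  · refine finish a4 hce4 hz4 ?_
    intro K hK1 hK2
    exact no24 hg (by omega) hK2.symm hK1.symm h45 hsa5.symm hNs.symm hNz
      (Ne.symm hsa4) (ncol hce4 hcN) (Ne.symm hz4) (Ne.symm hNa5)
      (Ne.symm (ncol hcz hco5)) (Ne.symm hzs)
  · refine finish a6 hce6 hz6 ?_
    intro K hK1 hK2
    exact no24 hg (by omega) hK2.symm hK1.symm h56.symm hsa5.symm hNs.symm hNz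
      (Ne.symm hsa6) (ncol hce6 hcN) (Ne.symm hz6) (Ne.symm hNa5)
      (Ne.symm (ncol hcz hco5)) (Ne.symm hzs)

end GenPolyAux

open GenPolyAux

/-- In a thick generalized `m`-gon with `m ∈ {3, 4, 5}`, for any apartment `A` and
each of the two types there is a vertex opposite to all vertices of `A` of that
type. -/
theorem exists_vertex_opposite_apartment
    (G : SimpleGraph V) (m : ℕ) (hm : m = 3 ∨ m = 4 ∨ m = 5)
    (hG : IsGenPolygon G m) (hthick : Thick G)
    (c : V → Bool) (hc : ∀ ⦃v w : V⦄, G.Adj v w → c v ≠ c w)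
    (A : G.Subgraph) (hA : IsApartment G m A) :
    ∀ b : Bool, ∃ v : V, ∀ x ∈ A.verts, c x = b → G.dist v x = m := by
  obtain ⟨hconn, -, hdiam, -, hgirth⟩ := hG
  obtain ⟨v, w, hcyc, hlen, rfl⟩ := hA
  intro b
  rcases hm with rfl | rfl | rfl
  · -- m = 3
    have hCN : ∀ {u v x y : V}, G.Adj u x → G.Adj x v → G.Adj u y → G.Adj y v →
        u ≠ v → x = y := fun hux hxv huy hyv huv =>
      CN hgirth (by omega) hux hxv huy hyv huv
    cases w with
    | nil => simp at hlen
    | @cons _ x1 _ h1 w =>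
    cases w with
    | nil => simp at hlen
    | @cons _ x2 _ h2 w =>
    cases w with
    | nil => simp at hlen
    | @cons _ x3 _ h3 w =>
    cases w with
    | nil => simp at hlen
    | @cons _ x4 _ h4 w =>
    cases w with
    | nil => simp at hlen
    | @cons _ x5 _ h5 w =>
    cases w with
    | nil => simp at hlen
    | @cons _ x6 _ h6 w =>
    cases w with
    | @cons _ x7 _ h7 w =>
      simp only [Walk.length_cons] at hlen; omega
    | nil =>
    -- cycle: v x1 x2 x3 x4 x5 (x6 = v)
    have hnd := hcyc.support_nodup
    simp only [Walk.support_cons, Walk.support_nil, List.tail_cons, List.nodup_cons,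
      List.mem_cons, List.mem_singleton, List.not_mem_nil, or_false, List.nodup_nil,
      and_true, not_or] at hnd
    obtain ⟨⟨h12', h13', h14', h15', h1v⟩, ⟨h23', h24', h25', h2v⟩,
      ⟨h34', h35', h3v⟩, ⟨h45', h4v⟩, h5v⟩ := hnd
    -- colors
    have e1 : c x1 ≠ c v := fun e => hc h1 e.symm
    have e2 : c x2 = c v := bool_eq_of_ne_ne (Ne.symm (hc h2)) (Ne.symm e1)
    have e3 : c x3 ≠ c v := fun e => hc h3 (e2.trans e.symm)
    have e4 : c x4 = c v := bool_eq_of_ne_ne (Ne.symm (hc h4)) (Ne.symm e3)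
    have e5 : c x5 ≠ c v := fun e => hc h5 (e4.trans e.symm)
    have e3e1 : c x3 = c x1 := bool_eq_of_ne_ne e3 e1
    have e5e1 : c x5 = c x1 := bool_eq_of_ne_ne e5 e1
    by_cases hbv : b = c v
    · obtain ⟨M, hM0, hM2, hM4⟩ := core3 (c := c) hconn hthick hc hCN
        hdiam h1 h2 h3 h4 h5 h6 h15' e2 e4
        (bool_eq_of_ne_ne e1 e5)
      refine ⟨M, ?_⟩
      intro x hx hcx
      rw [Walk.mem_verts_toSubgraph] at hx
      simp only [Walk.support_cons, Walk.support_nil, List.mem_cons,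
        List.not_mem_nil, or_false] at hx
      rcases hx with rfl | rfl | rfl | rfl | rfl | rfl | rfl
      · exact hM0
      · exact absurd (hcx.trans hbv) e1
      · exact hM2
      · exact absurd (hcx.trans hbv) e3
      · exact hM4
      · exact absurd (hcx.trans hbv) e5
      · exact hM0
    · obtain ⟨M, hM1, hM3, hM5⟩ := core3 (c := c) hconn hthick hc hCN
        hdiam h2 h3 h4 h5 h6 h1 h2v e3e1 e5e1 e2
      refine ⟨M, ?_⟩
      intro x hx hcx
      rw [Walk.mem_verts_toSubgraph] at hx
      simp only [Walk.support_cons, Walk.support_nil, List.mem_cons,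
        List.not_mem_nil, or_false] at hx
      rcases hx with rfl | rfl | rfl | rfl | rfl | rfl | rfl
      · exact absurd hcx.symm hbv
      · exact hM1
      · exact absurd (hcx.symm.trans e2) hbv
      · exact hM3
      · exact absurd (hcx.symm.trans e4) hbv
      · exact hM5
      · exact absurd hcx.symm hbv
  · -- m = 4
    cases w with
    | nil => simp at hlen
    | @cons _ x1 _ h1 w =>
    cases w with
    | nil => simp at hlen
    | @cons _ x2 _ h2 w =>
    cases w with
    | nil => simp at hlen
    | @cons _ x3 _ h3 w =>
    cases w with
    | nil => simp at hlen
    | @cons _ x4 _ h4 w =>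
    cases w with
    | nil => simp at hlen
    | @cons _ x5 _ h5 w =>
    cases w with
    | nil => simp at hlen
    | @cons _ x6 _ h6 w =>
    cases w with
    | nil => simp at hlen
    | @cons _ x7 _ h7 w =>
    cases w with
    | nil => simp at hlen
    | @cons _ x8 _ h8 w =>
    cases w with
    | @cons _ x9 _ h9 w =>
      simp only [Walk.length_cons] at hlen; omega
    | nil =>
    have hnd := hcyc.support_nodup
    simp only [Walk.support_cons, Walk.support_nil, List.tail_cons, List.nodup_cons,
      List.mem_cons, List.mem_singleton, List.not_mem_nil, or_false, List.nodup_nil,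
      and_true, not_or] at hnd
    obtain ⟨⟨h12', h13', h14', h15', h16', h17', h1v⟩,
      ⟨h23', h24', h25', h26', h27', h2v⟩, ⟨h34', h35', h36', h37', h3v⟩,
      ⟨h45', h46', h47', h4v⟩, ⟨h56', h57', h5v⟩, ⟨h67', h6v⟩, h7v⟩ := hnd
    have e1 : c x1 ≠ c v := fun e => hc h1 e.symm
    have e2 : c x2 = c v := bool_eq_of_ne_ne (Ne.symm (hc h2)) (Ne.symm e1)
    have e3 : c x3 ≠ c v := fun e => hc h3 (e2.trans e.symm)
    have e4 : c x4 = c v := bool_eq_of_ne_ne (Ne.symm (hc h4)) (Ne.symm e3)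
    have e5 : c x5 ≠ c v := fun e => hc h5 (e4.trans e.symm)
    have e6 : c x6 = c v := bool_eq_of_ne_ne (Ne.symm (hc h6)) (Ne.symm e5)
    have e7 : c x7 ≠ c v := fun e => hc h7 (e6.trans e.symm)
    have e3e1 : c x3 = c x1 := bool_eq_of_ne_ne e3 e1
    have e5e1 : c x5 = c x1 := bool_eq_of_ne_ne e5 e1
    have e7e1 : c x7 = c x1 := bool_eq_of_ne_ne e7 e1
    by_cases hbv : b = c v
    · obtain ⟨M, hM0, hM2, hM4, hM6⟩ := core4 (c := c) hconn hthick hc rfl hgirth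
        hdiam h1 h2 h3 h4 h5 h6 h7 h8 (Ne.symm h6v) h24' h13' h15' h17' h35' h57'
        e2 e4 e6 e3e1 e5e1 e7e1
      refine ⟨M, ?_⟩
      intro x hx hcx
      rw [Walk.mem_verts_toSubgraph] at hx
      simp only [Walk.support_cons, Walk.support_nil, List.mem_cons,
        List.not_mem_nil, or_false] at hx
      rcases hx with rfl | rfl | rfl | rfl | rfl | rfl | rfl | rfl | rfl
      · exact hM0
      · exact absurd (hcx.trans hbv) e1
      · exact hM2
      · exact absurd (hcx.trans hbv) e3
      · exact hM4
      · exact absurd (hcx.trans hbv) e5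
      · exact hM6
      · exact absurd (hcx.trans hbv) e7
      · exact hM0
    · obtain ⟨M, hM1, hM3, hM5, hM7⟩ := core4 (c := c) hconn hthick hc rfl hgirth
        hdiam h2 h3 h4 h5 h6 h7 h8 h1 h17' h35' h24' h26' h2v h46' h6v
        e3e1 e5e1 e7e1 (e4.trans e2.symm) (e6.trans e2.symm) e2.symm
      refine ⟨M, ?_⟩
      intro x hx hcx
      rw [Walk.mem_verts_toSubgraph] at hx
      simp only [Walk.support_cons, Walk.support_nil, List.mem_cons,
        List.not_mem_nil, or_false] at hx
      rcases hx with rfl | rfl | rfl | rfl | rfl | rfl | rfl | rfl | rfl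
      · exact absurd hcx.symm hbv
      · exact hM1
      · exact absurd (hcx.symm.trans e2) hbv
      · exact hM3
      · exact absurd (hcx.symm.trans e4) hbv
      · exact hM5
      · exact absurd (hcx.symm.trans e6) hbv
      · exact hM7
      · exact absurd hcx.symm hbv
  · -- m = 5
    cases w with
    | nil => simp at hlen
    | @cons _ x1 _ h1 w =>
    cases w with
    | nil => simp at hlen
    | @cons _ x2 _ h2 w =>
    cases w with
    | nil => simp at hlen
    | @cons _ x3 _ h3 w =>
    cases w with
    | nil => simp at hlen
    | @cons _ x4 _ h4 w =>
    cases w with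
    | nil => simp at hlen
    | @cons _ x5 _ h5 w =>
    cases w with
    | nil => simp at hlen
    | @cons _ x6 _ h6 w =>
    cases w with
    | nil => simp at hlen
    | @cons _ x7 _ h7 w =>
    cases w with
    | nil => simp at hlen
    | @cons _ x8 _ h8 w =>
    cases w with
    | nil => simp at hlen
    | @cons _ x9 _ h9 w =>
    cases w with
    | nil => simp at hlen
    | @cons _ x10 _ h10 w =>
    cases w with
    | @cons _ x11 _ h11 w =>
      simp only [Walk.length_cons] at hlen; omega
    | nil =>
    have hnd := hcyc.support_nodup
    simp only [Walk.support_cons, Walk.support_nil, List.tail_cons, List.nodup_cons,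
      List.mem_cons, List.mem_singleton, List.not_mem_nil, or_false, List.nodup_nil,
      and_true, not_or] at hnd
    obtain ⟨⟨h12', h13', h14', h15', h16', h17', h18', h19', h1v⟩,
      ⟨h23', h24', h25', h26', h27', h28', h29', h2v⟩,
      ⟨h34', h35', h36', h37', h38', h39', h3v⟩,
      ⟨h45', h46', h47', h48', h49', h4v⟩, ⟨h56', h57', h58', h59', h5v⟩,
      ⟨h67', h68', h69', h6v⟩, ⟨h78', h79', h7v⟩, ⟨h89', h8v⟩, h9v⟩ := hnd
    have e1 : c x1 ≠ c v := fun e => hc h1 e.symm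
    have e2 : c x2 = c v := bool_eq_of_ne_ne (Ne.symm (hc h2)) (Ne.symm e1)
    have e3 : c x3 ≠ c v := fun e => hc h3 (e2.trans e.symm)
    have e4 : c x4 = c v := bool_eq_of_ne_ne (Ne.symm (hc h4)) (Ne.symm e3)
    have e5 : c x5 ≠ c v := fun e => hc h5 (e4.trans e.symm)
    have e6 : c x6 = c v := bool_eq_of_ne_ne (Ne.symm (hc h6)) (Ne.symm e5)
    have e7 : c x7 ≠ c v := fun e => hc h7 (e6.trans e.symm)
    have e8 : c x8 = c v := bool_eq_of_ne_ne (Ne.symm (hc h8)) (Ne.symm e7)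
    have e9 : c x9 ≠ c v := fun e => hc h9 (e8.trans e.symm)
    have e3e1 : c x3 = c x1 := bool_eq_of_ne_ne e3 e1
    have e5e1 : c x5 = c x1 := bool_eq_of_ne_ne e5 e1
    have e7e1 : c x7 = c x1 := bool_eq_of_ne_ne e7 e1
    have e9e1 : c x9 = c x1 := bool_eq_of_ne_ne e9 e1
    by_cases hbv : b = c v
    · by_contra hcon
      push_neg at hcon
      refine core5 (c := c) hconn hthick hc hgirth (by omega) hdiam
        h1 h2 h3 h4 h5 h6 h7 h8 h9 h10
        (Ne.symm h2v) (Ne.symm h4v) (Ne.symm h6v) (Ne.symm h8v)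
        h24' h26' h28' h46' h48' h68'
        h13' h15' h17' h19' h35' h37' h39' h57' h59' h79'
        e2 e4 e6 e8 e3e1 e5e1 e7e1 e9e1 ?_
      rintro M ⟨d0, d2, d4, d6, d8⟩
      obtain ⟨x, hx, hcx, hdx⟩ := hcon M
      rw [Walk.mem_verts_toSubgraph] at hx
      simp only [Walk.support_cons, Walk.support_nil, List.mem_cons,
        List.not_mem_nil, or_false] at hx
      rcases hx with rfl | rfl | rfl | rfl | rfl | rfl | rfl | rfl | rfl | rfl | rfl
      · exact hdx d0
      · exact e1 (hcx.trans hbv)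
      · exact hdx d2
      · exact e3 (hcx.trans hbv)
      · exact hdx d4
      · exact e5 (hcx.trans hbv)
      · exact hdx d6
      · exact e7 (hcx.trans hbv)
      · exact hdx d8
      · exact e9 (hcx.trans hbv)
      · exact hdx d0
    · by_contra hcon
      push_neg at hcon
      refine core5 (c := c) hconn hthick hc hgirth (by omega) hdiam
        h2 h3 h4 h5 h6 h7 h8 h9 h10 h1
        h13' h15' h17' h19' h35' h37' h39' h57' h59' h79'
        h24' h26' h28' h2v h46' h48' h4v h68' h6v h8v
        e3e1 e5e1 e7e1 e9e1 (e4.trans e2.symm) (e6.trans e2.symm) (e8.trans e2.symm)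
        e2.symm ?_
      rintro M ⟨d1, d3, d5, d7, d9⟩
      obtain ⟨x, hx, hcx, hdx⟩ := hcon M
      rw [Walk.mem_verts_toSubgraph] at hx
      simp only [Walk.support_cons, Walk.support_nil, List.mem_cons,
        List.not_mem_nil, or_false] at hx
      rcases hx with rfl | rfl | rfl | rfl | rfl | rfl | rfl | rfl | rfl | rfl | rfl
      · exact absurd hcx.symm hbv
      · exact hdx d1
      · exact absurd (hcx.symm.trans e2) hbv
      · exact hdx d3
      · exact absurd (hcx.symm.trans e4) hbv
      · exact hdx d5
      · exact absurd (hcx.symm.trans e6) hbv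
      · exact hdx d7
      · exact absurd (hcx.symm.trans e8) hbv
      · exact hdx d9
      · exact absurd hcx.symm hbv
end

section
/- Let m ≥ 2 and let L be a thick generalized m-gon. Then for any two vertices v₁ and v₂ of L of the same type (not necessarily distinct), there exists a vertex v of L that is opposite to both v₁ and v₂. -/
open SimpleGraph

variable {V : Type*}

section AuxLemmas
variable {G : SimpleGraph V}

private lemma dist_le_of_mem_support {u v x : V} (p : G.Walk u v) (hx : x ∈ p.support) :
    G.dist u x ≤ p.length := by
  classical
  exact le_trans (dist_le (p.takeUntil x hx)) (p.length_takeUntil_le hx)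

private lemma edge_head_of_path {u v x : V} (p : G.Walk u v) (hp : p.IsPath)
    (hx : s(x, u) ∈ p.edges) : p.getVert 1 = x := by
  cases p with
  | nil => simp at hx
  | cons h q =>
    rw [SimpleGraph.Walk.edges_cons, List.mem_cons] at hx
    rcases hx with hx | hx
    · rw [Sym2.eq_iff] at hx
      rcases hx with ⟨h1, h2⟩ | ⟨h1, h2⟩
      · exact absurd h2 h.ne
      · rw [Walk.getVert_cons_succ, Walk.getVert_zero]; exact h1.symm
    · exact absurd (Walk.snd_mem_support_of_mem_edges q hx)
        ((Walk.cons_isPath_iff _ _).mp hp).2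

private lemma two_paths_cycle : ∀ (n : ℕ) {u v : V} (p q : G.Walk u v),
    2 * p.length + q.length ≤ n → p.IsPath → q.IsPath → p ≠ q →
    ∃ (x : V) (w : G.Walk x x), w.IsCycle ∧ w.length ≤ p.length + q.length := by
  classical
  intro n
  induction n with
  | zero =>
    intro u v p q hlen hp hq hne
    cases p with
    | nil => exact absurd ((Walk.isPath_iff_eq_nil (p := q)).mp hq).symm hne
    | cons h p' => simp at hlen
  | succ n ih =>
    intro u v p q hlen hp hq hne
    cases p with
    | nil => exact absurd ((Walk.isPath_iff_eq_nil (p := q)).mp hq).symm hne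
    | @cons _ a _ h p' =>
      cases q with
      | nil =>
        have := Walk.isPath_iff_eq_nil.mp hp
        simp at this
      | @cons _ b _ h' q' =>
        by_cases hab : a = b
        · subst hab
          by_cases hpq : p' = q'
          · subst hpq; exact absurd rfl hne
          · obtain ⟨x, w, hw, hwl⟩ := ih p' q'
              (by simp only [Walk.length_cons] at hlen; omega)
              hp.of_cons hq.of_cons hpq
            exact ⟨x, w, hw, by simp only [Walk.length_cons]; omega⟩
        · by_cases hmem : a ∈ (Walk.cons h' q').support
          · refine ⟨a, Walk.cons h.symm ((Walk.cons h' q').takeUntil a hmem), ?_, ?_⟩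
            · rw [Walk.cons_isCycle_iff]
              refine ⟨hq.takeUntil hmem, fun he => ?_⟩
              have he' : s(a, u) ∈ (Walk.cons h' q').edges :=
                Walk.edges_takeUntil_subset _ hmem he
              have := edge_head_of_path _ hq he'
              rw [Walk.getVert_cons_succ, Walk.getVert_zero] at this
              exact hab this.symm
            · have := Walk.length_takeUntil_le (Walk.cons h' q') hmem
              simp only [Walk.length_cons] at this ⊢
              omega
          · have hQpath : (Walk.cons (G.adj_symm h) (Walk.cons h' q')).IsPath :=
              hq.cons hmem
            have hne' : p' ≠ Walk.cons (G.adj_symm h) (Walk.cons h' q') := by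
              intro hcontra
              have hu : u ∈ p'.support := by rw [hcontra]; simp
              exact ((Walk.cons_isPath_iff _ _).mp hp).2 hu
            obtain ⟨x, w, hw, hwl⟩ := ih p' (Walk.cons (G.adj_symm h) (Walk.cons h' q'))
              (by simp only [Walk.length_cons] at hlen ⊢; omega)
              hp.of_cons hQpath hne'
            refine ⟨x, w, hw, ?_⟩
            simp only [Walk.length_cons] at hwl ⊢
            omega

private lemma color_parity (c : V → Bool) (hc : ∀ ⦃v w : V⦄, G.Adj v w → c v ≠ c w) :
    ∀ {u v : V} (p : G.Walk u v), (c u = c v ↔ Even p.length) := by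
  have key : ∀ a b d : Bool, a ≠ b → ((a = d) ↔ ¬(b = d)) := by decide
  intro u v p
  induction p with
  | nil => simp
  | cons h q ih =>
    rw [Walk.length_cons, Nat.even_add_one]
    exact (key _ _ _ (hc h)).trans (not_congr ih)

private lemma adj_dist (hconn : G.Connected) (c : V → Bool)
    (hc : ∀ ⦃v w : V⦄, G.Adj v w → c v ≠ c w) (u : V) {z y : V} (h : G.Adj z y) :
    G.dist u y = G.dist u z + 1 ∨ G.dist u y + 1 = G.dist u z := by
  have hzy : G.dist z y = 1 := dist_eq_one_iff_adj.mpr h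
  have hyz : G.dist y z = 1 := by rw [dist_comm]; exact hzy
  have h1 : G.dist u y ≤ G.dist u z + 1 := by
    have := hconn.dist_triangle (u := u) (v := z) (w := y); omega
  have h2 : G.dist u z ≤ G.dist u y + 1 := by
    have := hconn.dist_triangle (u := u) (v := y) (w := z); omega
  have hne : G.dist u y ≠ G.dist u z := by
    intro hEq
    obtain ⟨p, hp, hpl⟩ := hconn.exists_path_of_dist u z
    obtain ⟨q, hq, hql⟩ := hconn.exists_path_of_dist u y
    have e1 := color_parity c hc p
    have e2 := color_parity c hc q
    rw [hpl] at e1; rw [hql, hEq] at e2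
    have key2 : ∀ a b d : Bool, ((a = b) ↔ (a = d)) → b = d := by decide
    exact hc h (key2 _ _ _ (e1.trans e2.symm))
  omega

private lemma no_two_preds (hconn : G.Connected) {m : ℕ}
    (hgirth : G.egirth = (2 * m : ℕ∞)) {u z a b : V}
    (ha : G.Adj z a) (hb : G.Adj z b) (hab : a ≠ b)
    (hda : G.dist u a + 1 = G.dist u z) (hdb : G.dist u b + 1 = G.dist u z)
    (hlt : G.dist u z < m) : False := by
  obtain ⟨pa, hpa, hpal⟩ := hconn.exists_path_of_dist u a
  obtain ⟨pb, hpb, hpbl⟩ := hconn.exists_path_of_dist u b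
  have hzPa : z ∉ pa.support := by
    intro hz
    have := dist_le_of_mem_support pa hz
    omega
  have hzPb : z ∉ pb.support := by
    intro hz
    have := dist_le_of_mem_support pb hz
    omega
  have hPpath : (pa.concat ha.symm).IsPath := by
    rw [← Walk.isPath_reverse_iff, Walk.reverse_concat]
    exact hpa.reverse.cons (by simpa using hzPa)
  have hQpath : (pb.concat hb.symm).IsPath := by
    rw [← Walk.isPath_reverse_iff, Walk.reverse_concat]
    exact hpb.reverse.cons (by simpa using hzPb)
  have hPQ : pa.concat ha.symm ≠ pb.concat hb.symm := by
    intro hEq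
    have hgv : (pa.concat ha.symm).reverse.getVert 1
        = (pb.concat hb.symm).reverse.getVert 1 := by rw [hEq]
    rw [Walk.reverse_concat, Walk.reverse_concat, Walk.getVert_cons_succ, Walk.getVert_zero,
      Walk.getVert_cons_succ, Walk.getVert_zero] at hgv
    exact hab hgv
  obtain ⟨x, w, hw, hwl⟩ := two_paths_cycle
    (2 * (pa.concat ha.symm).length + (pb.concat hb.symm).length)
    (pa.concat ha.symm) (pb.concat hb.symm) le_rfl hPpath hQpath hPQ
  have hlb : (2 * m : ℕ∞) ≤ (w.length : ℕ∞) :=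
    le_egirth.mp (le_of_eq hgirth.symm) x w hw
  have hlb' : 2 * m ≤ w.length := by exact_mod_cast hlb
  rw [Walk.length_concat, Walk.length_concat] at hwl
  omega

private lemma exists_mid (hconn : G.Connected) :
    ∀ {u v : V} (p : G.Walk u v) (k : ℕ),
      ∃ x : V, G.dist u x ≤ k ∧ G.dist x v ≤ p.length - k := by
  intro u v p
  induction p with
  | nil =>
    rename_i s
    intro k; exact ⟨s, by rw [SimpleGraph.dist_self]; exact Nat.zero_le k, by rw [SimpleGraph.dist_self]; exact Nat.zero_le _⟩
  | @cons s b t h q ih =>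
    intro k
    cases k with
    | zero =>
      refine ⟨s, by simp, ?_⟩
      simpa using dist_le (Walk.cons h q)
    | succ k =>
      obtain ⟨x, h1, h2⟩ := ih k
      refine ⟨x, ?_, by simpa using h2⟩
      have hub : G.dist s b = 1 := dist_eq_one_iff_adj.mpr h
      have := hconn.dist_triangle (u := s) (v := b) (w := x)
      omega

end AuxLemmas

section Aux
variable {G : SimpleGraph V}

private lemma step_up (hconn : G.Connected) {m : ℕ} (hgirth : G.egirth = (2 * m : ℕ∞))
    (hthick : Thick G) (c : V → Bool) (hc : ∀ ⦃v w : V⦄, G.Adj v w → c v ≠ c w)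
    {v₁ v₂ z : V} {t : ℕ} (h1 : G.dist v₁ z = t) (h2 : G.dist v₂ z = t) (ht : t < m) :
    ∃ z' : V, G.dist v₁ z' = t + 1 ∧ G.dist v₂ z' = t + 1 := by
  obtain ⟨a, b, d, hza, hzb, hzd, hab, had, hbd⟩ := hthick z
  have choice : ∀ y : V, G.Adj z y →
      (G.dist v₁ y + 1 = G.dist v₁ z ∨ G.dist v₂ y + 1 = G.dist v₂ z) ∨
      (G.dist v₁ y = t + 1 ∧ G.dist v₂ y = t + 1) := by
    intro y hy
    rcases adj_dist hconn c hc v₁ hy with k1 | k1 <;>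
      rcases adj_dist hconn c hc v₂ hy with k2 | k2
    · right; omega
    · left; right; omega
    · left; left; omega
    · left; left; omega
  rcases choice a hza with ha | hoka
  · rcases choice b hzb with hb | hokb
    · rcases choice d hzd with hd | hokd
      · exfalso
        rcases ha with ha | ha <;> rcases hb with hb | hb <;> rcases hd with hd | hd
        · exact no_two_preds hconn hgirth hza hzb hab ha hb (by omega)
        · exact no_two_preds hconn hgirth hza hzb hab ha hb (by omega)
        · exact no_two_preds hconn hgirth hza hzd had ha hd (by omega)
        · exact no_two_preds hconn hgirth hzb hzd hbd hb hd (by omega)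
        · exact no_two_preds hconn hgirth hzb hzd hbd hb hd (by omega)
        · exact no_two_preds hconn hgirth hza hzd had ha hd (by omega)
        · exact no_two_preds hconn hgirth hza hzb hab ha hb (by omega)
        · exact no_two_preds hconn hgirth hza hzb hab ha hb (by omega)
      · exact ⟨d, hokd.1, hokd.2⟩
    · exact ⟨b, hokb.1, hokb.2⟩
  · exact ⟨a, hoka.1, hoka.2⟩

end Aux

/-- In a thick generalized `m`-gon, any two vertices of the same type have a common
opposite vertex. -/
theorem exists_common_opposite
    (G : SimpleGraph V) (m : ℕ) (hm : 2 ≤ m)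
    (hG : IsGenPolygon G m) (hthick : Thick G)
    (c : V → Bool) (hc : ∀ ⦃v w : V⦄, G.Adj v w → c v ≠ c w)
    (v₁ v₂ : V) (hsame : c v₁ = c v₂) :
    ∃ v : V, G.dist v v₁ = m ∧ G.dist v v₂ = m := by
  obtain ⟨hconn, -, hdiam, -, hgirth⟩ := hG
  obtain ⟨p, hp, hpl⟩ := hconn.exists_path_of_dist v₁ v₂
  have heven : Even (G.dist v₁ v₂) := by
    rw [← hpl]; exact (color_parity c hc p).mp hsame
  obtain ⟨j, hj⟩ := heven
  obtain ⟨x, hx1, hx2⟩ := exists_mid hconn p j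
  rw [hpl] at hx2
  have htri := hconn.dist_triangle (u := v₁) (v := x) (w := v₂)
  have hx1' : G.dist v₁ x = j := by omega
  have hx2' : G.dist v₂ x = j := by rw [dist_comm]; omega
  have hjm : j ≤ m := le_trans (by omega) (hdiam v₁ v₂)
  have climb : ∀ t, j ≤ t → t ≤ m → ∃ z, G.dist v₁ z = t ∧ G.dist v₂ z = t := by
    intro t hjt
    induction t, hjt using Nat.le_induction with
    | base => intro _; exact ⟨x, hx1', hx2'⟩
    | succ t ht ih =>
      intro htm
      obtain ⟨z, hz1, hz2⟩ := ih (by omega)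
      exact step_up hconn hgirth hthick c hc hz1 hz2 (by omega)
  obtain ⟨z, hz1, hz2⟩ := climb m hjm le_rfl
  exact ⟨z, by rw [dist_comm]; exact hz1, by rw [dist_comm]; exact hz2⟩
end

section
/- Let m ≥ 2 and let L be a thick generalized m-gon. Then any two edges of L are contained in a common apartment; that is, for any edges e and e' of L there is a cycle of length 2m in L containing both e and e'. -/
open SimpleGraph

variable {V : Type*}

namespace GenPolygonAux

variable {G : SimpleGraph V} {m : ℕ}


lemma color_parity {col : V → Bool} (hcol : ∀ ⦃v w : V⦄, G.Adj v w → col v ≠ col w)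
    {x y : V} (p : G.Walk x y) : (col x = col y ↔ Even p.length) := by
  induction p with
  | nil => simp
  | @cons a b c h q ih =>
    have hne := hcol h
    rw [Walk.length_cons, Nat.even_add_one, ← ih]
    cases hb : col b <;> cases ha : col a <;> cases hc : col c <;> simp_all

lemma adj_dist (hconn : G.Connected) {col : V → Bool}
    (hcol : ∀ ⦃v w : V⦄, G.Adj v w → col v ≠ col w)
    {x a b : V} (hab : G.Adj a b) :
    G.dist x b = G.dist x a + 1 ∨ G.dist x a = G.dist x b + 1 := by
  obtain ⟨p, hp⟩ := hconn.exists_walk_length_eq_dist x a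
  obtain ⟨q, hq⟩ := hconn.exists_walk_length_eq_dist x b
  have h1 : G.dist x b ≤ G.dist x a + 1 := by
    have := SimpleGraph.dist_le (p.concat hab)
    rwa [Walk.length_concat, hp] at this
  have h2 : G.dist x a ≤ G.dist x b + 1 := by
    have := SimpleGraph.dist_le (q.concat hab.symm)
    rwa [Walk.length_concat, hq] at this
  have h3 : G.dist x a ≠ G.dist x b := by
    intro hEq
    have e1 := color_parity hcol p
    have e2 := color_parity hcol q
    rw [hp] at e1
    rw [hq, ← hEq] at e2
    have : col a = col b := by
      have h4 := e1.trans e2.symm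
      revert h4
      cases hx : col x <;> cases ha' : col a <;> cases hb' : col b <;> simp_all
    exact hcol hab this
  omega

lemma geo_mem_dist (hconn : G.Connected) {x y a : V} (p : G.Walk x y)
    (hp : p.length = G.dist x y) (ha : a ∈ p.support) :
    G.dist x a + G.dist a y = G.dist x y ∧ G.dist x a ≤ p.length := by
  classical
  have hsplit := p.take_spec ha
  have hlen : (p.takeUntil a ha).length + (p.dropUntil a ha).length = p.length := by
    rw [← Walk.length_append, hsplit]
  have h1 : G.dist x a ≤ (p.takeUntil a ha).length := SimpleGraph.dist_le _
  have h2 : G.dist a y ≤ (p.dropUntil a ha).length := SimpleGraph.dist_le _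
  have h3 : G.dist x y ≤ G.dist x a + G.dist a y := hconn.dist_triangle
  omega

lemma cycle_ge (hgirth : G.egirth = (2 * m : ℕ∞)) {z : V} (c : G.Walk z z)
    (hc : c.IsCycle) : 2 * m ≤ c.length := by
  have := le_egirth.mp (le_of_eq hgirth.symm) z c hc
  exact_mod_cast this

lemma no_end_edge {x y : V} (p : G.Walk x y) (hp : p.IsPath) (hlen : 2 ≤ p.length) :
    s(x, y) ∉ p.edges := by
  cases p with
  | nil => simp
  | @cons _ b _ h q =>
    intro hmem
    rw [Walk.edges_cons, List.mem_cons] at hmem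
    rcases hmem with heq | hmem
    · rw [Sym2.eq_iff] at heq
      rcases heq with ⟨-, rfl⟩ | ⟨hxb, -⟩
      · have hq : q.IsPath := hp.of_cons
        have := Walk.isPath_iff_eq_nil.mp hq
        subst this
        simp at hlen
      · exact G.ne_of_adj h hxb
    · exact ((Walk.cons_isPath_iff _ _).mp hp).2 (Walk.fst_mem_support_of_mem_edges q hmem)

lemma end_edge_eq {x y : V} (p : G.Walk x y) :
    p.IsPath → ∀ a b, s(a, y) ∈ p.edges → s(b, y) ∈ p.edges → a = b := by
  induction p with
  | nil => simp
  | @cons x w y h q ih =>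
    intro hp a b ha hb
    rw [Walk.edges_cons, List.mem_cons] at ha hb
    have hq : q.IsPath := hp.of_cons
    have hxs : x ∉ q.support := ((Walk.cons_isPath_iff _ _).mp hp).2
    have hxy : x ≠ y := fun hEq => hxs (hEq ▸ q.end_mem_support)
    have key : ∀ c, s(c, y) = s(x, w) → c = x ∧ w = y := by
      intro c hc
      rw [Sym2.eq_iff] at hc
      rcases hc with ⟨rfl, rfl⟩ | ⟨rfl, hyx⟩
      · exact ⟨rfl, rfl⟩
      · exact absurd hyx.symm hxy
    rcases ha with ha | ha <;> rcases hb with hb | hb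
    · exact ((key a ha).1).trans ((key b hb).1).symm
    · obtain ⟨-, rfl⟩ := key a ha
      have := Walk.isPath_iff_eq_nil.mp hq
      subst this
      simp at hb
    · obtain ⟨-, rfl⟩ := key b hb
      have := Walk.isPath_iff_eq_nil.mp hq
      subst this
      simp at ha
    · exact ih hq a b ha hb



lemma not_mem_support_of_end
    (hcyc : ∀ {z : V} (c : G.Walk z z), c.IsCycle → 2 * m ≤ c.length)
    {x y z : V} (p : G.Walk x y) (hp : p.IsPath) (hlen : p.length + 1 < 2 * m)
    (hz : G.Adj y z) (he : s(y, z) ∉ p.edges) : z ∉ p.support := by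
  classical
  intro hmem
  set q := p.dropUntil z hmem with hqdef
  have hq : q.IsPath := hp.dropUntil hmem
  have hqe : q.edges ⊆ p.edges := p.edges_dropUntil_subset hmem
  have hc : (q.concat hz).IsCycle := by
    rw [Walk.isCycle_def]
    refine ⟨?_, Walk.concat_ne_nil _ _, ?_⟩
    · rw [Walk.isTrail_def, Walk.edges_concat, List.concat_eq_append, List.nodup_append]
      refine ⟨hq.1.1, List.nodup_singleton _, fun e hmem2 e' hb hee => ?_⟩
      subst hee
      rw [List.mem_singleton] at hb
      subst hb
      exact he (hqe hmem2)
    · rw [Walk.concat_eq_append, Walk.tail_support_append]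
      simp only [Walk.support_cons, Walk.support_nil, List.tail_cons]
      have hnd := hq.support_nodup
      rw [q.support_eq_cons, List.nodup_cons] at hnd
      rw [List.nodup_append]
      refine ⟨hnd.2, List.nodup_singleton _, fun a ha a' hb haa => ?_⟩
      subst haa
      rw [List.mem_singleton] at hb
      subst hb
      exact hnd.1 ha
  have h1 := hcyc _ hc
  have h2 : (q.concat hz).length = q.length + 1 := Walk.length_concat _ _
  have h3 : q.length ≤ p.length := p.length_dropUntil_le hmem
  omega



lemma path_unique
    (hcyc : ∀ {z : V} (c : G.Walk z z), c.IsCycle → 2 * m ≤ c.length) :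
    ∀ (n : ℕ) {x y : V} (p q : G.Walk x y), p.IsPath → q.IsPath →
      p.length ≤ n → p.length + q.length < 2 * m → p = q := by
  intro n
  induction n with
  | zero =>
    intro x y p q hp hq hpn _
    cases p with
    | nil => exact (Walk.isPath_iff_eq_nil.mp hq).symm
    | cons h p' => simp [Walk.length_cons] at hpn
  | succ n ih =>
    intro x y p q hp hq hpn hsum
    classical
    cases p with
    | nil => exact (Walk.isPath_iff_eq_nil.mp hq).symm
    | @cons _ b _ hxb p' =>
      cases q with
      | nil =>
        exact absurd (Walk.isPath_iff_eq_nil.mp hp) (by simp)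
      | @cons _ c _ hxc q' =>
        by_cases hbc : b = c
        · subst hbc
          have hp' : p'.IsPath := hp.of_cons
          have hq' : q'.IsPath := hq.of_cons
          have : p' = q' := by
            apply ih p' q' hp' hq'
            · have := hpn; simp [Walk.length_cons] at this ⊢; omega
            · simp [Walk.length_cons] at hsum; omega
          rw [this]
        · exfalso
          set r := (p'.append (Walk.cons hxc q').reverse).bypass with hrdef
          have hr : r.IsPath := Walk.bypass_isPath _
          have hrlen : r.length ≤ p'.length + (q'.length + 1) := by
            calc r.length ≤ (p'.append (Walk.cons hxc q').reverse).length :=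
                  Walk.length_bypass_le _
            _ = p'.length + (q'.length + 1) := by
                  rw [Walk.length_append, Walk.length_reverse, Walk.length_cons]
          have hxnotp' : x ∉ p'.support := ((Walk.cons_isPath_iff _ _).mp hp).2
          have hxnotq' : x ∉ q'.support := ((Walk.cons_isPath_iff _ _).mp hq).2
          have hedge : s(x, b) ∉ r.edges := by
            intro hmem
            have hmem2 := Walk.edges_bypass_subset _ hmem
            rw [Walk.edges_append, List.mem_append, Walk.edges_reverse, List.mem_reverse] at hmem2
            rcases hmem2 with hmem2 | hmem2
            · exact hxnotp' (Walk.fst_mem_support_of_mem_edges _ hmem2)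
            · rw [Walk.edges_cons, List.mem_cons] at hmem2
              rcases hmem2 with heq | hmem2
              · rw [Sym2.eq_iff] at heq
                rcases heq with ⟨-, h1⟩ | ⟨h1, -⟩
                · exact hbc h1
                · exact G.ne_of_adj hxc h1
              · exact hxnotq' (Walk.fst_mem_support_of_mem_edges _ hmem2)
          have hc : (Walk.cons hxb r).IsCycle := by
            rw [Walk.isCycle_def]
            refine ⟨?_, by simp, ?_⟩
            · rw [Walk.isTrail_def, Walk.edges_cons, List.nodup_cons]
              exact ⟨hedge, hr.1.1⟩
            · simpa using hr.support_nodup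
          have := hcyc _ hc
          have : 2 * m ≤ r.length + 1 := by simpa [Walk.length_cons] using this
          simp [Walk.length_cons] at hsum
          omega



lemma short_path_dist (hconn : G.Connected)
    (hcyc : ∀ {z : V} (c : G.Walk z z), c.IsCycle → 2 * m ≤ c.length)
    {x y : V} (p : G.Walk x y) (hp : p.IsPath) (hlen : p.length ≤ m) :
    G.dist x y = p.length := by
  obtain ⟨g, hg, hglen⟩ := hconn.exists_path_of_dist x y
  have hle : G.dist x y ≤ p.length := SimpleGraph.dist_le p
  by_contra hne
  have hlt : G.dist x y < p.length := lt_of_le_of_ne hle hne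
  have : p = g := by
    apply path_unique hcyc p.length p g hp hg le_rfl
    omega
  have hl2 : p.length = G.dist x y := by rw [this, hglen]
  omega

lemma pick_neighbor (hthick : ∀ v : V, ∃ a b c : V,
      G.Adj v a ∧ G.Adj v b ∧ G.Adj v c ∧ a ≠ b ∧ a ≠ c ∧ b ≠ c)
    {x y : V} (p : G.Walk x y) (hp : p.IsPath) :
    ∃ z : V, G.Adj y z ∧ s(y, z) ∉ p.edges := by
  obtain ⟨a, b, c, ha, hb, hc, hab, -, -⟩ := hthick y
  by_cases h1 : s(y, a) ∈ p.edges
  · by_cases h2 : s(y, b) ∈ p.edges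
    · exfalso
      apply hab
      apply end_edge_eq p hp a b
      · rwa [Sym2.eq_swap] at h1
      · rwa [Sym2.eq_swap] at h2
    · exact ⟨b, hb, h2⟩
  · exact ⟨a, ha, h1⟩

lemma two_paths_cycle
    (hcyc : ∀ {z : V} (c : G.Walk z z), c.IsCycle → 2 * m ≤ c.length)
    (hm : 2 ≤ m) {x y : V} (p q : G.Walk x y) (hp : p.IsPath) (hq : q.IsPath)
    (hlp : p.length = m) (hlq : q.length = m) (hne : p ≠ q) :
    (p.append q.reverse).IsCycle ∧ (p.append q.reverse).length = 2 * m := by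
  classical
  have hxy : x ≠ y := by
    rintro rfl
    have := Walk.isPath_iff_eq_nil.mp hp
    rw [this] at hlp
    simp at hlp
    omega
  -- internal disjointness
  have hint : ∀ a : V, a ∈ p.support → a ∈ q.support → a = x ∨ a = y := by
    intro a hap haq
    by_contra hcon
    push_neg at hcon
    obtain ⟨hax, hay⟩ := hcon
    have htp : (p.takeUntil a hap).IsPath := hp.takeUntil hap
    have hdp : (p.dropUntil a hap).IsPath := hp.dropUntil hap
    have htq : (q.takeUntil a haq).IsPath := hq.takeUntil haq
    have hdq : (q.dropUntil a haq).IsPath := hq.dropUntil haq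
    have hsp : (p.takeUntil a hap).length + (p.dropUntil a hap).length = m := by
      rw [← Walk.length_append, p.take_spec hap, hlp]
    have hsq : (q.takeUntil a haq).length + (q.dropUntil a haq).length = m := by
      rw [← Walk.length_append, q.take_spec haq, hlq]
    have hlen1 : ∀ {c d : V} (w : G.Walk c d), c ≠ d → 1 ≤ w.length := by
      intro c d w hcd
      rcases Nat.eq_zero_or_pos w.length with h0 | h0
      · exact absurd (Walk.eq_of_length_eq_zero h0) hcd
      · exact h0
    have htp1 : 1 ≤ (p.takeUntil a hap).length := hlen1 _ (Ne.symm hax)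
    have htq1 : 1 ≤ (q.takeUntil a haq).length := hlen1 _ (Ne.symm hax)
    have hdp1 : 1 ≤ (p.dropUntil a hap).length := hlen1 _ hay
    have hdq1 : 1 ≤ (q.dropUntil a haq).length := hlen1 _ hay
    have hteq : p.takeUntil a hap = q.takeUntil a haq := by
      apply path_unique hcyc (p.takeUntil a hap).length _ _ htp htq le_rfl
      omega
    have hdeq : p.dropUntil a hap = q.dropUntil a haq := by
      apply path_unique hcyc (p.dropUntil a hap).length _ _ hdp hdq le_rfl
      omega
    apply hne
    rw [← p.take_spec hap, ← q.take_spec haq, hteq, hdeq]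
  -- the cycle
  constructor
  · rw [Walk.isCycle_def]
    refine ⟨?_, ?_, ?_⟩
    · -- trail
      rw [Walk.isTrail_def, Walk.edges_append, List.nodup_append]
      refine ⟨hp.1.1, hq.reverse.1.1, fun e hep e' heq' hee => ?_⟩
      subst hee
      rw [Walk.edges_reverse, List.mem_reverse] at heq'
      induction e using Sym2.ind with
      | _ a b =>
        have hadj : G.Adj a b := p.adj_of_mem_edges hep
        have hap : a ∈ p.support := Walk.fst_mem_support_of_mem_edges _ hep
        have hbp : b ∈ p.support := Walk.snd_mem_support_of_mem_edges _ hep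
        have haq : a ∈ q.support := Walk.fst_mem_support_of_mem_edges _ heq'
        have hbq : b ∈ q.support := Walk.snd_mem_support_of_mem_edges _ heq'
        have ha := hint a hap haq
        have hb := hint b hbp hbq
        have hexy : s(a, b) = s(x, y) := by
          rcases ha with rfl | rfl
          · rcases hb with rfl | rfl
            · exact absurd rfl hadj.ne
            · rfl
          · rcases hb with rfl | rfl
            · rw [Sym2.eq_swap]
            · exact absurd rfl hadj.ne
        rw [hexy] at hep
        exact no_end_edge p hp (by omega) hep
    · intro hnil
      have : (p.append q.reverse).length = 0 := by rw [hnil]; rfl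
      rw [Walk.length_append, Walk.length_reverse, hlp, hlq] at this
      omega
    · rw [Walk.tail_support_append]
      rw [List.nodup_append]
      have hpn := hp.support_nodup
      have hqrn := hq.reverse.support_nodup
      rw [p.support_eq_cons, List.nodup_cons] at hpn
      rw [q.reverse.support_eq_cons, List.nodup_cons] at hqrn
      refine ⟨hpn.2, hqrn.2, fun a hap' a' haq' haa => ?_⟩
      subst haa
      have hap : a ∈ p.support := List.mem_of_mem_tail hap'
      have haq : a ∈ q.support := by
        have : a ∈ q.reverse.support := List.mem_of_mem_tail haq'
        rwa [Walk.support_reverse, List.mem_reverse] at this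
      have hax : a ≠ x := fun h => hpn.1 (h ▸ hap')
      have hay : a ≠ y := fun h => hqrn.1 (h ▸ haq')
      rcases hint a hap haq with h | h
      · exact hax h
      · exact hay h
  · rw [Walk.length_append, Walk.length_reverse, hlp, hlq]
    omega



lemma isPath_concat {x y z : V} (p : G.Walk x y) (h : G.Adj y z) (hp : p.IsPath)
    (hz : z ∉ p.support) : (p.concat h).IsPath := by
  rw [Walk.isPath_def, Walk.concat_eq_append, Walk.support_append]
  simp only [Walk.support_cons, Walk.support_nil, List.tail_cons]
  rw [List.nodup_append]
  refine ⟨hp.support_nodup, List.nodup_singleton _, fun a ha a' hb haa => ?_⟩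
  subst haa
  rw [List.mem_singleton] at hb
  subst hb
  exact hz ha

lemma apartment_of_path (hm : 2 ≤ m) (hconn : G.Connected)
    {col : V → Bool} (hcol : ∀ ⦃v w : V⦄, G.Adj v w → col v ≠ col w)
    (hdiam : ∀ u v : V, G.dist u v ≤ m)
    (hcyc : ∀ {z : V} (c : G.Walk z z), c.IsCycle → 2 * m ≤ c.length)
    (hthick : ∀ v : V, ∃ a b c : V,
      G.Adj v a ∧ G.Adj v b ∧ G.Adj v c ∧ a ≠ b ∧ a ≠ c ∧ b ≠ c)
    {x y : V} (q : G.Walk x y) (hq : q.IsPath) (hql : q.length = m) :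
    ∃ A : G.Subgraph,
      (∃ (v0 : V) (w : G.Walk v0 v0), w.IsCycle ∧ w.length = 2 * m ∧ w.toSubgraph = A) ∧
      ∀ a b : V, s(a, b) ∈ q.edges → A.Adj a b := by
  classical
  have hdxy : G.dist x y = m := by
    rw [short_path_dist hconn hcyc q hq (le_of_eq hql), hql]
  obtain ⟨z, hz, hze⟩ := pick_neighbor hthick q hq
  have hznot : z ∉ q.support := not_mem_support_of_end hcyc q hq (by omega) hz hze
  have hdxz : G.dist x z = m - 1 := by
    rcases adj_dist hconn hcol (x := x) hz with h1 | h2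
    · exfalso
      have := hdiam x z
      omega
    · omega
  obtain ⟨g, hg, hgl⟩ := hconn.exists_path_of_dist x z
  rw [hdxz] at hgl
  have hynotg : y ∉ g.support := by
    intro hmem
    have h1 := SimpleGraph.dist_le (g.takeUntil y hmem)
    have h2 := Walk.length_takeUntil_le g hmem
    omega
  have hw2path : (g.concat hz.symm).IsPath := isPath_concat g hz.symm hg hynotg
  have hw2len : (g.concat hz.symm).length = m := by
    rw [Walk.length_concat]
    omega
  have hw2ne : q ≠ g.concat hz.symm := by
    intro hEq
    apply hznot
    rw [hEq, Walk.concat_eq_append, Walk.mem_support_append_iff]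
    left
    exact g.end_mem_support
  obtain ⟨hcyc2, hlen2⟩ := two_paths_cycle hcyc hm q (g.concat hz.symm) hq hw2path hql
    hw2len hw2ne
  refine ⟨(q.append (g.concat hz.symm).reverse).toSubgraph, ⟨x, _, hcyc2, hlen2, rfl⟩, ?_⟩
  intro a b hab
  rw [← Subgraph.mem_edgeSet, Walk.mem_edges_toSubgraph, Walk.edges_append, List.mem_append]
  left
  exact hab

lemma extend_path
    (hcyc : ∀ {z : V} (c : G.Walk z z), c.IsCycle → 2 * m ≤ c.length)
    (hthick : ∀ v : V, ∃ a b c : V,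
      G.Adj v a ∧ G.Adj v b ∧ G.Adj v c ∧ a ≠ b ∧ a ≠ c ∧ b ≠ c)
    (hm : 2 ≤ m) :
    ∀ (k : ℕ) {x y : V} (p : G.Walk x y), p.IsPath → p.length + k = m →
    ∃ (x' y' : V) (q : G.Walk x' y'), q.IsPath ∧ q.length = m ∧
      ∀ e, e ∈ p.edges → e ∈ q.edges := by
  intro k
  induction k with
  | zero =>
    intro x y p hp hl
    exact ⟨x, y, p, hp, by omega, fun e he => he⟩
  | succ k ih =>
    intro x y p hp hl
    obtain ⟨z, hz, hze⟩ := pick_neighbor hthick p hp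
    have hznot : z ∉ p.support := not_mem_support_of_end hcyc p hp (by omega) hz hze
    have hp' : (p.concat hz).IsPath := isPath_concat p hz hp hznot
    obtain ⟨x', y', q, h1, h2, h3⟩ := ih (p.concat hz) hp' (by rw [Walk.length_concat]; omega)
    refine ⟨x', y', q, h1, h2, fun e he => h3 e ?_⟩
    rw [Walk.edges_concat, List.concat_eq_append, List.mem_append]
    left
    exact he

lemma apartment_of_short_path (hm : 2 ≤ m) (hconn : G.Connected)
    {col : V → Bool} (hcol : ∀ ⦃v w : V⦄, G.Adj v w → col v ≠ col w)
    (hdiam : ∀ u v : V, G.dist u v ≤ m)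
    (hcyc : ∀ {z : V} (c : G.Walk z z), c.IsCycle → 2 * m ≤ c.length)
    (hthick : ∀ v : V, ∃ a b c : V,
      G.Adj v a ∧ G.Adj v b ∧ G.Adj v c ∧ a ≠ b ∧ a ≠ c ∧ b ≠ c)
    {x y : V} (p : G.Walk x y) (hp : p.IsPath) (hl : p.length ≤ m) :
    ∃ A : G.Subgraph,
      (∃ (v0 : V) (w : G.Walk v0 v0), w.IsCycle ∧ w.length = 2 * m ∧ w.toSubgraph = A) ∧
      ∀ a b : V, s(a, b) ∈ p.edges → A.Adj a b := by
  obtain ⟨x', y', q, hq, hql, hsub⟩ := extend_path hcyc hthick hm (m - p.length) p hp (by omega)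
  obtain ⟨A, hA, hadj⟩ := apartment_of_path hm hconn hcol hdiam hcyc hthick q hq hql
  exact ⟨A, hA, fun a b hab => hadj a b (hsub _ hab)⟩


lemma main_aux (hm : 2 ≤ m) (hconn : G.Connected)
    {col : V → Bool} (hcol : ∀ ⦃v w : V⦄, G.Adj v w → col v ≠ col w)
    (hdiam : ∀ u v : V, G.dist u v ≤ m)
    (hcyc : ∀ {z : V} (c : G.Walk z z), c.IsCycle → 2 * m ≤ c.length)
    (hthick : ∀ v : V, ∃ a b c : V,
      G.Adj v a ∧ G.Adj v b ∧ G.Adj v c ∧ a ≠ b ∧ a ≠ c ∧ b ≠ c)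
    {u v u' v' : V} (h : G.Adj u v) (h' : G.Adj u' v')
    (huv' : u ≠ v')
    (hmin1 : G.dist v u' ≤ G.dist u u') (hmin2 : G.dist v u' ≤ G.dist v v')
    (_hmin3 : G.dist v u' ≤ G.dist u v') :
    ∃ A : G.Subgraph,
      (∃ (v0 : V) (w : G.Walk v0 v0), w.IsCycle ∧ w.length = 2 * m ∧ w.toSubgraph = A) ∧
      A.Adj u v ∧ A.Adj u' v' := by
  classical
  set k := G.dist v u' with hk
  have hcm1 : G.dist u' v = G.dist v u' := SimpleGraph.dist_comm ..
  have hcm2 : G.dist u' u = G.dist u u' := SimpleGraph.dist_comm ..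
  have hduu' : G.dist u u' = k + 1 := by
    rcases adj_dist hconn hcol (x := u') h with h1 | h1 <;> omega
  have hdvv' : G.dist v v' = k + 1 := by
    rcases adj_dist hconn hcol (x := v) h' with h1 | h1 <;> omega
  have hdvu : G.dist v u = 1 := by
    rw [SimpleGraph.dist_eq_one_iff_adj]
    exact h.symm
  have hkm : k + 1 ≤ m := hdvv' ▸ hdiam v v'
  obtain ⟨g, hg, hgl⟩ := hconn.exists_path_of_dist v u'
  by_cases hcase : k + 2 ≤ m
  · -- build a path u - v - ... - u' - v' of length k + 2 ≤ m
    have hv'notg : v' ∉ g.support := by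
      intro hmem
      have h1 := SimpleGraph.dist_le (g.takeUntil v' hmem)
      have h2 := Walk.length_takeUntil_le g hmem
      omega
    have hinner : (g.concat h').IsPath := isPath_concat g h' hg hv'notg
    have hunot : u ∉ (g.concat h').support := by
      rw [Walk.concat_eq_append, Walk.mem_support_append_iff]
      rintro (hmem | hmem)
      · have := (geo_mem_dist hconn g (hgl.trans hk.symm ▸ hgl) hmem).1
        rw [← hgl] at this
        have h2 := (geo_mem_dist hconn g hgl hmem).1
        omega
      · simp only [Walk.support_cons, Walk.support_nil, List.mem_cons,
          List.not_mem_nil, or_false] at hmem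
        rcases hmem with rfl | rfl
        · rw [SimpleGraph.dist_self] at hduu'
          omega
        · exact huv' rfl
    have hP : (Walk.cons h (g.concat h')).IsPath :=
      (Walk.cons_isPath_iff _ _).mpr ⟨hinner, hunot⟩
    have hPlen : (Walk.cons h (g.concat h')).length ≤ m := by
      rw [Walk.length_cons, Walk.length_concat]
      omega
    obtain ⟨A, hA, hadj⟩ :=
      apartment_of_short_path hm hconn hcol hdiam hcyc hthick _ hP hPlen
    refine ⟨A, hA, hadj u v ?_, hadj u' v' ?_⟩
    · rw [Walk.edges_cons]
      exact List.mem_cons_self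
    · rw [Walk.edges_cons, Walk.edges_concat, List.concat_eq_append]
      simp
  · -- k = m - 1; two opposite paths from u to u'
    have hkm1 : k + 1 = m := by omega
    have hduu'm : G.dist u u' = m := by omega
    have hcm3 : G.dist u v' = G.dist v' u := SimpleGraph.dist_comm ..
    have hduv' : G.dist u v' = m - 1 := by
      have hd := hdiam u v'
      rcases adj_dist hconn hcol (x := u) h' with h1 | h1 <;> omega
    have hunotg : u ∉ g.support := by
      intro hmem
      have h1 := (geo_mem_dist hconn g hgl hmem).1
      omega
    have hW1 : (Walk.cons h g).IsPath := (Walk.cons_isPath_iff _ _).mpr ⟨hg, hunotg⟩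
    have hW1len : (Walk.cons h g).length = m := by
      rw [Walk.length_cons]
      omega
    obtain ⟨g2, hg2, hg2l⟩ := hconn.exists_path_of_dist u v'
    have hu'notg2 : u' ∉ g2.support := by
      intro hmem
      have h1 := SimpleGraph.dist_le (g2.takeUntil u' hmem)
      have h2 := Walk.length_takeUntil_le g2 hmem
      omega
    have hW2 : (g2.concat h'.symm).IsPath := isPath_concat g2 h'.symm hg2 hu'notg2
    have hW2len : (g2.concat h'.symm).length = m := by
      rw [Walk.length_concat]
      omega
    have he1 : s(u, v) ∈ (Walk.cons h g).edges := by
      rw [Walk.edges_cons]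
      exact List.mem_cons_self
    have he2 : s(v', u') ∈ (g2.concat h'.symm).edges := by
      rw [Walk.edges_concat, List.concat_eq_append]
      simp
    by_cases hW : Walk.cons h g = g2.concat h'.symm
    · obtain ⟨A, hA, hadj⟩ :=
        apartment_of_short_path hm hconn hcol hdiam hcyc hthick _ hW1 (le_of_eq hW1len)
      refine ⟨A, hA, hadj u v he1, hadj u' v' ?_⟩
      rw [hW]
      rwa [Sym2.eq_swap]
    · obtain ⟨hcc, hcl⟩ := two_paths_cycle hcyc hm _ _ hW1 hW2 hW1len hW2len hW
      refine ⟨((Walk.cons h g).append (g2.concat h'.symm).reverse).toSubgraph,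
        ⟨u, _, hcc, hcl, rfl⟩, ?_, ?_⟩
      · rw [← Subgraph.mem_edgeSet, Walk.mem_edges_toSubgraph, Walk.edges_append,
          List.mem_append]
        left
        exact he1
      · have : ((Walk.cons h g).append (g2.concat h'.symm).reverse).toSubgraph.Adj v' u' := by
          rw [← Subgraph.mem_edgeSet, Walk.mem_edges_toSubgraph, Walk.edges_append,
            List.mem_append]
          right
          rw [Walk.edges_reverse, List.mem_reverse]
          exact he2
        exact this.symm

lemma share_vertex (hm : 2 ≤ m) (hconn : G.Connected)
    {col : V → Bool} (hcol : ∀ ⦃v w : V⦄, G.Adj v w → col v ≠ col w)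
    (hdiam : ∀ u v : V, G.dist u v ≤ m)
    (hcyc : ∀ {z : V} (c : G.Walk z z), c.IsCycle → 2 * m ≤ c.length)
    (hthick : ∀ v : V, ∃ a b c : V,
      G.Adj v a ∧ G.Adj v b ∧ G.Adj v c ∧ a ≠ b ∧ a ≠ c ∧ b ≠ c)
    {a b c : V} (hab : G.Adj a b) (hbc : G.Adj b c) (hac : a ≠ c) :
    ∃ A : G.Subgraph,
      (∃ (v0 : V) (w : G.Walk v0 v0), w.IsCycle ∧ w.length = 2 * m ∧ w.toSubgraph = A) ∧
      A.Adj a b ∧ A.Adj b c := by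
  have hP : (Walk.cons hab (Walk.cons hbc Walk.nil)).IsPath := by
    rw [Walk.isPath_def]
    simp [hab.ne, hbc.ne, hac]
  have hPlen : (Walk.cons hab (Walk.cons hbc Walk.nil)).length ≤ m := by
    simp only [Walk.length_cons, Walk.length_nil]
    omega
  obtain ⟨A, hA, hadj⟩ :=
    apartment_of_short_path hm hconn hcol hdiam hcyc hthick _ hP hPlen
  refine ⟨A, hA, hadj a b ?_, hadj b c ?_⟩ <;> simp [Walk.edges_cons]

lemma single_edge (hm : 2 ≤ m) (hconn : G.Connected)
    {col : V → Bool} (hcol : ∀ ⦃v w : V⦄, G.Adj v w → col v ≠ col w)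
    (hdiam : ∀ u v : V, G.dist u v ≤ m)
    (hcyc : ∀ {z : V} (c : G.Walk z z), c.IsCycle → 2 * m ≤ c.length)
    (hthick : ∀ v : V, ∃ a b c : V,
      G.Adj v a ∧ G.Adj v b ∧ G.Adj v c ∧ a ≠ b ∧ a ≠ c ∧ b ≠ c)
    {a b : V} (hab : G.Adj a b) :
    ∃ A : G.Subgraph,
      (∃ (v0 : V) (w : G.Walk v0 v0), w.IsCycle ∧ w.length = 2 * m ∧ w.toSubgraph = A) ∧
      A.Adj a b := by
  have hP : (Walk.cons hab Walk.nil).IsPath := by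
    rw [Walk.isPath_def]
    simp [hab.ne]
  have hPlen : (Walk.cons hab Walk.nil).length ≤ m := by
    simp only [Walk.length_cons, Walk.length_nil]
    omega
  obtain ⟨A, hA, hadj⟩ :=
    apartment_of_short_path hm hconn hcol hdiam hcyc hthick _ hP hPlen
  exact ⟨A, hA, hadj a b (by simp)⟩

end GenPolygonAux

/-- In a thick generalized `m`-gon, any two edges are contained in a common
apartment, i.e. a cycle of length `2 * m`. -/
theorem edges_in_common_apartment
    (G : SimpleGraph V) (m : ℕ) (hm : 2 ≤ m)
    (hG : IsGenPolygon G m) (hthick : Thick G)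
    (u v u' v' : V) (h : G.Adj u v) (h' : G.Adj u' v') :
    ∃ A : G.Subgraph, IsApartment G m A ∧ A.Adj u v ∧ A.Adj u' v' := by
  obtain ⟨hconn, ⟨col, hcol⟩, hdiam, -, hgirth⟩ := hG
  have hcyc : ∀ {z : V} (c : G.Walk z z), c.IsCycle → 2 * m ≤ c.length :=
    fun c hc => GenPolygonAux.cycle_ge hgirth c hc
  by_cases h1 : u = u'
  · subst h1
    by_cases h2 : v = v'
    · subst h2
      obtain ⟨A, hA, hadj⟩ :=
        GenPolygonAux.single_edge hm hconn hcol hdiam hcyc hthick h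
      exact ⟨A, hA, hadj, hadj⟩
    · obtain ⟨A, hA, hA1, hA2⟩ :=
        GenPolygonAux.share_vertex hm hconn hcol hdiam hcyc hthick h.symm h' h2
      exact ⟨A, hA, hA1.symm, hA2⟩
  · by_cases h2 : u = v'
    · subst h2
      by_cases h3 : v = u'
      · subst h3
        obtain ⟨A, hA, hadj⟩ :=
          GenPolygonAux.single_edge hm hconn hcol hdiam hcyc hthick h
        exact ⟨A, hA, hadj, hadj.symm⟩
      · obtain ⟨A, hA, hA1, hA2⟩ :=
          GenPolygonAux.share_vertex hm hconn hcol hdiam hcyc hthick h.symm h'.symm h3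
        exact ⟨A, hA, hA1.symm, hA2.symm⟩
    · by_cases h3 : v = u'
      · subst h3
        obtain ⟨A, hA, hA1, hA2⟩ :=
          GenPolygonAux.share_vertex hm hconn hcol hdiam hcyc hthick h h' h2
        exact ⟨A, hA, hA1, hA2⟩
      · by_cases h4 : v = v'
        · subst h4
          obtain ⟨A, hA, hA1, hA2⟩ :=
            GenPolygonAux.share_vertex hm hconn hcol hdiam hcyc hthick h h'.symm h1
          exact ⟨A, hA, hA1, hA2.symm⟩
        · -- all four endpoints distinct
          by_cases c1 : G.dist v u' ≤ G.dist u u' ∧ G.dist v u' ≤ G.dist v v' ∧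
              G.dist v u' ≤ G.dist u v'
          · exact GenPolygonAux.main_aux hm hconn hcol hdiam hcyc hthick h h' h2
              c1.1 c1.2.1 c1.2.2
          · by_cases c2 : G.dist u u' ≤ G.dist v u' ∧ G.dist u u' ≤ G.dist u v' ∧
                G.dist u u' ≤ G.dist v v'
            · obtain ⟨A, hA, hA1, hA2⟩ :=
                GenPolygonAux.main_aux hm hconn hcol hdiam hcyc hthick h.symm h' h4
                  c2.1 c2.2.1 c2.2.2
              exact ⟨A, hA, hA1.symm, hA2⟩
            · by_cases c3 : G.dist v v' ≤ G.dist u v' ∧ G.dist v v' ≤ G.dist v u' ∧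
                  G.dist v v' ≤ G.dist u u'
              · obtain ⟨A, hA, hA1, hA2⟩ :=
                  GenPolygonAux.main_aux hm hconn hcol hdiam hcyc hthick h h'.symm h1
                    c3.1 c3.2.1 c3.2.2
                exact ⟨A, hA, hA1, hA2.symm⟩
              · have c4 : G.dist u v' ≤ G.dist v v' ∧ G.dist u v' ≤ G.dist u u' ∧
                    G.dist u v' ≤ G.dist v u' := by omega
                obtain ⟨A, hA, hA1, hA2⟩ :=
                  GenPolygonAux.main_aux hm hconn hcol hdiam hcyc hthick h.symm h'.symm h3
                    c4.1 c4.2.1 c4.2.2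
                exact ⟨A, hA, hA1.symm, hA2.symm⟩
end

section
/- Let m ≥ 2 and let L be a finite thick generalized m-gon. Then there exist integers s, t ≥ 2 such that every vertex of L of the first type has degree s + 1 and every vertex of L of the second type has degree t + 1; in particular, any two vertices of L of the same type have the same degree. -/
open SimpleGraph

variable {V : Type*}

namespace GenPolyAux

variable {G : SimpleGraph V} {c : V → Bool} {m : ℕ}

lemma dcomm (G : SimpleGraph V) (u v : V) : G.dist u v = G.dist v u :=
  SimpleGraph.dist_comm

lemma walk_parity (hc : ∀ ⦃v w : V⦄, G.Adj v w → c v ≠ c w) :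
    ∀ {u v : V} (w : G.Walk u v), (c u = c v ↔ Even w.length) := by
  intro u v w
  induction w with
  | nil => simp
  | @cons u u' v h p ih =>
    have h1 := hc h
    simp only [Walk.length_cons, Nat.even_add_one, ← ih]
    cases hu : c u <;> cases hu' : c u' <;> cases hv : c v <;> simp_all

lemma dist_parity (hconn : G.Connected)
    (hc : ∀ ⦃v w : V⦄, G.Adj v w → c v ≠ c w) (u v : V) :
    c u = c v ↔ Even (G.dist u v) := by
  obtain ⟨w, hw⟩ := hconn.exists_walk_length_eq_dist u v
  rw [← hw]; exact walk_parity hc w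

lemma dist_step (hconn : G.Connected)
    (hc : ∀ ⦃v w : V⦄, G.Adj v w → c v ≠ c w) {x a : V} (y : V) (h : G.Adj x a) :
    G.dist a y = G.dist x y + 1 ∨ G.dist a y + 1 = G.dist x y := by
  have h1 : G.dist a y ≤ G.dist x y + 1 := by
    calc G.dist a y ≤ G.dist a x + G.dist x y := hconn.dist_triangle
    _ = G.dist x y + 1 := by rw [dist_eq_one_iff_adj.mpr h.symm]; omega
  have h2 : G.dist x y ≤ G.dist a y + 1 := by
    calc G.dist x y ≤ G.dist x a + G.dist a y := hconn.dist_triangle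
    _ = G.dist a y + 1 := by rw [dist_eq_one_iff_adj.mpr h]; omega
  have hne : G.dist a y ≠ G.dist x y := by
    intro he
    have p1 := (dist_parity hconn hc a y)
    have p2 := (dist_parity hconn hc x y)
    rw [he] at p1
    have hca := hc h
    cases hx : c x <;> cases ha : c a <;> cases hy : c y <;>
      simp_all [Nat.even_iff, Nat.odd_iff]
  omega

lemma exists_closer (hconn : G.Connected) {x y : V} {k : ℕ}
    (hd : G.dist x y = k + 1) : ∃ a, G.Adj x a ∧ G.dist a y = k := by
  obtain ⟨w, hw⟩ := hconn.exists_walk_length_eq_dist x y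
  rw [hd] at hw
  cases w with
  | nil => simp at hw
  | @cons _ u _ h p =>
    refine ⟨u, h, le_antisymm ?_ ?_⟩
    · have := dist_le p
      simp only [Walk.length_cons] at hw
      omega
    · have h3 : G.dist x y ≤ G.dist x u + G.dist u y := hconn.dist_triangle
      rw [dist_eq_one_iff_adj.mpr h] at h3
      omega

lemma unique_closer (hconn : G.Connected) (hg : G.egirth = (2 * m : ℕ∞))
    {x y a b : V} (hxa : G.Adj x a) (hxb : G.Adj x b)
    (hay : G.dist a y < G.dist x y) (hby : G.dist b y < G.dist x y)
    (hdm : G.dist x y + 1 ≤ m) : a = b := by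
  classical
  by_contra hab
  obtain ⟨w1, hw1⟩ := hconn.exists_walk_length_eq_dist a y
  obtain ⟨w2, hw2⟩ := hconn.exists_walk_length_eq_dist b y
  have hxw1 : x ∉ w1.support := by
    intro hx
    obtain ⟨q, r, hqr⟩ := Walk.mem_support_iff_exists_append.mp hx
    have h1 : G.dist x y ≤ r.length := dist_le r
    have h2 : q.length + r.length = w1.length := by rw [hqr, Walk.length_append]
    omega
  have hxw2 : x ∉ w2.support := by
    intro hx
    obtain ⟨q, r, hqr⟩ := Walk.mem_support_iff_exists_append.mp hx
    have h1 : G.dist x y ≤ r.length := dist_le r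
    have h2 : q.length + r.length = w2.length := by rw [hqr, Walk.length_append]
    omega
  set W := w1.append w2.reverse with hW
  have hxW : x ∉ W.support := by
    rw [hW, Walk.mem_support_append_iff]
    rintro (h | h)
    · exact hxw1 h
    · rw [Walk.support_reverse, List.mem_reverse] at h
      exact hxw2 h
  have hp : W.bypass.IsPath := W.bypass_isPath
  have hxp : x ∉ W.bypass.support := fun h => hxW (W.support_bypass_subset h)
  have hpl : W.bypass.length ≤ W.length := W.length_bypass_le
  have hWl : W.length = w1.length + w2.length := by
    rw [hW, Walk.length_append, Walk.length_reverse]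
  have hq : (W.bypass.concat hxb.symm).IsPath := by
    rw [Walk.isPath_def, Walk.support_concat]
    rw [Walk.isPath_def] at hp
    simp [List.concat_eq_append, List.nodup_append, hp, hxp]
    exact fun _ h1 h2 => hxp (h2 ▸ h1)
  have hxq : s(x, a) ∉ (W.bypass.concat hxb.symm).edges := by
    rw [Walk.edges_concat]
    simp only [List.concat_eq_append, List.mem_append, List.mem_singleton]
    rintro (h | h)
    · exact hxp (Walk.fst_mem_support_of_mem_edges _ h)
    · rw [Sym2.eq_iff] at h
      rcases h with ⟨h1, h2⟩ | ⟨h1, h2⟩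
      · exact hxa.ne h2.symm
      · exact hab h2
  have hcyc : (Walk.cons hxa (W.bypass.concat hxb.symm)).IsCycle :=
    (Walk.cons_isCycle_iff _ hxa).mpr ⟨hq, hxq⟩
  have h2m := le_egirth.mp (le_of_eq hg.symm) _ _ hcyc
  have h2m' : 2 * m ≤ (Walk.cons hxa (W.bypass.concat hxb.symm)).length := by
    rw [show ((2 * m : ℕ∞)) = ((2 * m : ℕ) : ℕ∞) by push_cast; ring] at h2m
    exact_mod_cast h2m
  have hlen : (Walk.cons hxa (W.bypass.concat hxb.symm)).length
      = W.bypass.length + 2 := by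
    rw [Walk.length_cons, Walk.length_concat]
  omega

lemma exists_third (hthick : Thick G) (v p q : V) :
    ∃ z, G.Adj v z ∧ z ≠ p ∧ z ≠ q := by
  obtain ⟨a, b, c', ha, hb, hc', hab, hac, hbc⟩ := hthick v
  by_cases h1 : a ≠ p ∧ a ≠ q
  · exact ⟨a, ha, h1.1, h1.2⟩
  by_cases h2 : b ≠ p ∧ b ≠ q
  · exact ⟨b, hb, h2.1, h2.2⟩
  rw [not_and_or, not_ne_iff, not_ne_iff] at h1 h2
  refine ⟨c', hc', fun hp => ?_, fun hq => ?_⟩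
  · rcases h1 with h | h <;> rcases h2 with h' | h'
    · exact hab (h.trans h'.symm)
    · exact hac (h.trans hp.symm)
    · exact hbc (h'.trans hp.symm)
    · exact hab (h.trans h'.symm)
  · rcases h1 with h | h <;> rcases h2 with h' | h'
    · exact hab (h.trans h'.symm)
    · exact hbc (h'.trans hq.symm)
    · exact hac (h.trans hq.symm)
    · exact hab (h.trans h'.symm)

lemma dist_farther (hconn : G.Connected)
    (hc : ∀ ⦃v w : V⦄, G.Adj v w → c v ≠ c w) (hg : G.egirth = (2 * m : ℕ∞))
    {x y z' n : V} (hz' : G.Adj x z') (hcz' : G.dist z' y < G.dist x y)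
    (hn : G.Adj x n) (hne : n ≠ z') (hdm : G.dist x y + 1 ≤ m) :
    G.dist n y = G.dist x y + 1 := by
  rcases dist_step hconn hc y hn with h | h
  · exact h
  · exact absurd (unique_closer hconn hg hn hz' (by omega) hcz' hdm) hne

lemma exists_common_far (hconn : G.Connected)
    (hc : ∀ ⦃v w : V⦄, G.Adj v w → c v ≠ c w) (hg : G.egirth = (2 * m : ℕ∞))
    (hthick : Thick G) {x y : V} (hxy : G.dist x y = 2) :
    ∀ j, 2 ≤ j → j ≤ m → ∃ z z' : V, G.Adj z z' ∧
      G.dist x z = j ∧ G.dist y z = j ∧ G.dist x z' + 1 = j ∧ G.dist y z' + 1 = j := by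
  intro j
  induction j with
  | zero => omega
  | succ j ih =>
    intro h2 hjm
    rcases eq_or_lt_of_le h2 with he | hlt
    · obtain ⟨w0, hw0x, hw0y⟩ := exists_closer (k := 1) hconn hxy
      have hxw0 : G.dist x w0 = 1 := dist_eq_one_iff_adj.mpr hw0x
      have hyw0 : G.dist y w0 = 1 := (dcomm G y w0).trans hw0y
      obtain ⟨u, huw0, hux, huy⟩ := exists_third hthick w0 x y
      have e1 := dcomm G w0 x
      have e2 := dcomm G w0 y
      have e3 := dcomm G u x
      have e4 := dcomm G u y
      have hux' : G.dist u x ≠ 0 := fun h0 => hux (hconn.dist_eq_zero_iff.mp h0)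
      have huy' : G.dist u y ≠ 0 := fun h0 => huy (hconn.dist_eq_zero_iff.mp h0)
      have s1 := dist_step hconn hc x huw0
      have s2 := dist_step hconn hc y huw0
      exact ⟨u, w0, huw0.symm, by omega, by omega, by omega, by omega⟩
    · obtain ⟨z, z', hadj, hxz, hyz, hxz', hyz'⟩ := ih (by omega) (by omega)
      obtain ⟨z'', hz'', hne, -⟩ := exists_third hthick z z' z'
      have e1 := dcomm G z x
      have e2 := dcomm G z y
      have e3 := dcomm G z' x
      have e4 := dcomm G z' y
      have e5 := dcomm G z'' x
      have e6 := dcomm G z'' y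
      have hx'' : G.dist z'' x = G.dist z x + 1 :=
        dist_farther hconn hc hg (y := x) hadj (by omega) hz'' hne (by omega)
      have hy'' : G.dist z'' y = G.dist z y + 1 :=
        dist_farther hconn hc hg (y := y) hadj (by omega) hz'' hne (by omega)
      exact ⟨z'', z, hz''.symm, by omega, by omega, by omega, by omega⟩

lemma degree_le_of_opp [Fintype V] [DecidableRel G.Adj] (hconn : G.Connected)
    (hc : ∀ ⦃v w : V⦄, G.Adj v w → c v ≠ c w) (hg : G.egirth = (2 * m : ℕ∞))
    (hdiam : ∀ u v : V, G.dist u v ≤ m) (hm : 2 ≤ m)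
    {u v : V} (huv : G.dist u v = m) : G.degree u ≤ G.degree v := by
  classical
  have hstep : ∀ a : V, G.Adj u a → G.dist a v + 1 = m := by
    intro a ha
    rcases dist_step hconn hc v ha with h | h
    · have := hdiam a v; omega
    · omega
  have key : ∀ a : V, G.Adj u a → ∃ b, G.Adj v b ∧ G.dist b a + 2 = m := by
    intro a ha
    have h1 : G.dist v a = (m - 2) + 1 := by
      have := hstep a ha
      rw [dcomm G v a]; omega
    obtain ⟨b, hb, hb2⟩ := exists_closer hconn h1
    exact ⟨b, hb, by omega⟩
  set f : V → V := fun a => if h : G.Adj u a then Classical.choose (key a h) else a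
    with hf
  have hmaps : ∀ a ∈ G.neighborFinset u, f a ∈ G.neighborFinset v := by
    intro a ha
    rw [mem_neighborFinset] at ha ⊢
    rw [hf]; simp only [ha, dif_pos]
    exact (Classical.choose_spec (key a ha)).1
  have hinj : Set.InjOn f (G.neighborFinset u) := by
    intro a ha a' ha' hfa
    rw [Finset.mem_coe] at ha ha'
    rw [mem_neighborFinset] at ha ha'
    have sa := Classical.choose_spec (key a ha)
    have sa' := Classical.choose_spec (key a' ha')
    rw [hf] at hfa
    simp only [ha, ha', dif_pos] at hfa
    set b := Classical.choose (key a ha) with hb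
    rw [← hfa] at sa'
    have hub : G.dist b u + 1 = m := by
      rcases dist_step hconn hc u sa.1 with h | h
      · rw [dcomm G u v] at huv; have := hdiam b u; omega
      · rw [dcomm G u v] at huv; omega
    have e1 := dcomm G b u
    have e2 := dcomm G b a
    have e3 := dcomm G b a'
    exact unique_closer hconn hg (y := b) ha ha' (by omega) (by omega) (by omega)
  calc G.degree u = (G.neighborFinset u).card := rfl
    _ ≤ (G.neighborFinset v).card := Finset.card_le_card_of_injOn f hmaps hinj
    _ = G.degree v := rfl

lemma degree_eq_of_opp [Fintype V] [DecidableRel G.Adj] (hconn : G.Connected)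
    (hc : ∀ ⦃v w : V⦄, G.Adj v w → c v ≠ c w) (hg : G.egirth = (2 * m : ℕ∞))
    (hdiam : ∀ u v : V, G.dist u v ≤ m) (hm : 2 ≤ m)
    {u v : V} (huv : G.dist u v = m) : G.degree u = G.degree v :=
  le_antisymm (degree_le_of_opp hconn hc hg hdiam hm huv)
    (degree_le_of_opp hconn hc hg hdiam hm (SimpleGraph.dist_comm.trans huv))

lemma degree_eq_of_dist2 [Fintype V] [DecidableRel G.Adj] (hconn : G.Connected)
    (hc : ∀ ⦃v w : V⦄, G.Adj v w → c v ≠ c w) (hg : G.egirth = (2 * m : ℕ∞))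
    (hdiam : ∀ u v : V, G.dist u v ≤ m) (hm : 2 ≤ m) (hthick : Thick G)
    {x y : V} (hxy : G.dist x y = 2) : G.degree x = G.degree y := by
  obtain ⟨z, -, -, hxz, hyz, -, -⟩ :=
    exists_common_far hconn hc hg hthick hxy m hm le_rfl
  rw [degree_eq_of_opp hconn hc hg hdiam hm hxz,
    degree_eq_of_opp hconn hc hg hdiam hm hyz]

lemma three_le_degree [Fintype V] [DecidableRel G.Adj] (hthick : Thick G)
    (v : V) : 3 ≤ G.degree v := by
  classical
  obtain ⟨a, b, c', ha, hb, hc', hab, hac, hbc⟩ := hthick v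
  have hsub : ({a, b, c'} : Finset V) ⊆ G.neighborFinset v := by
    intro z hz
    simp only [Finset.mem_insert, Finset.mem_singleton] at hz
    rw [mem_neighborFinset]
    rcases hz with rfl | rfl | rfl <;> assumption
  have hcard : ({a, b, c'} : Finset V).card = 3 := by
    rw [Finset.card_insert_of_notMem (by simp [hab, hac]),
      Finset.card_insert_of_notMem (by simp [hbc]), Finset.card_singleton]
  calc 3 = ({a, b, c'} : Finset V).card := hcard.symm
    _ ≤ (G.neighborFinset v).card := Finset.card_le_card hsub
    _ = G.degree v := rfl

lemma degree_eq_of_color [Fintype V] [DecidableRel G.Adj] (hconn : G.Connected)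
    (hc : ∀ ⦃v w : V⦄, G.Adj v w → c v ≠ c w) (hg : G.egirth = (2 * m : ℕ∞))
    (hdiam : ∀ u v : V, G.dist u v ≤ m) (hm : 2 ≤ m) (hthick : Thick G) :
    ∀ (n : ℕ) {x y : V} (w : G.Walk x y), w.length ≤ n → c x = c y →
      G.degree x = G.degree y := by
  intro n
  induction n with
  | zero =>
    intro x y w hw hcxy
    cases w with
    | nil => rfl
    | cons h p => simp [Walk.length_cons] at hw
  | succ n ih =>
    intro x y w hw hcxy
    cases w with
    | nil => rfl
    | @cons _ x1 _ h p =>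
      cases p with
      | nil => exact absurd hcxy (hc h)
      | @cons _ x2 _ h' p' =>
        have hbool : ∀ a b d : Bool, a ≠ b → d ≠ b → d = a := by decide
        have hcx2 : c x2 = c x := hbool _ _ _ (hc h) (fun he => hc h' he.symm)
        have hlen : p'.length ≤ n := by
          simp only [Walk.length_cons] at hw; omega
        have hrec : G.degree x2 = G.degree y := ih p' hlen (hcx2.trans hcxy)
        rcases eq_or_ne x x2 with rfl | hne
        · exact hrec
        · have hd2 : G.dist x x2 = 2 := by
            have hle : G.dist x x2 ≤ 2 := by
              have := dist_le (Walk.cons h (Walk.cons h' Walk.nil))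
              simpa using this
            have hne0 : G.dist x x2 ≠ 0 :=
              fun h0 => hne (hconn.dist_eq_zero_iff.mp h0)
            have hev : Even (G.dist x x2) :=
              (dist_parity hconn hc x x2).mp hcx2.symm
            rw [Nat.even_iff] at hev
            omega
          rw [degree_eq_of_dist2 hconn hc hg hdiam hm hthick hd2]
          exact hrec

end GenPolyAux

/-- A finite thick generalized `m`-gon has parameters `(s, t)` with `s, t ≥ 2`:
every vertex of the first type has degree `s + 1`, and every vertex of the second
type has degree `t + 1`. In particular vertices of the same type have the same
degree. -/
theorem exists_parameters
    (G : SimpleGraph V) [Fintype V] [DecidableRel G.Adj]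
    (m : ℕ) (hm : 2 ≤ m) (hG : IsGenPolygon G m) (hthick : Thick G)
    (c : V → Bool) (hc : ∀ ⦃v w : V⦄, G.Adj v w → c v ≠ c w) :
    ∃ s t : ℕ, 2 ≤ s ∧ 2 ≤ t ∧
      (∀ v : V, c v = false → G.degree v = s + 1) ∧
      (∀ v : V, c v = true → G.degree v = t + 1) := by
  classical
  obtain ⟨hconn, -, hdiam, -, hg⟩ := hG
  have hdeg : ∀ x y : V, c x = c y → G.degree x = G.degree y := by
    intro x y hxy
    obtain ⟨w⟩ := hconn.preconnected x y
    exact GenPolyAux.degree_eq_of_color hconn hc hg hdiam hm hthick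
      w.length w le_rfl hxy
  have key : ∀ b : Bool, ∃ d : ℕ, 2 ≤ d ∧ ∀ v : V, c v = b → G.degree v = d + 1 := by
    intro b
    by_cases hex : ∃ v : V, c v = b
    · obtain ⟨v0, hv0⟩ := hex
      refine ⟨G.degree v0 - 1, ?_, ?_⟩
      · have := GenPolyAux.three_le_degree hthick v0; omega
      · intro v hv
        have h1 := hdeg v v0 (hv.trans hv0.symm)
        have h3 := GenPolyAux.three_le_degree hthick v0
        omega
    · exact ⟨2, le_rfl, fun v hv => absurd ⟨v, hv⟩ hex⟩
  obtain ⟨s, hs, hsall⟩ := key false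
  obtain ⟨t, ht, htall⟩ := key true
  exact ⟨s, t, hs, ht, hsall, htall⟩
end
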